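/- arXiv:2404.07010 — 11 statements merged into one kernel-verified Lean document; each statement's English description precedes it below -/
import Mathlib

section
/- Let Q ⊂ ℝ^d be a polytope (the convex hull of a finite set) contained in the nonnegative orthant and not containing the origin, let f : ℝ^d → ℝ be continuous and convex on Q, and let μ : ℝ^d → ℝ be continuous, concave on Q, with μ(x) ≥ f(x) for all x ∈ Q. Then the (d+2)-dimensional Lebesgue measure of the set S := {(x,y,z) ∈ ℝ^d × ℝ × ℝ : 0 < z ≤ 1, x ∈ z•Q, z·f(x/z) ≤ y ≤ z·μ(x/z)} equals (1/(d+2))·∫_Q μ(x) dx − (1/(d+2))·∫_Q f(x) dx. -/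
open MeasureTheory Pointwise Set

lemma graph_null {α : Type*} [MeasurableSpace α] (ν : Measure α)
    {F : α → ℝ} (hF : Measurable F) {s : Set α} (hs : MeasurableSet s) :
    ν.prod volume {p : α × ℝ | p.1 ∈ s ∧ p.2 = F p.1} = 0 := by
  have hm : MeasurableSet {p : α × ℝ | p.1 ∈ s ∧ p.2 = F p.1} := by
    have := measurableSet_region_between_cc hF hF hs
    convert this using 1
    ext p
    simp [le_antisymm_iff, and_comm]
  rw [Measure.prod_apply hm]
  have h0 : ∀ x, (volume : Measure ℝ) (Prod.mk x ⁻¹' {p : α × ℝ | p.1 ∈ s ∧ p.2 = F p.1}) = 0 := by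
    intro x
    by_cases hx : x ∈ s
    · have : Prod.mk x ⁻¹' {p : α × ℝ | p.1 ∈ s ∧ p.2 = F p.1} = {F x} := by
        ext y; simp [hx]
      rw [this]; exact measure_singleton _
    · have : Prod.mk x ⁻¹' {p : α × ℝ | p.1 ∈ s ∧ p.2 = F p.1} = ∅ := by
        ext y; simp [hx]
      rw [this]; exact measure_empty
  simp only [h0]
  exact lintegral_zero

/-- Volume of the perspective relaxation of the disjunction between the origin
and a polytope `Q`, for a convex function `f` and a concave upper bound `μ`. -/
theorem stmt_0 (d : ℕ) (V : Finset (Fin d → ℝ)) (Q : Set (Fin d → ℝ))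
    (hQ : Q = convexHull ℝ (V : Set (Fin d → ℝ)))
    (hQnonneg : ∀ x ∈ Q, ∀ i, 0 ≤ x i)
    (hQ0 : (0 : Fin d → ℝ) ∉ Q)
    (f μ : (Fin d → ℝ) → ℝ)
    (hfc : ContinuousOn f Q) (hfv : ConvexOn ℝ Q f)
    (hμc : ContinuousOn μ Q) (hμv : ConcaveOn ℝ Q μ)
    (hμf : ∀ x ∈ Q, f x ≤ μ x) :
    (volume {p : (Fin d → ℝ) × ℝ × ℝ |
        0 < p.2.2 ∧ p.2.2 ≤ 1 ∧ p.1 ∈ p.2.2 • Q ∧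
        p.2.2 * f (p.2.2⁻¹ • p.1) ≤ p.2.1 ∧ p.2.1 ≤ p.2.2 * μ (p.2.2⁻¹ • p.1)}).toReal
      = (1 / ((d : ℝ) + 2)) * (∫ x in Q, μ x) - (1 / ((d : ℝ) + 2)) * (∫ x in Q, f x) := by
  classical
  have hQcpt : IsCompact Q := by rw [hQ]; exact V.finite_toSet.isCompact_convexHull (𝕜 := ℝ)
  have hQm : MeasurableSet Q := hQcpt.isClosed.measurableSet
  -- Tietze extensions of f and μ
  obtain ⟨f', hf'⟩ := ContinuousMap.exists_restrict_eq (Y := ℝ) hQcpt.isClosed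
    ⟨_, continuousOn_iff_continuous_restrict.mp hfc⟩
  obtain ⟨μ', hμ'⟩ := ContinuousMap.exists_restrict_eq (Y := ℝ) hQcpt.isClosed
    ⟨_, continuousOn_iff_continuous_restrict.mp hμc⟩
  have hf'eq : ∀ x ∈ Q, f' x = f x := fun x hx => ContinuousMap.congr_fun hf' ⟨x, hx⟩
  have hμ'eq : ∀ x ∈ Q, μ' x = μ x := fun x hx => ContinuousMap.congr_fun hμ' ⟨x, hx⟩
  have hμf' : ∀ x ∈ Q, f' x ≤ μ' x := fun x hx => by
    rw [hf'eq x hx, hμ'eq x hx]; exact hμf x hx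
  -- the base set s
  set s : Set ((Fin d → ℝ) × ℝ) := {p : (Fin d → ℝ) × ℝ | 0 < p.2 ∧ p.2 ≤ 1 ∧ p.1 ∈ p.2 • Q}
    with hs_def
  have hmemQ : ∀ p : (Fin d → ℝ) × ℝ, p ∈ s → p.2⁻¹ • p.1 ∈ Q := by
    intro p hp
    obtain ⟨hz0, hz1, q, hq, hxq⟩ := hp
    rw [← hxq, smul_smul, inv_mul_cancel₀ hz0.ne', one_smul]
    exact hq
  -- s is measurable with finite measure
  have hK : IsCompact ((fun q : (Fin d → ℝ) × ℝ => (q.2 • q.1, q.2)) '' (Q ×ˢ Icc (0:ℝ) 1)) :=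
    (hQcpt.prod isCompact_Icc).image (by fun_prop)
  have hsK : s = ((fun q : (Fin d → ℝ) × ℝ => (q.2 • q.1, q.2)) '' (Q ×ˢ Icc (0:ℝ) 1))
      ∩ {p | 0 < p.2} := by
    ext p
    constructor
    · rintro ⟨hz0, hz1, q, hq, hx⟩
      refine ⟨⟨(q, p.2), ⟨hq, hz0.le, hz1⟩, ?_⟩, hz0⟩
      show (p.2 • q, p.2) = p
      rw [show p.2 • q = p.1 from hx]
    · rintro ⟨⟨⟨q, t⟩, ⟨hq, ht0, ht1⟩, heq⟩, hz0⟩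
      obtain ⟨h1, h2⟩ := Prod.ext_iff.mp heq
      simp only at h1 h2
      refine ⟨hz0, h2 ▸ ht1, q, hq, ?_⟩
      rw [← h2]; exact h1
  have hsm : MeasurableSet s := by
    rw [hsK]
    exact hK.isClosed.measurableSet.inter
      ((isOpen_lt continuous_const continuous_snd).measurableSet)
  have hsfin : volume s ≠ ⊤ := by
    refine ne_top_of_le_ne_top hK.measure_lt_top.ne (measure_mono ?_)
    rw [hsK]; exact inter_subset_left
  -- the bounding functions
  set F : (Fin d → ℝ) × ℝ → ℝ := fun p => p.2 * f' (p.2⁻¹ • p.1) with hF_def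
  set G : (Fin d → ℝ) × ℝ → ℝ := fun p => p.2 * μ' (p.2⁻¹ • p.1) with hG_def
  have hFm : Measurable F :=
    measurable_snd.mul (f'.continuous.measurable.comp (measurable_snd.inv.smul measurable_fst))
  have hGm : Measurable G :=
    measurable_snd.mul (μ'.continuous.measurable.comp (measurable_snd.inv.smul measurable_fst))
  have hFG : ∀ p ∈ s, F p ≤ G p := by
    intro p hp
    exact mul_le_mul_of_nonneg_left (hμf' _ (hmemQ p hp)) hp.1.le
  -- integrability of F and G on s
  obtain ⟨Mf, hMf⟩ := hQcpt.exists_bound_of_continuousOn f'.continuous.continuousOn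
  obtain ⟨Mμ, hMμ⟩ := hQcpt.exists_bound_of_continuousOn μ'.continuous.continuousOn
  have hbound : ∀ (H : (Fin d → ℝ) × ℝ → ℝ) (h : (Fin d → ℝ) → ℝ) (M : ℝ),
      (∀ x ∈ Q, ‖h x‖ ≤ M) →
      (H = fun p => p.2 * h (p.2⁻¹ • p.1)) → ∀ᵐ p ∂(volume.restrict s), ‖H p‖ ≤ M := by
    intro H h M hM hH
    rw [ae_restrict_iff' hsm]
    refine Filter.Eventually.of_forall fun p hp => ?_
    rw [hH]
    have h1 : |p.2| ≤ 1 := by rw [abs_of_pos hp.1]; exact hp.2.1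
    calc ‖p.2 * h (p.2⁻¹ • p.1)‖ = |p.2| * ‖h (p.2⁻¹ • p.1)‖ := by
          rw [Real.norm_eq_abs, abs_mul]; rfl
      _ ≤ 1 * M := mul_le_mul h1 (hM _ (hmemQ p hp)) (norm_nonneg _) zero_le_one
      _ = M := one_mul M
  have hFint : IntegrableOn F s := Measure.integrableOn_of_bounded hsfin
    hFm.aestronglyMeasurable (hbound F f' Mf hMf rfl)
  have hGint : IntegrableOn G s := Measure.integrableOn_of_bounded hsfin
    hGm.aestronglyMeasurable (hbound G μ' Mμ hMμ rfl)
  -- the Icc-region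
  set Tcc : Set (((Fin d → ℝ) × ℝ) × ℝ) :=
    {p : ((Fin d → ℝ) × ℝ) × ℝ | p.1 ∈ s ∧ p.2 ∈ Icc (F p.1) (G p.1)} with hTcc_def
  have hTccm : MeasurableSet Tcc := measurableSet_region_between_cc hFm hGm hsm
  -- the target set S equals preimage of Tcc
  set S : Set ((Fin d → ℝ) × ℝ × ℝ) := {p : (Fin d → ℝ) × ℝ × ℝ |
      0 < p.2.2 ∧ p.2.2 ≤ 1 ∧ p.1 ∈ p.2.2 • Q ∧
      p.2.2 * f (p.2.2⁻¹ • p.1) ≤ p.2.1 ∧ p.2.1 ≤ p.2.2 * μ (p.2.2⁻¹ • p.1)} with hS_def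
  set ψ : (Fin d → ℝ) × ℝ × ℝ → ((Fin d → ℝ) × ℝ) × ℝ := fun p => ((p.1, p.2.2), p.2.1)
    with hψ_def
  have hSψ : S = ψ ⁻¹' Tcc := by
    ext p
    simp only [hS_def, hTcc_def, hψ_def, mem_setOf_eq, mem_preimage, mem_Icc, hs_def,
      hF_def, hG_def]
    constructor
    · rintro ⟨h1, h2, h3, h4, h5⟩
      have hq : p.2.2⁻¹ • p.1 ∈ Q := hmemQ (p.1, p.2.2) ⟨h1, h2, h3⟩
      exact ⟨⟨h1, h2, h3⟩, by simpa [hf'eq _ hq] using h4, by simpa [hμ'eq _ hq] using h5⟩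
    · rintro ⟨⟨h1, h2, h3⟩, h4, h5⟩
      have hq : p.2.2⁻¹ • p.1 ∈ Q := hmemQ (p.1, p.2.2) ⟨h1, h2, h3⟩
      refine ⟨h1, h2, h3, ?_, ?_⟩
      · rw [← hf'eq _ hq]; simpa using h4
      · rw [← hμ'eq _ hq]; simpa using h5
  have hψm : Measurable ψ := by fun_prop
  have hSm : MeasurableSet S := hSψ ▸ hψm hTccm
  -- measure preserving map φ
  set φ : ((Fin d → ℝ) × ℝ) × ℝ → (Fin d → ℝ) × ℝ × ℝ := fun p => (p.1.1, p.2, p.1.2) with hφ_def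
  have hφmp : MeasurePreserving φ (volume : Measure (((Fin d → ℝ) × ℝ) × ℝ))
      (volume : Measure ((Fin d → ℝ) × ℝ × ℝ)) := by
    have h1 : MeasurePreserving
        (MeasurableEquiv.prodAssoc : ((Fin d → ℝ) × ℝ) × ℝ ≃ᵐ (Fin d → ℝ) × ℝ × ℝ)
        volume volume := volume_preserving_prodAssoc
    have h2 : MeasurePreserving (Prod.map (id : (Fin d → ℝ) → (Fin d → ℝ))
        (Prod.swap : ℝ × ℝ → ℝ × ℝ))
        (volume : Measure ((Fin d → ℝ) × ℝ × ℝ)) (volume : Measure ((Fin d → ℝ) × ℝ × ℝ)) := by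
      rw [Measure.volume_eq_prod]
      exact (MeasurePreserving.id volume).prod
        (by rw [Measure.volume_eq_prod]; exact Measure.measurePreserving_swap)
    exact h2.comp h1
  have hφpre : φ ⁻¹' S = Tcc := by
    rw [hSψ]
    rfl
  have hvol : volume S = volume Tcc := by
    rw [← hφpre]
    exact (hφmp.measure_preimage hSm.nullMeasurableSet).symm
  -- Icc region has same volume as open region
  have hregion : (volume : Measure (((Fin d → ℝ) × ℝ) × ℝ)) Tcc =
      (volume : Measure ((Fin d → ℝ) × ℝ)).prod volume (regionBetween F G s) := by
    have hgF : (volume : Measure ((Fin d → ℝ) × ℝ)).prod volume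
        {p : ((Fin d → ℝ) × ℝ) × ℝ | p.1 ∈ s ∧ p.2 = F p.1} = 0 := graph_null _ hFm hsm
    have hgG : (volume : Measure ((Fin d → ℝ) × ℝ)).prod volume
        {p : ((Fin d → ℝ) × ℝ) × ℝ | p.1 ∈ s ∧ p.2 = G p.1} = 0 := graph_null _ hGm hsm
    rw [← Measure.volume_eq_prod] at hgF hgG ⊢
    have hsub : Tcc ⊆ regionBetween F G s ∪
        ({p : ((Fin d → ℝ) × ℝ) × ℝ | p.1 ∈ s ∧ p.2 = F p.1} ∪
          {p : ((Fin d → ℝ) × ℝ) × ℝ | p.1 ∈ s ∧ p.2 = G p.1}) := by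
      rintro p ⟨hp1, hpl, hpr⟩
      rcases eq_or_lt_of_le hpl with h | h
      · exact Or.inr (Or.inl ⟨hp1, h.symm⟩)
      rcases eq_or_lt_of_le hpr with h' | h'
      · exact Or.inr (Or.inr ⟨hp1, h'⟩)
      · exact Or.inl ⟨hp1, h, h'⟩
    refine le_antisymm ?_ (measure_mono fun p hp => ⟨hp.1, Ioo_subset_Icc_self hp.2⟩)
    calc volume Tcc ≤ volume (regionBetween F G s ∪
        ({p : ((Fin d → ℝ) × ℝ) × ℝ | p.1 ∈ s ∧ p.2 = F p.1} ∪
          {p : ((Fin d → ℝ) × ℝ) × ℝ | p.1 ∈ s ∧ p.2 = G p.1})) := measure_mono hsub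
      _ ≤ volume (regionBetween F G s) + volume
          ({p : ((Fin d → ℝ) × ℝ) × ℝ | p.1 ∈ s ∧ p.2 = F p.1} ∪
            {p : ((Fin d → ℝ) × ℝ) × ℝ | p.1 ∈ s ∧ p.2 = G p.1}) := measure_union_le _ _
      _ = volume (regionBetween F G s) := by
          rw [measure_union_null_iff.mpr ⟨hgF, hgG⟩, add_zero]
  -- compute the volume of the region between F and G
  have hIval : (volume : Measure ((Fin d → ℝ) × ℝ)).prod volume (regionBetween F G s) =
      ENNReal.ofReal (∫ p in s, (G - F) p) :=
    volume_regionBetween_eq_integral hFint hGint hsm hFG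
  -- evaluate the integral
  set c : ℝ := ∫ x in Q, (μ' x - f' x) with hc_def
  have hmain : (∫ p in s, (G - F) p) = (1 / ((d : ℝ) + 2)) * c := by
    have hGF_int : IntegrableOn (G - F) s := hGint.sub hFint
    have hind : Integrable (s.indicator (G - F)) (volume : Measure ((Fin d → ℝ) × ℝ)) :=
      (integrable_indicator_iff hsm).mpr hGF_int
    rw [← integral_indicator hsm]
    rw [Measure.volume_eq_prod] at hind ⊢
    rw [integral_prod_symm _ hind]
    have hzQm : ∀ z : ℝ, 0 < z → MeasurableSet (z • Q) := by
      intro z hz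
      have : z • Q = (fun x : Fin d → ℝ => z⁻¹ • x) ⁻¹' Q := by
        ext x
        rw [mem_smul_set_iff_inv_smul_mem₀ hz.ne']
        rfl
      rw [this]
      exact (measurable_const_smul z⁻¹) hQm
    have hinner : ∀ z : ℝ, (∫ x, s.indicator (G - F) (x, z)) =
        (Ioc (0:ℝ) 1).indicator (fun z => z ^ (d+1) * c) z := by
      intro z
      by_cases hz : z ∈ Ioc (0:ℝ) 1
      · obtain ⟨hz0, hz1⟩ := hz
        have hzeq : (fun x => s.indicator (G - F) (x, z)) =
            (z • Q).indicator (fun x => z * (μ' (z⁻¹ • x) - f' (z⁻¹ • x))) := by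
          funext x
          by_cases hx : x ∈ z • Q
          · rw [indicator_of_mem (show (x, z) ∈ s from ⟨hz0, hz1, hx⟩), indicator_of_mem hx]
            show G (x, z) - F (x, z) = _
            simp only [hF_def, hG_def]
            ring
          · rw [indicator_of_notMem (fun h => hx h.2.2), indicator_of_notMem hx]
        rw [hzeq, integral_indicator (hzQm z hz0)]
        have hzd : z ^ d ≠ 0 := pow_ne_zero _ hz0.ne'
        have key : (∫ x in z • Q, (μ' (z⁻¹ • x) - f' (z⁻¹ • x))) = z ^ d * c := by
          have h1 := Measure.setIntegral_comp_smul_of_pos (volume : Measure (Fin d → ℝ))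
            (fun y : Fin d → ℝ => μ' (z⁻¹ • y) - f' (z⁻¹ • y)) Q hz0
          simp only [smul_smul, inv_mul_cancel₀ hz0.ne', one_smul, smul_eq_mul,
            Module.finrank_fin_fun] at h1
          rw [← hc_def] at h1
          rw [h1, ← mul_assoc, mul_inv_cancel₀ hzd, one_mul]
        rw [integral_const_mul, key, indicator_of_mem (show z ∈ Ioc (0:ℝ) 1 from ⟨hz0, hz1⟩)]
        ring
      · rw [indicator_of_notMem hz]
        have : (fun x => s.indicator (G - F) (x, z)) = fun _ => (0:ℝ) := by
          funext x
          exact indicator_of_notMem (fun h => hz ⟨h.1, h.2.1⟩) _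
        rw [this, integral_zero]
    calc (∫ z : ℝ, ∫ x, s.indicator (G - F) (x, z))
        = ∫ z : ℝ, (Ioc (0:ℝ) 1).indicator (fun z => z ^ (d+1) * c) z :=
          integral_congr_ae (Filter.Eventually.of_forall hinner)
      _ = ∫ z in Ioc (0:ℝ) 1, z ^ (d+1) * c := integral_indicator measurableSet_Ioc
      _ = (∫ z in Ioc (0:ℝ) 1, z ^ (d+1)) * c := by rw [integral_mul_const]
      _ = (1 / ((d : ℝ) + 2)) * c := by
          rw [← intervalIntegral.integral_of_le zero_le_one, integral_pow, one_pow,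
            zero_pow (show d + 1 + 1 ≠ 0 by omega)]
          push_cast
          ring
  have hInonneg : 0 ≤ ∫ p in s, (G - F) p :=
    setIntegral_nonneg hsm fun p hp => sub_nonneg.2 (hFG p hp)
  -- integrability on Q and final arithmetic
  have hfint : IntegrableOn f' Q := f'.continuous.continuousOn.integrableOn_compact hQcpt
  have hμint : IntegrableOn μ' Q := μ'.continuous.continuousOn.integrableOn_compact hQcpt
  have hcsplit : c = (∫ x in Q, μ' x) - ∫ x in Q, f' x := integral_sub hμint hfint
  have hμQ : (∫ x in Q, μ x) = ∫ x in Q, μ' x :=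
    setIntegral_congr_fun hQm fun x hx => (hμ'eq x hx).symm
  have hfQ : (∫ x in Q, f x) = ∫ x in Q, f' x :=
    setIntegral_congr_fun hQm fun x hx => (hf'eq x hx).symm
  rw [hvol, hregion, hIval, ENNReal.toReal_ofReal hInonneg, hmain, hμQ, hfQ, hcsplit]
  ring
end

section
/- Let Q ⊂ ℝ^d be a polytope (the convex hull of a finite set) contained in the nonnegative orthant and not containing the origin, let f : ℝ^d → ℝ satisfy f(0) = 0 and be continuous and convex on conv(Q ∪ {0}), and let μ : ℝ^d → ℝ be continuous, concave on Q, with μ(x) ≥ f(x) for all x ∈ Q. Then the (d+2)-dimensional Lebesgue measure of the set S⁰ := {(x,y,z) ∈ ℝ^d × ℝ × ℝ : 0 < z ≤ 1, x ∈ z•Q, f(x) ≤ y ≤ z·μ(x/z)} equals (1/(d+2))·∫_Q μ(x) dx − ∫_0^1 z^d · (∫_Q f(z·x) dx) dz. -/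
open MeasureTheory Pointwise Set ENNReal

private lemma integrableOn_of_bdd {α : Type*} [MeasureSpace α] {s : Set α}
    (hsm : MeasurableSet s) (hs : volume s ≠ ⊤) {g : α → ℝ} (hg : Measurable g) {C : ℝ}
    (hC : ∀ x ∈ s, ‖g x‖ ≤ C) : IntegrableOn g s := by
  haveI : IsFiniteMeasure (volume.restrict s) :=
    ⟨by rwa [Measure.restrict_apply_univ, lt_top_iff_ne_top]⟩
  exact ⟨hg.aestronglyMeasurable, HasFiniteIntegral.of_bounded (C := C)
    ((ae_restrict_iff' hsm).2 (ae_of_all _ hC))⟩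

/-- Volume of the naïve relaxation of the disjunction between the origin
and a polytope `Q`, for a convex function `f` and a concave upper bound `μ`. -/
theorem stmt_1 (d : ℕ) (V : Finset (Fin d → ℝ)) (Q : Set (Fin d → ℝ))
    (hQ : Q = convexHull ℝ (V : Set (Fin d → ℝ)))
    (hQnonneg : ∀ x ∈ Q, ∀ i, 0 ≤ x i)
    (hQ0 : (0 : Fin d → ℝ) ∉ Q)
    (f μ : (Fin d → ℝ) → ℝ) (hf0 : f 0 = 0)
    (hfc : ContinuousOn f (convexHull ℝ (Q ∪ {0})))
    (hfv : ConvexOn ℝ (convexHull ℝ (Q ∪ {0})) f)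
    (hμc : ContinuousOn μ Q) (hμv : ConcaveOn ℝ Q μ)
    (hμf : ∀ x ∈ Q, f x ≤ μ x) :
    (volume {p : (Fin d → ℝ) × ℝ × ℝ |
        0 < p.2.2 ∧ p.2.2 ≤ 1 ∧ p.1 ∈ p.2.2 • Q ∧
        f p.1 ≤ p.2.1 ∧ p.2.1 ≤ p.2.2 * μ (p.2.2⁻¹ • p.1)}).toReal
      = (1 / ((d : ℝ) + 2)) * (∫ x in Q, μ x)
        - ∫ z in (0:ℝ)..1, z ^ d * ∫ x in Q, f (z • x) := by
  classical
  -- Basic structure of `Q` and `K`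
  have hQcpt : IsCompact Q := by rw [hQ]; exact V.finite_toSet.isCompact_convexHull ℝ
  have hQmeas : MeasurableSet Q := hQcpt.isClosed.measurableSet
  have hQvol : volume Q ≠ ⊤ := hQcpt.measure_lt_top.ne
  set K : Set (Fin d → ℝ) := convexHull ℝ (Q ∪ {0}) with hKdef
  have hKcpt : IsCompact K := by
    rw [hKdef, hQ, convexHull_convexHull_union_left]
    exact (V.finite_toSet.union (Set.finite_singleton 0)).isCompact_convexHull ℝ
  have hKmeas : MeasurableSet K := hKcpt.isClosed.measurableSet
  have hKconv : Convex ℝ K := convex_convexHull ℝ _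
  have hQK : Q ⊆ K := Set.subset_union_left.trans (subset_convexHull ℝ _)
  have h0K : (0 : Fin d → ℝ) ∈ K := subset_convexHull ℝ _ (Or.inr rfl)
  -- scaled points stay in `K`
  have hmemK : ∀ z : ℝ, 0 < z → z ≤ 1 → ∀ u ∈ Q, z • u ∈ K := by
    intro z hz hz1 u hu
    have h := hKconv (hQK hu) h0K hz.le (by linarith : (0:ℝ) ≤ 1 - z) (by ring)
    simpa using h
  -- the key inequality
  have hkey : ∀ z : ℝ, 0 < z → z ≤ 1 → ∀ u ∈ Q, f (z • u) ≤ z * μ u := by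
    intro z hz hz1 u hu
    have h1 := hfv.2 (hQK hu) h0K hz.le (by linarith : (0:ℝ) ≤ 1 - z) (by ring)
    have h2 : z * f u ≤ z * μ u := mul_le_mul_of_nonneg_left (hμf u hu) hz.le
    simp only [smul_zero, add_zero, hf0, smul_eq_mul, mul_zero] at h1
    linarith
  -- measurable extensions of `f` and `μ`
  set F : (Fin d → ℝ) → ℝ := fun x => if x ∈ K then f x else 0 with hFdef
  set G : (Fin d → ℝ) → ℝ := fun x => if x ∈ Q then μ x else 0 with hGdef
  have hFf : ∀ x ∈ K, F x = f x := fun x hx => if_pos hx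
  have hGμ : ∀ x ∈ Q, G x = μ x := fun x hx => if_pos hx
  have hFmeas : Measurable F := by
    have h1 : Measurable fun x : K => f x := (ContinuousOn.restrict hfc).measurable
    have h2 : Measurable fun _ : ↥(Kᶜ) => (0:ℝ) := measurable_const
    have h := Measurable.dite (s := K) h1 h2 hKmeas
    convert h using 2
    rfl
  have hGmeas : Measurable G := by
    have h1 : Measurable fun x : Q => μ x := (ContinuousOn.restrict hμc).measurable
    have h2 : Measurable fun _ : ↥(Qᶜ) => (0:ℝ) := measurable_const
    have h := Measurable.dite (s := Q) h1 h2 hQmeas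
    convert h using 2
    rfl
  -- bounds
  obtain ⟨Cf, hCf⟩ := hKcpt.exists_bound_of_continuousOn hfc
  obtain ⟨Cg, hCg⟩ := hQcpt.exists_bound_of_continuousOn hμc
  set CF : ℝ := max Cf 0 with hCFdef
  set CG : ℝ := max Cg 0 with hCGdef
  have hCF0 : 0 ≤ CF := le_max_right _ _
  have hCG0 : 0 ≤ CG := le_max_right _ _
  have hFbd : ∀ x, ‖F x‖ ≤ CF := by
    intro x
    by_cases hx : x ∈ K
    · rw [hFf x hx]; exact (hCf x hx).trans (le_max_left _ _)
    · simp only [hFdef, if_neg hx, norm_zero]; exact hCF0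
  have hGbd : ∀ x, ‖G x‖ ≤ CG := by
    intro x
    by_cases hx : x ∈ Q
    · rw [hGμ x hx]; exact (hCg x hx).trans (le_max_left _ _)
    · simp only [hGdef, if_neg hx, norm_zero]; exact hCG0
  -- the integrand in the (x,z) plane
  have hsmulmeas : Measurable fun q : (Fin d → ℝ) × ℝ => q.2⁻¹ • q.1 :=
    (measurable_snd.inv).smul measurable_fst
  set U : (Fin d → ℝ) × ℝ → ℝ≥0∞ := fun q =>
    if (0 < q.2 ∧ q.2 ≤ 1) ∧ q.2⁻¹ • q.1 ∈ Q
    then ENNReal.ofReal (q.2 * G (q.2⁻¹ • q.1) - F q.1) else 0 with hUdef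
  have hCond : MeasurableSet {q : (Fin d → ℝ) × ℝ | (0 < q.2 ∧ q.2 ≤ 1) ∧ q.2⁻¹ • q.1 ∈ Q} := by
    exact MeasurableSet.inter
      ((measurableSet_lt measurable_const measurable_snd).inter
        (measurableSet_le measurable_snd measurable_const))
      (hsmulmeas hQmeas)
  have hUmeas : Measurable U := by
    refine Measurable.ite hCond ?_ measurable_const
    exact ((measurable_snd.mul (hGmeas.comp hsmulmeas)).sub
      (hFmeas.comp measurable_fst)).ennreal_ofReal
  -- rewrite the set using `F` and `G`
  set S' : Set ((Fin d → ℝ) × ℝ × ℝ) := {p | ((0 < p.2.2 ∧ p.2.2 ≤ 1) ∧ p.2.2⁻¹ • p.1 ∈ Q) ∧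
      p.2.1 ∈ Icc (F p.1) (p.2.2 * G (p.2.2⁻¹ • p.1))} with hS'def
  have hSeq : {p : (Fin d → ℝ) × ℝ × ℝ | 0 < p.2.2 ∧ p.2.2 ≤ 1 ∧ p.1 ∈ p.2.2 • Q ∧
        f p.1 ≤ p.2.1 ∧ p.2.1 ≤ p.2.2 * μ (p.2.2⁻¹ • p.1)} = S' := by
    ext ⟨x, y, z⟩
    simp only [hS'def, mem_setOf_eq, mem_Icc]
    constructor
    · rintro ⟨hz, hz1, hxQ, hfy, hyμ⟩
      have hz0 : z ≠ 0 := ne_of_gt hz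
      have hu : z⁻¹ • x ∈ Q := (mem_smul_set_iff_inv_smul_mem₀ hz0 _ _).1 hxQ
      have hxK : x ∈ K := by
        have h := hmemK z hz hz1 _ hu
        rwa [smul_inv_smul₀ hz0] at h
      refine ⟨⟨⟨hz, hz1⟩, hu⟩, ?_, ?_⟩
      · rw [hFf x hxK]; exact hfy
      · rw [hGμ _ hu]; exact hyμ
    · rintro ⟨⟨⟨hz, hz1⟩, hu⟩, hfy, hyμ⟩
      have hz0 : z ≠ 0 := ne_of_gt hz
      have hxQ : x ∈ z • Q := (mem_smul_set_iff_inv_smul_mem₀ hz0 _ _).2 hu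
      have hxK : x ∈ K := by
        have h := hmemK z hz hz1 _ hu
        rwa [smul_inv_smul₀ hz0] at h
      refine ⟨hz, hz1, hxQ, ?_, ?_⟩
      · rw [← hFf x hxK]; exact hfy
      · rw [← hGμ _ hu]; exact hyμ
  rw [hSeq]
  have hS'meas : MeasurableSet S' := by
    have hm1 : Measurable fun p : (Fin d → ℝ) × ℝ × ℝ => (p.1, p.2.2) :=
      measurable_fst.prodMk measurable_snd.snd
    have h1 : MeasurableSet {p : (Fin d → ℝ) × ℝ × ℝ |
        (0 < p.2.2 ∧ p.2.2 ≤ 1) ∧ p.2.2⁻¹ • p.1 ∈ Q} := hm1 hCond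
    have h2 : MeasurableSet {p : (Fin d → ℝ) × ℝ × ℝ | F p.1 ≤ p.2.1} :=
      measurableSet_le (hFmeas.comp measurable_fst) measurable_snd.fst
    have h3 : MeasurableSet {p : (Fin d → ℝ) × ℝ × ℝ |
        p.2.1 ≤ p.2.2 * G (p.2.2⁻¹ • p.1)} :=
      measurableSet_le measurable_snd.fst
        (measurable_snd.snd.mul (hGmeas.comp (hsmulmeas.comp hm1)))
    exact h1.inter (h2.inter h3)
  -- Step 1: volume as a double lintegral
  have h1 : volume S' = ∫⁻ x, ∫⁻ z, U (x, z) := by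
    rw [Measure.volume_eq_prod, Measure.prod_apply hS'meas]
    refine lintegral_congr fun x => ?_
    have hxmeas : MeasurableSet (Prod.mk x ⁻¹' S') := measurable_prodMk_left hS'meas
    rw [Measure.volume_eq_prod, Measure.prod_apply_symm hxmeas]
    refine lintegral_congr fun z => ?_
    have hslice : ((fun y => (y, z)) ⁻¹' (Prod.mk x ⁻¹' S')) =
        if (0 < z ∧ z ≤ 1) ∧ z⁻¹ • x ∈ Q
        then Icc (F x) (z * G (z⁻¹ • x)) else ∅ := by
      split_ifs with hC
      · ext y; simp [hS'def, hC]
      · ext y; simp only [hS'def, mem_preimage, mem_setOf_eq, mem_empty_iff_false, iff_false]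
        rintro ⟨h, -⟩; exact hC h
    rw [hslice]
    simp only [hUdef]
    split_ifs with hC
    · exact Real.volume_Icc
    · exact measure_empty
  -- Step 2: swap the order of integration
  have h2 : (∫⁻ x, ∫⁻ z, U (x, z)) = ∫⁻ z, ∫⁻ x, U (x, z) :=
    lintegral_lintegral_swap hUmeas.aemeasurable
  -- notation for the parametric integrals
  set Iμ : ℝ := ∫ x in Q, μ x with hIμdef
  set J : ℝ → ℝ := fun z => ∫ u in Q, F (z • u) with hJdef
  set ψ : ℝ → ℝ := fun z => z ^ d * (z * Iμ - J z) with hψdef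
  -- integrability facts
  have hGint : IntegrableOn G Q := integrableOn_of_bdd hQmeas hQvol hGmeas fun x _ => hGbd x
  have hFint : ∀ z : ℝ, IntegrableOn (fun u => F (z • u)) Q := fun z =>
    integrableOn_of_bdd hQmeas hQvol (hFmeas.comp (measurable_const_smul z))
      fun x _ => hFbd _
  have hIμG : (∫ u in Q, G u) = Iμ := setIntegral_congr_fun hQmeas fun x hx => hGμ x hx
  have hsplit : ∀ z : ℝ, (∫ u in Q, (z * G u - F (z • u))) = z * Iμ - J z := by
    intro z
    rw [integral_sub (hGint.const_mul z) (hFint z), integral_const_mul, hIμG, hJdef]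
  -- Step 3: inner integral for fixed z
  have hinner : ∀ z ∈ Ioc (0:ℝ) 1, (∫⁻ x, U (x, z)) = ENNReal.ofReal (ψ z) := by
    intro z hz
    obtain ⟨hz0, hz1⟩ := hz
    have hzne : z ≠ 0 := ne_of_gt hz0
    have hU : ∀ x, U (x, z) =
        (z • Q).indicator (fun x => ENNReal.ofReal (z * G (z⁻¹ • x) - F x)) x := by
      intro x
      by_cases hx : z⁻¹ • x ∈ Q
      · have hx' : x ∈ z • Q := (mem_smul_set_iff_inv_smul_mem₀ hzne _ _).2 hx
        simp [hUdef, hx, hx', hz0, hz1]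
      · have hx' : x ∉ z • Q := fun h => hx ((mem_smul_set_iff_inv_smul_mem₀ hzne _ _).1 h)
        simp [hUdef, hx, hx']
    have hsQcpt : IsCompact (z • Q) := by
      rw [← Set.image_smul]; exact hQcpt.image (continuous_const_smul z)
    have hsQmeas : MeasurableSet (z • Q) := hsQcpt.isClosed.measurableSet
    rw [lintegral_congr hU, lintegral_indicator hsQmeas]
    have hint : IntegrableOn (fun x => z * G (z⁻¹ • x) - F x) (z • Q) := by
      refine integrableOn_of_bdd hsQmeas hsQcpt.measure_lt_top.ne
        ((measurable_const.mul (hGmeas.comp (measurable_const_smul z⁻¹))).sub hFmeas)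
        (C := |z| * CG + CF) fun x _ => ?_
      calc ‖z * G (z⁻¹ • x) - F x‖ ≤ ‖z * G (z⁻¹ • x)‖ + ‖F x‖ := norm_sub_le _ _
        _ ≤ |z| * CG + CF := by
            rw [norm_mul]
            exact add_le_add (mul_le_mul_of_nonneg_left (hGbd _) (abs_nonneg z)) (hFbd x)
    have hnn : 0 ≤ᵐ[volume.restrict (z • Q)] fun x => z * G (z⁻¹ • x) - F x := by
      refine (ae_restrict_iff' hsQmeas).2 (ae_of_all _ fun x hx => ?_)
      obtain ⟨u, hu, rfl⟩ := Set.mem_smul_set.1 hx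
      simp only [Pi.zero_apply]
      have huu : z⁻¹ • z • u = u := inv_smul_smul₀ hzne u
      rw [huu, hGμ u hu, hFf _ (hmemK z hz0 hz1 u hu), sub_nonneg]
      exact hkey z hz0 hz1 u hu
    rw [← ofReal_integral_eq_lintegral_ofReal hint hnn]
    congr 1
    have hcv := Measure.setIntegral_comp_smul_of_pos volume (fun x => z * G (z⁻¹ • x) - F x) Q hz0
    rw [Module.finrank_fin_fun ℝ] at hcv
    have hzd : (0:ℝ) < z ^ d := pow_pos hz0 d
    have hcv2 : (∫ x in z • Q, (z * G (z⁻¹ • x) - F x)) =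
        z ^ d * ∫ x in Q, (z * G (z⁻¹ • z • x) - F (z • x)) := by
      rw [hcv, smul_eq_mul, ← mul_assoc, mul_inv_cancel₀ (ne_of_gt hzd), one_mul]
    rw [hcv2, hψdef]
    congr 1
    rw [← hsplit z]
    refine setIntegral_congr_fun hQmeas fun u hu => ?_
    rw [inv_smul_smul₀ hzne]
  -- Step 4: reduce the outer integral to `Ioc 0 1`
  have h3 : (∫⁻ z, ∫⁻ x, U (x, z)) = ∫⁻ z in Ioc (0:ℝ) 1, ENNReal.ofReal (ψ z) := by
    rw [← lintegral_indicator measurableSet_Ioc]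
    refine lintegral_congr fun z => ?_
    by_cases hz : z ∈ Ioc (0:ℝ) 1
    · rw [indicator_of_mem hz, hinner z hz]
    · rw [indicator_of_notMem hz]
      have hU0 : ∀ x, U (x, z) = 0 := by
        intro x
        rw [hUdef]
        refine if_neg ?_
        rintro ⟨⟨ha, hb⟩, -⟩
        exact hz ⟨ha, hb⟩
      simp [hU0]
  -- measurability and bounds for `J` and `ψ`
  have hJmeas : Measurable J := by
    have hsm : StronglyMeasurable fun q : ℝ × (Fin d → ℝ) => F (q.1 • q.2) :=
      (hFmeas.comp (measurable_fst.smul measurable_snd)).stronglyMeasurable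
    exact hsm.integral_prod_right'.measurable
  have hJbd : ∀ z, ‖J z‖ ≤ CF * (volume Q).toReal := fun z =>
    norm_setIntegral_le_of_norm_le_const hQcpt.measure_lt_top fun x _ => hFbd _
  have hψmeas : Measurable ψ := by
    exact (measurable_id.pow_const d).mul ((measurable_id.mul_const Iμ).sub hJmeas)
  have hψnn : ∀ z ∈ Ioc (0:ℝ) 1, 0 ≤ ψ z := by
    intro z hz
    refine mul_nonneg (pow_nonneg hz.1.le d) ?_
    rw [← hsplit z]
    refine setIntegral_nonneg hQmeas fun u hu => ?_
    rw [hGμ u hu, sub_nonneg, hFf _ (hmemK z hz.1 hz.2 u hu)]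
    exact hkey z hz.1 hz.2 u hu
  have hψint : IntegrableOn ψ (Ioc (0:ℝ) 1) := by
    refine integrableOn_of_bdd measurableSet_Ioc (by simp [Real.volume_Ioc]) hψmeas
      (C := |Iμ| + CF * (volume Q).toReal) fun z hz => ?_
    have h1 : |z| ≤ 1 := abs_le.2 ⟨by linarith [hz.1], hz.2⟩
    have h2 : ‖J z‖ ≤ CF * (volume Q).toReal := hJbd z
    have h3 : |z| ^ d ≤ 1 := pow_le_one₀ (abs_nonneg z) h1
    calc ‖ψ z‖ = |z| ^ d * |z * Iμ - J z| := by
          rw [hψdef]; rw [norm_mul, norm_pow]; rfl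
      _ ≤ 1 * (|z| * |Iμ| + |J z|) := by
          refine mul_le_mul h3 ?_ (abs_nonneg _) one_pos.le
          calc |z * Iμ - J z| ≤ |z * Iμ| + |J z| := abs_sub _ _
            _ = |z| * |Iμ| + |J z| := by rw [abs_mul]
      _ ≤ |Iμ| + CF * (volume Q).toReal := by
          rw [one_mul]
          refine add_le_add ?_ h2
          calc |z| * |Iμ| ≤ 1 * |Iμ| := mul_le_mul_of_nonneg_right h1 (abs_nonneg _)
            _ = |Iμ| := one_mul _
  -- Step 5: convert to a Bochner integral
  have h4 : (∫⁻ z in Ioc (0:ℝ) 1, ENNReal.ofReal (ψ z))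
      = ENNReal.ofReal (∫ z in Ioc (0:ℝ) 1, ψ z) := by
    rw [← ofReal_integral_eq_lintegral_ofReal hψint
      ((ae_restrict_iff' measurableSet_Ioc).2 (ae_of_all _ hψnn))]
  have hψI0 : 0 ≤ ∫ z in Ioc (0:ℝ) 1, ψ z := setIntegral_nonneg measurableSet_Ioc hψnn
  rw [h1, h2, h3, h4, ENNReal.toReal_ofReal hψI0]
  -- Step 6: final computation
  have hzJ_int : IntegrableOn (fun z : ℝ => z ^ d * J z) (Ioc (0:ℝ) 1) := by
    refine integrableOn_of_bdd measurableSet_Ioc (by simp [Real.volume_Ioc])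
      ((measurable_id.pow_const d).mul hJmeas) (C := CF * (volume Q).toReal)
      fun z hz => ?_
    have h1' : |z| ≤ 1 := abs_le.2 ⟨by linarith [hz.1], hz.2⟩
    have h3' : |z| ^ d ≤ 1 := pow_le_one₀ (abs_nonneg z) h1'
    calc ‖z ^ d * J z‖ = |z| ^ d * ‖J z‖ := by rw [norm_mul, norm_pow]; rfl
      _ ≤ 1 * (CF * (volume Q).toReal) :=
          mul_le_mul h3' (hJbd z) (norm_nonneg _) one_pos.le
      _ = CF * (volume Q).toReal := one_mul _
  have hpow_int : IntegrableOn (fun z : ℝ => z ^ (d+1) * Iμ) (Ioc (0:ℝ) 1) :=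
    (((continuous_pow (d+1)).mul continuous_const).integrableOn_Ioc)
  have hψeq : ∀ z ∈ Ioc (0:ℝ) 1, ψ z = z ^ (d+1) * Iμ - z ^ d * J z := by
    intro z _; rw [hψdef]; ring
  have hsplit2 : (∫ z in Ioc (0:ℝ) 1, ψ z)
      = (∫ z in Ioc (0:ℝ) 1, z ^ (d+1) * Iμ) - ∫ z in Ioc (0:ℝ) 1, z ^ d * J z := by
    rw [← integral_sub hpow_int hzJ_int]
    exact setIntegral_congr_fun measurableSet_Ioc fun z hz => by
      rw [hψeq z hz]
  have hpow_val : (∫ z in Ioc (0:ℝ) 1, z ^ (d+1) * Iμ) = (1 / ((d:ℝ) + 2)) * Iμ := by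
    rw [← intervalIntegral.integral_of_le (zero_le_one (α := ℝ))]
    rw [intervalIntegral.integral_mul_const, integral_pow]
    push_cast
    ring_nf
  have hJ_val : (∫ z in Ioc (0:ℝ) 1, z ^ d * J z)
      = ∫ z in (0:ℝ)..1, z ^ d * ∫ x in Q, f (z • x) := by
    rw [intervalIntegral.integral_of_le (zero_le_one (α := ℝ))]
    refine setIntegral_congr_fun measurableSet_Ioc fun z hz => ?_
    congr 1
    show (∫ u in Q, F (z • u)) = ∫ x in Q, f (z • x)
    exact setIntegral_congr_fun hQmeas fun x hx => hFf _ (hmemK z hz.1 hz.2 x hx)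
  rw [hsplit2, hpow_val, hJ_val]
end

section
/- Let Q ⊂ ℝ^d be a polytope (the convex hull of a finite set) contained in the nonnegative orthant and not containing the origin, let f : ℝ^d → ℝ satisfy f(0) = 0 and be continuous and convex on conv(Q ∪ {0}), and let μ : ℝ^d → ℝ be continuous, concave on Q, with μ(x) ≥ f(x) for all x ∈ Q. Then the difference of Lebesgue measures vol(S⁰) − vol(S), where S⁰ := {(x,y,z) : 0 < z ≤ 1, x ∈ z•Q, f(x) ≤ y ≤ z·μ(x/z)} and S := {(x,y,z) : 0 < z ≤ 1, x ∈ z•Q, z·f(x/z) ≤ y ≤ z·μ(x/z)}, equals (1/(d+2))·∫_Q f(x) dx − ∫_0^1 z^d · (∫_Q f(z·x) dx) dz; in particular this difference does not depend on the concave upper bound μ. -/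
open MeasureTheory Pointwise Set

lemma smul_set_measurableSet {d : ℕ} {Q : Set (Fin d → ℝ)} (hQ : MeasurableSet Q)
    {z : ℝ} (hz : z ≠ 0) : MeasurableSet (z • Q) := by
  have hset : z • Q = (fun x : Fin d → ℝ => z⁻¹ • x) ⁻¹' Q := by
    ext x; simp [Set.mem_smul_set_iff_inv_smul_mem₀ hz]
  rw [hset]; exact hQ.preimage (measurable_const_smul _)

lemma scale_integral {d : ℕ} (Q : Set (Fin d → ℝ)) (hQ : MeasurableSet Q)
    (g : (Fin d → ℝ) → ℝ) {z : ℝ} (hz : 0 < z) :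
    ∫ x in z • Q, g x = z ^ d * ∫ x in Q, g (z • x) := by
  have hz' : z ≠ 0 := hz.ne'
  have hmeas : MeasurableSet (z • Q) := smul_set_measurableSet hQ hz'
  have hcomp := Measure.integral_comp_smul (volume : Measure (Fin d → ℝ)) ((z • Q).indicator g) z
  have hind : ∀ x, ((z • Q).indicator g) (z • x) = Q.indicator (fun u => g (z • u)) x := by
    intro x
    by_cases hx : x ∈ Q
    · rw [Set.indicator_of_mem hx, Set.indicator_of_mem (Set.smul_mem_smul_set hx)]
    · rw [Set.indicator_of_notMem hx, Set.indicator_of_notMem]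
      rwa [Set.smul_mem_smul_set_iff₀ hz']
  rw [Module.finrank_fin_fun] at hcomp
  simp only [hind] at hcomp
  rw [← integral_indicator hmeas, ← integral_indicator hQ, hcomp,
    abs_of_pos (by positivity : (0:ℝ) < (z ^ d)⁻¹), smul_eq_mul]
  field_simp

set_option maxHeartbeats 2000000 in
/-- The cut-off amount `Δ(P⁰,P) = vol(P⁰) − vol(P)` between the naïve and
perspective relaxations; it does not depend on the concave upper bound `μ`. -/
theorem stmt_2 (d : ℕ) (V : Finset (Fin d → ℝ)) (Q : Set (Fin d → ℝ))
    (hQ : Q = convexHull ℝ (V : Set (Fin d → ℝ)))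
    (hQnonneg : ∀ x ∈ Q, ∀ i, 0 ≤ x i)
    (hQ0 : (0 : Fin d → ℝ) ∉ Q)
    (f μ : (Fin d → ℝ) → ℝ) (hf0 : f 0 = 0)
    (hfc : ContinuousOn f (convexHull ℝ (Q ∪ {0})))
    (hfv : ConvexOn ℝ (convexHull ℝ (Q ∪ {0})) f)
    (hμc : ContinuousOn μ Q) (hμv : ConcaveOn ℝ Q μ)
    (hμf : ∀ x ∈ Q, f x ≤ μ x) :
    (volume {p : (Fin d → ℝ) × ℝ × ℝ |
        0 < p.2.2 ∧ p.2.2 ≤ 1 ∧ p.1 ∈ p.2.2 • Q ∧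
        f p.1 ≤ p.2.1 ∧ p.2.1 ≤ p.2.2 * μ (p.2.2⁻¹ • p.1)}).toReal
      - (volume {p : (Fin d → ℝ) × ℝ × ℝ |
        0 < p.2.2 ∧ p.2.2 ≤ 1 ∧ p.1 ∈ p.2.2 • Q ∧
        p.2.2 * f (p.2.2⁻¹ • p.1) ≤ p.2.1 ∧ p.2.1 ≤ p.2.2 * μ (p.2.2⁻¹ • p.1)}).toReal
      = (1 / ((d : ℝ) + 2)) * (∫ x in Q, f x)
        - ∫ z in (0:ℝ)..1, z ^ d * ∫ x in Q, f (z • x) := by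
  set K : Set (Fin d → ℝ) := convexHull ℝ (Q ∪ {0}) with hK
  have hQcomp : IsCompact Q := by rw [hQ]; exact V.finite_toSet.isCompact_convexHull ℝ
  have hQclosed : IsClosed Q := hQcomp.isClosed
  have hQmeas : MeasurableSet Q := hQclosed.measurableSet
  have hKeq : K = convexHull ℝ ((V : Set (Fin d → ℝ)) ∪ {0}) := by
    rw [hK, hQ, convexHull_convexHull_union_left]
  have hKcomp : IsCompact K := by
    rw [hKeq]
    exact (V.finite_toSet.union (Set.finite_singleton 0)).isCompact_convexHull ℝ
  have hKclosed : IsClosed K := hKcomp.isClosed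
  have hKconv : Convex ℝ K := convex_convexHull ℝ _
  have hQK : Q ⊆ K := (Set.subset_union_left).trans (subset_convexHull ℝ _)
  have h0K : (0 : Fin d → ℝ) ∈ K := subset_convexHull ℝ _ (Set.mem_union_right _ rfl)
  have hzK : ∀ z : ℝ, 0 ≤ z → z ≤ 1 → ∀ x ∈ Q, z • x ∈ K := by
    intro z hz0 hz1 x hx
    have := hKconv (hQK hx) h0K hz0 (by linarith : (0:ℝ) ≤ 1 - z) (by ring)
    simpa using this
  obtain ⟨F, hF⟩ : ∃ F : C((Fin d → ℝ), ℝ), ∀ x ∈ K, F x = f x := by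
    obtain ⟨g, hg⟩ := ContinuousMap.exists_restrict_eq (Y := ℝ) hKclosed
      ⟨K.restrict f, hfc.restrict⟩
    exact ⟨g, fun x hx => DFunLike.congr_fun hg ⟨x, hx⟩⟩
  obtain ⟨M, hM⟩ : ∃ M : C((Fin d → ℝ), ℝ), ∀ x ∈ Q, M x = μ x := by
    obtain ⟨g, hg⟩ := ContinuousMap.exists_restrict_eq (Y := ℝ) hQclosed
      ⟨Q.restrict μ, hμc.restrict⟩
    exact ⟨g, fun x hx => DFunLike.congr_fun hg ⟨x, hx⟩⟩
  have hmem : ∀ {x : Fin d → ℝ} {z : ℝ}, 0 < z → z ≤ 1 → x ∈ z • Q →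
      z⁻¹ • x ∈ Q ∧ x ∈ K := by
    intro x z hz0 hz1 hx
    obtain ⟨q, hq, rfl⟩ := hx
    exact ⟨by rw [inv_smul_smul₀ hz0.ne']; exact hq, hzK z hz0.le hz1 q hq⟩
  -- base set
  set B : Set ((Fin d → ℝ) × ℝ) := {q | 0 < q.2 ∧ q.2 ≤ 1 ∧ q.1 ∈ q.2 • Q} with hBdef
  have hBalt : B = {q : (Fin d → ℝ) × ℝ | 0 < q.2} ∩ {q | q.2 ≤ 1} ∩
      {q | q.2⁻¹ • q.1 ∈ Q} := by
    ext ⟨x, z⟩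
    simp only [hBdef, Set.mem_setOf_eq, Set.mem_inter_iff]
    constructor
    · rintro ⟨h1, h2, h3⟩
      exact ⟨⟨h1, h2⟩, (Set.mem_smul_set_iff_inv_smul_mem₀ h1.ne' _ _).1 h3⟩
    · rintro ⟨⟨h1, h2⟩, h3⟩
      exact ⟨h1, h2, (Set.mem_smul_set_iff_inv_smul_mem₀ h1.ne' _ _).2 h3⟩
  have hsmul_meas : Measurable (fun q : (Fin d → ℝ) × ℝ => q.2⁻¹ • q.1) :=
    measurable_snd.inv.smul measurable_fst
  have hBmeas : MeasurableSet B := by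
    rw [hBalt]
    exact ((measurableSet_lt measurable_const measurable_snd).inter
      (measurableSet_le measurable_snd measurable_const)).inter (hsmul_meas hQmeas)
  have hBelt : ∀ q : (Fin d → ℝ) × ℝ, q ∈ B →
      0 < q.2 ∧ q.2 ≤ 1 ∧ q.2⁻¹ • q.1 ∈ Q ∧ q.1 ∈ K ∧ q.1 = q.2 • (q.2⁻¹ • q.1) := by
    intro q hq
    obtain ⟨hz0, hz1, hx⟩ := hq
    obtain ⟨hinv, hK'⟩ := hmem hz0 hz1 hx
    exact ⟨hz0, hz1, hinv, hK', (smul_inv_smul₀ hz0.ne' _).symm⟩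
  -- bounds
  obtain ⟨R', hR'⟩ : ∃ R, Q ⊆ Metric.closedBall 0 R := hQcomp.isBounded.subset_closedBall 0
  set RQ : ℝ := max R' 0 with hRQdef
  have hRQ : Q ⊆ Metric.closedBall 0 RQ :=
    hR'.trans (Metric.closedBall_subset_closedBall (le_max_left _ _))
  obtain ⟨C1, hC1⟩ := hKcomp.exists_bound_of_continuousOn F.continuous.continuousOn
  obtain ⟨C2, hC2⟩ := hQcomp.exists_bound_of_continuousOn M.continuous.continuousOn
  set C : ℝ := max (max C1 C2) 0 with hCdef
  have hC0 : (0:ℝ) ≤ C := le_max_right _ _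
  have hCF : ∀ x ∈ K, |F x| ≤ C := fun x hx =>
    (Real.norm_eq_abs _ ▸ hC1 x hx).trans ((le_max_left _ _).trans (le_max_left _ _))
  have hCM : ∀ x ∈ Q, |M x| ≤ C := fun x hx =>
    (Real.norm_eq_abs _ ▸ hC2 x hx).trans ((le_max_right _ _).trans (le_max_left _ _))
  have hBsub : B ⊆ Metric.closedBall (0 : Fin d → ℝ) RQ ×ˢ Icc (0:ℝ) 1 := by
    intro q hq
    obtain ⟨hz0, hz1, hinv, hxK, hxe⟩ := hBelt q hq
    refine ⟨?_, hz0.le, hz1⟩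
    simp only [Metric.mem_closedBall, dist_zero_right]
    rw [hxe, norm_smul]
    have h1 : ‖q.2⁻¹ • q.1‖ ≤ RQ := by
      have := hRQ hinv
      simpa [dist_zero_right] using this
    calc ‖q.2‖ * ‖q.2⁻¹ • q.1‖ ≤ 1 * RQ := by
          apply mul_le_mul ?_ h1 (norm_nonneg _) zero_le_one
          rw [Real.norm_eq_abs, abs_of_pos hz0]; exact hz1
      _ = RQ := one_mul _
  have hBfin : volume B ≠ ⊤ := by
    refine (lt_of_le_of_lt (measure_mono hBsub) ?_).ne
    rw [MeasureTheory.Measure.volume_eq_prod, Measure.prod_prod]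
    exact ENNReal.mul_lt_top (isCompact_closedBall _ _).measure_lt_top
      isCompact_Icc.measure_lt_top
  -- region functions
  set g0 : (Fin d → ℝ) × ℝ → ℝ := fun q => F q.1 with hg0
  set g1 : (Fin d → ℝ) × ℝ → ℝ := fun q => q.2 * F (q.2⁻¹ • q.1) with hg1
  set g2 : (Fin d → ℝ) × ℝ → ℝ := fun q => q.2 * M (q.2⁻¹ • q.1) with hg2
  have hg0meas : Measurable g0 := F.continuous.measurable.comp measurable_fst
  have hg1meas : Measurable g1 :=
    measurable_snd.mul (F.continuous.measurable.comp hsmul_meas)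
  have hg2meas : Measurable g2 :=
    measurable_snd.mul (M.continuous.measurable.comp hsmul_meas)
  -- key convexity inequality
  have hcvx : ∀ q ∈ B, g0 q ≤ g1 q := by
    intro q hq
    obtain ⟨hz0, hz1, hinv, hxK, hxe⟩ := hBelt q hq
    have e1 : g0 q = f (q.2 • (q.2⁻¹ • q.1)) := by
      simp only [hg0]; rw [← hxe]; exact hF _ hxK
    have e2 : g1 q = q.2 * f (q.2⁻¹ • q.1) := by
      simp only [hg1]; rw [hF _ (hQK hinv)]
    have hconv := hfv.2 (hQK hinv) h0K hz0.le (by linarith : (0:ℝ) ≤ 1 - q.2) (by ring)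
    simp only [smul_zero, add_zero, hf0, mul_zero, smul_eq_mul] at hconv
    rw [e1, e2]; linarith
  have hg12 : ∀ q ∈ B, g1 q ≤ g2 q := by
    intro q hq
    obtain ⟨hz0, hz1, hinv, hxK, hxe⟩ := hBelt q hq
    simp only [hg1, hg2]
    rw [hF _ (hQK hinv), hM _ hinv]
    exact mul_le_mul_of_nonneg_left (hμf _ hinv) hz0.le
  -- bound for h on B
  have hbnd : ∀ q ∈ B, |g0 q| ≤ C ∧ |g1 q| ≤ C ∧ |g2 q| ≤ C := by
    intro q hq
    obtain ⟨hz0, hz1, hinv, hxK, hxe⟩ := hBelt q hq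
    have hz : |q.2| ≤ 1 := by rw [abs_of_pos hz0]; exact hz1
    refine ⟨hCF _ hxK, ?_, ?_⟩
    · simp only [hg1]; rw [abs_mul]
      calc |q.2| * |F (q.2⁻¹ • q.1)| ≤ 1 * C :=
            mul_le_mul hz (hCF _ (hQK hinv)) (abs_nonneg _) zero_le_one
        _ = C := one_mul _
    · simp only [hg2]; rw [abs_mul]
      calc |q.2| * |M (q.2⁻¹ • q.1)| ≤ 1 * C :=
            mul_le_mul hz (hCM _ hinv) (abs_nonneg _) zero_le_one
        _ = C := one_mul _
  -- the regions in rearranged coordinates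
  set R0 : Set (((Fin d → ℝ) × ℝ) × ℝ) :=
    {r | r.1 ∈ B ∧ g0 r.1 ≤ r.2 ∧ r.2 ≤ g2 r.1} with hR0def
  set R1 : Set (((Fin d → ℝ) × ℝ) × ℝ) :=
    {r | r.1 ∈ B ∧ g1 r.1 ≤ r.2 ∧ r.2 ≤ g2 r.1} with hR1def
  have hR0meas : MeasurableSet R0 := by
    have he : R0 = (Prod.fst ⁻¹' B) ∩
        ({r : ((Fin d → ℝ) × ℝ) × ℝ | g0 r.1 ≤ r.2} ∩ {r | r.2 ≤ g2 r.1}) := rfl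
    rw [he]
    exact (hBmeas.preimage measurable_fst).inter
      ((measurableSet_le (hg0meas.comp measurable_fst) measurable_snd).inter
       (measurableSet_le measurable_snd (hg2meas.comp measurable_fst)))
  have hR1meas : MeasurableSet R1 := by
    have he : R1 = (Prod.fst ⁻¹' B) ∩
        ({r : ((Fin d → ℝ) × ℝ) × ℝ | g1 r.1 ≤ r.2} ∩ {r | r.2 ≤ g2 r.1}) := rfl
    rw [he]
    exact (hBmeas.preimage measurable_fst).inter
      ((measurableSet_le (hg1meas.comp measurable_fst) measurable_snd).inter
       (measurableSet_le measurable_snd (hg2meas.comp measurable_fst)))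
  -- the measure-preserving rearrangement
  set T : (Fin d → ℝ) × ℝ × ℝ → ((Fin d → ℝ) × ℝ) × ℝ :=
    fun p => ((p.1, p.2.2), p.2.1) with hT
  have hTmp : MeasurePreserving T volume volume := by
    have hswap : MeasurePreserving (Prod.swap : ℝ × ℝ → ℝ × ℝ) volume volume := by
      rw [MeasureTheory.Measure.volume_eq_prod]
      exact Measure.measurePreserving_swap
    have h1 : MeasurePreserving
        (Prod.map (id : (Fin d → ℝ) → (Fin d → ℝ)) (Prod.swap : ℝ × ℝ → ℝ × ℝ))
        volume volume := by
      rw [MeasureTheory.Measure.volume_eq_prod (Fin d → ℝ) (ℝ × ℝ)]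
      exact (MeasurePreserving.id volume).prod hswap
    have h2 : MeasurePreserving
        (MeasurableEquiv.prodAssoc.symm : (Fin d → ℝ) × ℝ × ℝ ≃ᵐ ((Fin d → ℝ) × ℝ) × ℝ)
        volume volume := (volume_preserving_prodAssoc).symm _
    exact h2.comp h1
  -- identification of the two sets in the statement
  have hS0 : {p : (Fin d → ℝ) × ℝ × ℝ |
        0 < p.2.2 ∧ p.2.2 ≤ 1 ∧ p.1 ∈ p.2.2 • Q ∧
        f p.1 ≤ p.2.1 ∧ p.2.1 ≤ p.2.2 * μ (p.2.2⁻¹ • p.1)} = T ⁻¹' R0 := by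
    ext p
    simp only [hT, Set.mem_preimage, hR0def, Set.mem_setOf_eq, hBdef, hg0, hg2]
    constructor
    · rintro ⟨hz0, hz1, hx, h4, h5⟩
      obtain ⟨hinv, hxK⟩ := hmem hz0 hz1 hx
      exact ⟨⟨hz0, hz1, hx⟩, by rw [hF _ hxK]; exact h4, by rw [hM _ hinv]; exact h5⟩
    · rintro ⟨⟨hz0, hz1, hx⟩, h4, h5⟩
      obtain ⟨hinv, hxK⟩ := hmem hz0 hz1 hx
      exact ⟨hz0, hz1, hx, by rw [← hF _ hxK]; exact h4, by rw [← hM _ hinv]; exact h5⟩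
  have hS1 : {p : (Fin d → ℝ) × ℝ × ℝ |
        0 < p.2.2 ∧ p.2.2 ≤ 1 ∧ p.1 ∈ p.2.2 • Q ∧
        p.2.2 * f (p.2.2⁻¹ • p.1) ≤ p.2.1 ∧ p.2.1 ≤ p.2.2 * μ (p.2.2⁻¹ • p.1)}
      = T ⁻¹' R1 := by
    ext p
    simp only [hT, Set.mem_preimage, hR1def, Set.mem_setOf_eq, hBdef, hg1, hg2]
    constructor
    · rintro ⟨hz0, hz1, hx, h4, h5⟩
      obtain ⟨hinv, hxK⟩ := hmem hz0 hz1 hx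
      exact ⟨⟨hz0, hz1, hx⟩, by rw [hF _ (hQK hinv)]; exact h4,
        by rw [hM _ hinv]; exact h5⟩
    · rintro ⟨⟨hz0, hz1, hx⟩, h4, h5⟩
      obtain ⟨hinv, hxK⟩ := hmem hz0 hz1 hx
      exact ⟨hz0, hz1, hx, by rw [← hF _ (hQK hinv)]; exact h4,
        by rw [← hM _ hinv]; exact h5⟩
  -- finiteness
  have hR0sub : R0 ⊆ (Metric.closedBall (0 : Fin d → ℝ) RQ ×ˢ Icc (0:ℝ) 1) ×ˢ
      Icc (-C) C := by
    rintro r ⟨hrB, h1, h2⟩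
    obtain ⟨b0, b1, b2⟩ := hbnd _ hrB
    rw [abs_le] at b0 b2
    exact ⟨hBsub hrB, by linarith [b0.1], by linarith [b2.2]⟩
  have hR0fin : volume R0 ≠ ⊤ := by
    refine (lt_of_le_of_lt (measure_mono hR0sub) ?_).ne
    rw [MeasureTheory.Measure.volume_eq_prod, Measure.prod_prod,
      MeasureTheory.Measure.volume_eq_prod, Measure.prod_prod]
    exact ENNReal.mul_lt_top (ENNReal.mul_lt_top
      (isCompact_closedBall _ _).measure_lt_top isCompact_Icc.measure_lt_top)
      isCompact_Icc.measure_lt_top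
  have hsub : R1 ⊆ R0 := by
    rintro r ⟨hrB, h1, h2⟩
    exact ⟨hrB, le_trans (hcvx _ hrB) h1, h2⟩
  have hR1fin : volume R1 ≠ ⊤ := fun h => hR0fin (top_le_iff.1 (h ▸ measure_mono hsub))
  -- difference set
  have hdiff : R0 \ R1 = {r | r.1 ∈ B ∧ r.2 ∈ Ico (g0 r.1) (g1 r.1)} := by
    ext r
    constructor
    · rintro ⟨⟨hrB, h1, h2⟩, hnot⟩
      refine ⟨hrB, h1, ?_⟩
      by_contra hge
      exact hnot ⟨hrB, not_lt.1 hge, h2⟩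
    · rintro ⟨hrB, h1, h2⟩
      exact ⟨⟨hrB, h1, le_trans h2.le (hg12 _ hrB)⟩,
        fun hmem1 => absurd hmem1.2.1 (not_le.2 h2)⟩
  -- LHS as measure of the difference set
  have hLHS : (volume (T ⁻¹' R0)).toReal - (volume (T ⁻¹' R1)).toReal
      = (volume (R0 \ R1)).toReal := by
    rw [hTmp.measure_preimage hR0meas.nullMeasurableSet,
      hTmp.measure_preimage hR1meas.nullMeasurableSet,
      measure_diff hsub hR1meas.nullMeasurableSet hR1fin,
      ENNReal.toReal_sub_of_le (measure_mono hsub) hR0fin]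
  -- Fubini on the last coordinate
  set h : (Fin d → ℝ) × ℝ → ℝ := fun q => g1 q - g0 q with hh
  have hhmeas : Measurable h := hg1meas.sub hg0meas
  have hdm : volume (R0 \ R1) = ∫⁻ q in B, ENNReal.ofReal (h q) := by
    have hDmeas : MeasurableSet (R0 \ R1) := hR0meas.diff hR1meas
    rw [MeasureTheory.Measure.volume_eq_prod, Measure.prod_apply hDmeas,
      ← lintegral_indicator hBmeas]
    congr 1
    funext q
    by_cases hqB : q ∈ B
    · rw [Set.indicator_of_mem hqB]
      have hpre : Prod.mk q ⁻¹' (R0 \ R1) = Ico (g0 q) (g1 q) := by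
        rw [hdiff]; ext y; simp [hqB]
      rw [hpre, Real.volume_Ico]
    · rw [Set.indicator_of_notMem hqB]
      have hpre : Prod.mk q ⁻¹' (R0 \ R1) = (∅ : Set ℝ) := by
        rw [hdiff]; ext y; simp [hqB]
      rw [hpre]; simp
  -- integrability of h on B
  have hhint : IntegrableOn h B volume := by
    refine Measure.integrableOn_of_bounded (M := 2 * C) hBfin
      hhmeas.aestronglyMeasurable ?_
    filter_upwards [ae_restrict_mem hBmeas] with q hq
    obtain ⟨b0, b1, b2⟩ := hbnd _ hq
    rw [hh, Real.norm_eq_abs]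
    calc |g1 q - g0 q| ≤ |g1 q| + |g0 q| := abs_sub _ _
      _ ≤ 2 * C := by linarith
  have hreal : (volume (R0 \ R1)).toReal = ∫ q in B, h q := by
    rw [hdm, integral_eq_lintegral_of_nonneg_ae ?_ hhmeas.aestronglyMeasurable.restrict]
    filter_upwards [ae_restrict_mem hBmeas] with q hq
    exact sub_nonneg.2 (hcvx q hq)
  -- the inner integral
  set a : ℝ := ∫ x in Q, F x with ha
  set c : ℝ → ℝ := fun z => ∫ x in Q, F (z • x) with hc
  set φ : (Fin d → ℝ) × ℝ → ℝ := B.indicator h with hφ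
  have hφint : Integrable φ volume := (integrable_indicator_iff hBmeas).2 hhint
  have hφint' : Integrable φ ((volume : Measure (Fin d → ℝ)).prod (volume : Measure ℝ)) := by
    rw [← MeasureTheory.Measure.volume_eq_prod]; exact hφint
  have hinner : (fun z => ∫ x, φ (x, z)) =
      (Ioc (0:ℝ) 1).indicator (fun z => z ^ (d+1) * a - z ^ d * c z) := by
    funext z
    by_cases hz : z ∈ Ioc (0:ℝ) 1
    · rw [Set.indicator_of_mem hz]
      have hzQmeas : MeasurableSet (z • Q) := smul_set_measurableSet hQmeas hz.1.ne'
      have hzQcomp : IsCompact (z • Q) := by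
        rw [← Set.image_smul]; exact hQcomp.image (continuous_const_smul z)
      have hres : (fun x => φ (x, z)) = (z • Q).indicator (fun x => h (x, z)) := by
        funext x
        by_cases hx : x ∈ z • Q
        · rw [Set.indicator_of_mem hx, hφ, Set.indicator_of_mem]
          exact ⟨hz.1, hz.2, hx⟩
        · rw [Set.indicator_of_notMem hx, hφ, Set.indicator_of_notMem]
          intro hxB
          exact hx hxB.2.2
      rw [hres, integral_indicator hzQmeas]
      have hint1 : IntegrableOn (fun x => z * F (z⁻¹ • x)) (z • Q) volume := by
        apply ContinuousOn.integrableOn_compact hzQcomp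
        exact (continuous_const.mul (F.continuous.comp (continuous_const_smul _))).continuousOn
      have hint0 : IntegrableOn (fun x : Fin d → ℝ => F x) (z • Q) volume :=
        F.continuous.continuousOn.integrableOn_compact hzQcomp
      have hsplit : ∫ x in z • Q, h (x, z)
          = (∫ x in z • Q, z * F (z⁻¹ • x)) - ∫ x in z • Q, F x := by
        simp only [hh, hg1, hg0]
        exact integral_sub hint1 hint0
      have e2 : (∫ x in Q, z * F (z⁻¹ • (z • x))) = z * a := by
        have heq : EqOn (fun x : Fin d → ℝ => z * F (z⁻¹ • (z • x))) (fun x => z * F x) Q := by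
          intro x hx
          simp only
          rw [inv_smul_smul₀ hz.1.ne']
        rw [setIntegral_congr_fun hQmeas heq, integral_const_mul, ← ha]
      have s1 : (∫ x in z • Q, z * F (z⁻¹ • x)) = z ^ d * ∫ x in Q, z * F (z⁻¹ • (z • x)) :=
        scale_integral Q hQmeas _ hz.1
      have s0 : (∫ x in z • Q, F x) = z ^ d * ∫ x in Q, F (z • x) :=
        scale_integral Q hQmeas _ hz.1
      have ecz : c z = ∫ x in Q, F (z • x) := rfl
      rw [hsplit, s1, s0, e2, ecz, pow_succ]
      ring
    · rw [Set.indicator_of_notMem hz]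
      have : ∀ x, φ (x, z) = 0 := by
        intro x
        rw [hφ]
        apply Set.indicator_of_notMem
        intro hxB
        exact hz ⟨hxB.1, hxB.2.1⟩
      simp [this]
  have hJint : Integrable (fun z => ∫ x, φ (x, z)) (volume : Measure ℝ) :=
    hφint'.integral_prod_right
  have hint2 : ∫ q in B, h q = ∫ z in Ioc (0:ℝ) 1, (z ^ (d+1) * a - z ^ d * c z) := by
    rw [← integral_indicator hBmeas, ← hφ]
    calc ∫ q, φ q = ∫ q, φ q ∂((volume : Measure (Fin d → ℝ)).prod (volume : Measure ℝ)) := by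
          rw [← MeasureTheory.Measure.volume_eq_prod]
      _ = ∫ z, ∫ x, φ (x, z) := integral_prod_symm φ hφint'
      _ = ∫ z, (Ioc (0:ℝ) 1).indicator (fun z => z ^ (d+1) * a - z ^ d * c z) z := by
          rw [hinner]
      _ = ∫ z in Ioc (0:ℝ) 1, (z ^ (d+1) * a - z ^ d * c z) :=
          integral_indicator measurableSet_Ioc
  -- splitting the integral over (0,1]
  have hu_int : IntegrableOn (fun z : ℝ => z ^ (d+1) * a) (Ioc (0:ℝ) 1) volume :=
    (Continuous.integrableOn_Ioc ((continuous_pow (d+1)).mul continuous_const))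
  have hG_int : IntegrableOn (fun z : ℝ => z ^ (d+1) * a - z ^ d * c z)
      (Ioc (0:ℝ) 1) volume := by
    have := hJint
    rw [hinner] at this
    exact (integrable_indicator_iff measurableSet_Ioc).1 this
  have hv_int : IntegrableOn (fun z : ℝ => z ^ d * c z) (Ioc (0:ℝ) 1) volume := by
    have he : (fun z : ℝ => z ^ d * c z) =
        fun z => z ^ (d+1) * a - (z ^ (d+1) * a - z ^ d * c z) := by funext z; ring
    rw [he]
    exact hu_int.sub hG_int
  have hsplit2 : ∫ z in Ioc (0:ℝ) 1, (z ^ (d+1) * a - z ^ d * c z)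
      = (∫ z in Ioc (0:ℝ) 1, z ^ (d+1) * a) - ∫ z in Ioc (0:ℝ) 1, z ^ d * c z :=
    integral_sub hu_int hv_int
  have hfirst : (∫ z in Ioc (0:ℝ) 1, z ^ (d+1) * a) = (1 / ((d:ℝ) + 2)) * a := by
    rw [← intervalIntegral.integral_of_le zero_le_one,
      intervalIntegral.integral_mul_const, integral_pow]
    push_cast
    field_simp
    rw [one_pow, zero_pow (by omega)]; ring
  have hfa : (∫ x in Q, f x) = a := by
    rw [ha]
    exact (setIntegral_congr_fun hQmeas (fun x hx => (hF x (hQK hx)))).symm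
  have hsecond : (∫ z in (0:ℝ)..1, z ^ d * ∫ x in Q, f (z • x))
      = ∫ z in Ioc (0:ℝ) 1, z ^ d * c z := by
    rw [intervalIntegral.integral_of_le zero_le_one]
    apply setIntegral_congr_fun measurableSet_Ioc
    intro z hz
    show z ^ d * ∫ x in Q, f (z • x) = z ^ d * c z
    have : (∫ x in Q, f (z • x)) = c z := by
      rw [hc]
      exact (setIntegral_congr_fun hQmeas
        (fun x hx => (hF _ (hzK z hz.1.le hz.2 x hx)))).symm
    rw [this]
  rw [hS0, hS1, hLHS, hreal, hint2, hsplit2, hfirst, hfa, hsecond]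
end

section
/- Let d ≥ 1, let c ∈ ℝ^d with c > 0 componentwise, let v₀ ∈ ℝ^d with v₀ > 0 componentwise, let u > 0, let q ≥ 1 be a real number, and set f(x) := (cᵀx)^q and Q_u := v₀ + u·[0,1]^d. Then (1/(d+2))·∫_{Q_u} f(x) dx − ∫_0^1 z^d · (∫_{Q_u} f(z·x) dx) dz = ((q−1)/((d+2)(q+d+1))) · u^{q+d} · ∫_{[0,1]^d} (cᵀy + (cᵀv₀)/u)^q dy. -/
open MeasureTheory

/-- Change of variables for the box `v₀ + u·[0,1]^d`. -/
lemma box_change (d : ℕ) (u : ℝ) (hu : 0 < u) (v₀ : Fin d → ℝ)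
    (g : (Fin d → ℝ) → ℝ) :
    ∫ x in ((fun y : Fin d → ℝ => v₀ + u • y) '' Set.Icc (0 : Fin d → ℝ) 1), g x
      = u ^ d * ∫ y in Set.Icc (0 : Fin d → ℝ) 1, g (v₀ + u • y) := by
  have hder : ∀ x : Fin d → ℝ, HasFDerivAt (fun y : Fin d → ℝ => v₀ + u • y)
      (u • ContinuousLinearMap.id ℝ (Fin d → ℝ)) x := by
    intro x
    simpa using ((u • ContinuousLinearMap.id ℝ (Fin d → ℝ)).hasFDerivAt (x := x)).const_add v₀
  have hinj : Set.InjOn (fun y : Fin d → ℝ => v₀ + u • y) (Set.Icc 0 1) := by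
    intro a _ b _ h
    exact smul_right_injective (Fin d → ℝ) hu.ne' (add_left_cancel h)
  rw [integral_image_eq_integral_abs_det_fderiv_smul volume measurableSet_Icc
      (f' := fun _ => u • ContinuousLinearMap.id ℝ (Fin d → ℝ))
      (fun x _ => (hder x).hasFDerivWithinAt) hinj]
  have hdet : |((u • ContinuousLinearMap.id ℝ (Fin d → ℝ)).det)| = u ^ d := by
    simp [ContinuousLinearMap.det, LinearMap.det_smul, abs_of_nonneg (pow_nonneg hu.le _)]
  simp only [hdet, smul_eq_mul]
  rw [integral_const_mul]

/-- Cut-off amount for the power of a linear form `f(x) = (cᵀx)^q` on the box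
`Q_u = v₀ + u·[0,1]^d`. -/
theorem stmt_6 (d : ℕ) (hd : 1 ≤ d) (c v₀ : Fin d → ℝ)
    (hc : ∀ i, 0 < c i) (hv : ∀ i, 0 < v₀ i) (u : ℝ) (hu : 0 < u)
    (q : ℝ) (hq : 1 ≤ q)
    (f : (Fin d → ℝ) → ℝ) (hf : f = fun x => (∑ i, c i * x i) ^ q)
    (Qu : Set (Fin d → ℝ))
    (hQu : Qu = (fun y : Fin d → ℝ => v₀ + u • y) '' Set.Icc (0 : Fin d → ℝ) 1) :
    (1 / ((d : ℝ) + 2)) * (∫ x in Qu, f x)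
        - ∫ z in (0:ℝ)..1, z ^ d * ∫ x in Qu, f (z • x)
      = ((q - 1) / (((d : ℝ) + 2) * (q + (d : ℝ) + 1))) * u ^ (q + (d : ℝ)) *
          ∫ y in Set.Icc (0 : Fin d → ℝ) 1,
            (∑ i, c i * y i + (∑ i, c i * v₀ i) / u) ^ q := by
  have hdc : (0 : ℝ) ≤ d := Nat.cast_nonneg d
  -- basic positivity facts
  have hsum_pos : ∀ y : Fin d → ℝ, y ∈ Set.Icc (0 : Fin d → ℝ) 1 →
      0 ≤ ∑ i, c i * y i := by
    intro y hy
    exact Finset.sum_nonneg fun i _ => mul_nonneg (hc i).le (hy.1 i)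
  have hne : Nonempty (Fin d) := Fin.pos_iff_nonempty.mp (by omega)
  have ha_pos : 0 < (∑ i, c i * v₀ i) / u :=
    div_pos (Finset.sum_pos (fun i _ => mul_pos (hc i) (hv i)) Finset.univ_nonempty) hu
  have h0 : u * ((∑ i, c i * v₀ i) / u) = ∑ i, c i * v₀ i := by field_simp
  -- the sum identity
  have hsum : ∀ y : Fin d → ℝ,
      ∑ i, c i * (v₀ + u • y) i
        = u * (∑ i, c i * y i + (∑ i, c i * v₀ i) / u) := by
    intro y
    have h1 : ∑ i, c i * (v₀ + u • y) i
        = (∑ i, c i * v₀ i) + u * ∑ i, c i * y i := by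
      simp only [Pi.add_apply, Pi.smul_apply, smul_eq_mul, mul_add,
        Finset.sum_add_distrib, Finset.mul_sum]
      congr 1
      exact Finset.sum_congr rfl fun i _ => by ring
    rw [h1, mul_add, h0]; ring
  have hupow : (u : ℝ) ^ d * u ^ q = u ^ (q + (d : ℝ)) := by
    rw [← Real.rpow_natCast u d, ← Real.rpow_add hu]
    ring_nf
  -- Step 2: value of ∫_{Qu} f
  have step2 : (∫ x in Qu, f x)
      = u ^ (q + (d : ℝ)) *
        ∫ y in Set.Icc (0 : Fin d → ℝ) 1,
          (∑ i, c i * y i + (∑ i, c i * v₀ i) / u) ^ q := by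
    rw [hQu, hf, box_change d u hu v₀]
    have heq : ∀ y ∈ Set.Icc (0 : Fin d → ℝ) 1,
        (∑ i, c i * (v₀ + u • y) i) ^ q
          = u ^ q * (∑ i, c i * y i + (∑ i, c i * v₀ i) / u) ^ q := by
      intro y hy
      rw [hsum y, Real.mul_rpow hu.le (add_nonneg (hsum_pos y hy) ha_pos.le)]
    rw [setIntegral_congr_fun measurableSet_Icc heq, integral_const_mul, ← hupow]
    ring
  -- Step 3: inner integral for z ∈ [0,1]
  have step3 : ∀ z : ℝ, 0 ≤ z →
      (∫ x in Qu, f (z • x))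
        = z ^ q * (u ^ (q + (d : ℝ)) *
            ∫ y in Set.Icc (0 : Fin d → ℝ) 1,
              (∑ i, c i * y i + (∑ i, c i * v₀ i) / u) ^ q) := by
    intro z hz
    rw [hQu, hf, box_change d u hu v₀]
    have heq : ∀ y ∈ Set.Icc (0 : Fin d → ℝ) 1,
        (∑ i, c i * (z • (v₀ + u • y)) i) ^ q
          = z ^ q * (u ^ q * (∑ i, c i * y i + (∑ i, c i * v₀ i) / u) ^ q) := by
      intro y hy
      have h1 : ∑ i, c i * (z • (v₀ + u • y)) i
          = z * (u * (∑ i, c i * y i + (∑ i, c i * v₀ i) / u)) := by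
        have h2 : ∑ i, c i * (z • (v₀ + u • y)) i
            = z * ∑ i, c i * ((v₀ + u • y) i) := by
          rw [Finset.mul_sum]
          exact Finset.sum_congr rfl fun i _ => by simp [Pi.smul_apply]; ring
        rw [h2, hsum y]
      rw [h1, Real.mul_rpow hz (mul_nonneg hu.le (add_nonneg (hsum_pos y hy) ha_pos.le)),
        Real.mul_rpow hu.le (add_nonneg (hsum_pos y hy) ha_pos.le)]
    rw [setIntegral_congr_fun measurableSet_Icc heq, integral_const_mul, integral_const_mul,
      ← hupow]
    ring
  -- Step 4: the interval integral
  have hqd : q + (d : ℝ) ≠ 0 := by linarith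
  have step4 : (∫ z in (0:ℝ)..1, z ^ d * ∫ x in Qu, f (z • x))
      = (1 / (q + (d : ℝ) + 1)) * (u ^ (q + (d : ℝ)) *
          ∫ y in Set.Icc (0 : Fin d → ℝ) 1,
            (∑ i, c i * y i + (∑ i, c i * v₀ i) / u) ^ q) := by
    have hcongr : ∀ z ∈ Set.uIcc (0:ℝ) 1,
        z ^ d * ∫ x in Qu, f (z • x)
          = z ^ (q + (d : ℝ)) * (u ^ (q + (d : ℝ)) *
              ∫ y in Set.Icc (0 : Fin d → ℝ) 1,
                (∑ i, c i * y i + (∑ i, c i * v₀ i) / u) ^ q) := by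
      intro z hz
      rw [Set.uIcc_of_le (by norm_num : (0:ℝ) ≤ 1)] at hz
      rw [step3 z hz.1, Real.rpow_add' hz.1 hqd, Real.rpow_natCast]
      ring
    rw [intervalIntegral.integral_congr hcongr, intervalIntegral.integral_mul_const,
      integral_rpow (Or.inl (by linarith)), Real.one_rpow,
      Real.zero_rpow (by linarith)]
    ring
  rw [step2, step4]
  have h1 : ((d : ℝ) + 2) ≠ 0 := by positivity
  have h2 : (q + (d : ℝ) + 1) ≠ 0 := by linarith
  generalize (∫ y in Set.Icc (0 : Fin d → ℝ) 1, (∑ i, c i * y i + (∑ i, c i * v₀ i) / u) ^ q) = I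
  field_simp
  ring
end

section
/- Let n ≥ 1, let c ∈ ℝ^n, and let q be an integer with q > 1. Then ∫_{[0,1]^n} (cᵀy)^q dy = Σ_{α ∈ ℕ^n, α₁+⋯+αₙ = q} q! · c₁^{α₁}⋯cₙ^{αₙ} / ((α₁+1)!⋯(αₙ+1)!), where the sum ranges over all multi-indices α ∈ ℕ^n with |α| = q. -/
open MeasureTheory

lemma aux_integral_pow (a : ℕ) : ∫ t in Set.Icc (0:ℝ) 1, t ^ a = 1 / (a + 1 : ℝ) := by
  rw [MeasureTheory.integral_Icc_eq_integral_Ioc,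
    ← intervalIntegral.integral_of_le (zero_le_one), integral_pow]
  simp

lemma aux_integral_prod_pow (n : ℕ) (α : Fin n → ℕ) :
    (∫ y in Set.Icc (0 : Fin n → ℝ) 1, ∏ i, (y i) ^ (α i))
      = ∏ i, (1 / (α i + 1 : ℝ)) := by
  classical
  set g : Fin n → ℝ → ℝ := fun i => (Set.Icc (0:ℝ) 1).indicator (fun t => t ^ α i) with hg
  have hind : ∀ y : Fin n → ℝ,
      (Set.Icc (0 : Fin n → ℝ) 1).indicator (fun y => ∏ i, (y i) ^ (α i)) y
        = ∏ i, g i (y i) := by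
    intro y
    by_cases hy : y ∈ Set.Icc (0 : Fin n → ℝ) 1
    · rw [Set.indicator_of_mem hy]
      refine Finset.prod_congr rfl fun i _ => ?_
      have : y i ∈ Set.Icc (0:ℝ) 1 := ⟨hy.1 i, hy.2 i⟩
      rw [hg]; simp [Set.indicator_of_mem this]
    · rw [Set.indicator_of_notMem hy]
      have : ∃ i, y i ∉ Set.Icc (0:ℝ) 1 := by
        by_contra h
        push_neg at h
        exact hy ⟨fun i => (h i).1, fun i => (h i).2⟩
      obtain ⟨i, hi⟩ := this
      rw [eq_comm, Finset.prod_eq_zero (Finset.mem_univ i)]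
      rw [hg]; simp [Set.indicator_of_notMem hi]
  rw [← MeasureTheory.integral_indicator measurableSet_Icc]
  calc (∫ y, (Set.Icc (0 : Fin n → ℝ) 1).indicator (fun y => ∏ i, (y i) ^ (α i)) y)
      = ∫ y : Fin n → ℝ, ∏ i, g i (y i) := by
        exact integral_congr_ae (Filter.Eventually.of_forall hind)
    _ = ∏ i, ∫ t : ℝ, g i t := MeasureTheory.integral_fintype_prod_eq_prod g
    _ = ∏ i, (1 / (α i + 1 : ℝ)) := by
        refine Finset.prod_congr rfl fun i _ => ?_
        rw [hg]
        simp only [MeasureTheory.integral_indicator measurableSet_Icc]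
        exact aux_integral_pow (α i)

/-- Multinomial formula for the integral of `(cᵀy)^q` over the unit hypercube. -/
theorem stmt_7 (n : ℕ) (hn : 1 ≤ n) (c : Fin n → ℝ) (q : ℕ) (hq : 1 < q) :
    ∫ y in Set.Icc (0 : Fin n → ℝ) 1, (∑ i, c i * y i) ^ q
      = ∑ α ∈ Finset.Nat.antidiagonalTuple n q,
          (q.factorial : ℝ) * (∏ i, c i ^ α i) / ∏ i, ((α i + 1).factorial : ℝ) := by
  classical
  have hset : Finset.piAntidiag (Finset.univ : Finset (Fin n)) q
      = Finset.Nat.antidiagonalTuple n q := by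
    ext α
    simp [Finset.mem_piAntidiag, Finset.Nat.mem_antidiagonalTuple]
  have hexpand : ∀ y : Fin n → ℝ, (∑ i, c i * y i) ^ q
      = ∑ k ∈ Finset.piAntidiag Finset.univ q,
          (Nat.multinomial Finset.univ k : ℝ) * ∏ i, (c i * y i) ^ (k i) :=
    fun y => Finset.sum_pow_eq_sum_piAntidiag Finset.univ (fun i => c i * y i) q
  rw [integral_congr_ae (Filter.Eventually.of_forall fun y => hexpand y)]
  rw [MeasureTheory.integral_finset_sum _ (fun k _ => by
    apply Continuous.integrableOn_Icc
    continuity)]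
  rw [← hset]
  refine Finset.sum_congr rfl fun α hα => ?_
  rw [Finset.mem_piAntidiag] at hα
  have hαsum : ∑ i, α i = q := hα.1
  have hterm : (∫ y in Set.Icc (0 : Fin n → ℝ) 1, ∏ i, (c i * y i) ^ (α i))
      = (∏ i, c i ^ α i) * ∏ i, (1 / (α i + 1 : ℝ)) := by
    have : ∀ y : Fin n → ℝ, ∏ i, (c i * y i) ^ (α i)
        = (∏ i, c i ^ α i) * ∏ i, (y i) ^ (α i) := by
      intro y
      rw [← Finset.prod_mul_distrib]
      exact Finset.prod_congr rfl fun i _ => mul_pow _ _ _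
    rw [integral_congr_ae (Filter.Eventually.of_forall this),
      MeasureTheory.integral_const_mul, aux_integral_prod_pow]
  rw [MeasureTheory.integral_const_mul, hterm]
  -- arithmetic with multinomial coefficient
  have hspec : ((∏ i, (α i).factorial : ℕ) : ℝ) * (Nat.multinomial Finset.univ α : ℝ)
      = (q.factorial : ℝ) := by
    rw [← Nat.cast_mul, Nat.multinomial_spec, hαsum]
  have hfac : (∏ i, ((α i + 1).factorial : ℝ))
      = (∏ i, ((α i : ℝ) + 1)) * ∏ i, ((α i).factorial : ℝ) := by
    rw [← Finset.prod_mul_distrib]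
    refine Finset.prod_congr rfl fun i _ => ?_
    rw [Nat.factorial_succ]
    push_cast
    ring
  have h1 : (∏ i, ((α i).factorial : ℝ)) ≠ 0 :=
    Finset.prod_ne_zero_iff.mpr fun i _ => Nat.cast_ne_zero.mpr (Nat.factorial_ne_zero _)
  have h2 : (∏ i, ((α i : ℝ) + 1)) ≠ 0 :=
    Finset.prod_ne_zero_iff.mpr fun i _ => by positivity
  have hp : ((∏ i, (α i).factorial : ℕ) : ℝ) = ∏ i, ((α i).factorial : ℝ) := by push_cast; rfl
  rw [hp] at hspec
  have hinv : (∏ i, (1 / (α i + 1 : ℝ))) = (∏ i, ((α i : ℝ) + 1))⁻¹ := by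
    rw [← Finset.prod_inv_distrib]
    exact Finset.prod_congr rfl fun i _ => one_div _
  rw [hfac, hinv]
  field_simp
  rw [← hspec]
  ring
end

section
/- Let n ≥ 1, let c ∈ ℝ^n satisfy the genericity condition that Σ_{j∈S} c_j ≠ 0 for every nonempty subset S ⊆ {1,…,n}, and let q be an integer with q > 1. Define w₀ := 0 ∈ ℝ^n and w_j := e_{n+1−j} + e_{n+2−j} + ⋯ + e_n for j = 1,…,n (where e_ℓ is the ℓ-th standard unit vector), and for a permutation σ of {1,…,n} let c_σ := (c_{σ(1)},…,c_{σ(n)}). Then ∫_{[0,1]^n} (cᵀy)^q dy = Σ_{σ} (q!/(q+n)!) · Σ_{j=0}^n (c_σᵀ w_j)^{q+n} / ∏_{k≠j} (c_σᵀ(w_j − w_k)), where the outer sum is over all permutations σ of {1,…,n}. -/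
open MeasureTheory

section aux
open Finset

section helpers
variable {n : ℕ}

lemma shift_sum (c : Fin (n+1) → ℝ) (p : Fin (n+1)) (τ : Equiv.Perm (Fin n)) (k : ℕ) :
    ∑ i ∈ Finset.univ.filter (fun i : Fin (n+1) => k + 1 ≤ i.val),
        c (Equiv.Perm.decomposeFin.symm (p, τ) i)
      = ∑ i ∈ Finset.univ.filter (fun i : Fin n => k ≤ i.val),
          (fun i : Fin n => c (Equiv.swap 0 p i.succ)) (τ i) := by
  rw [Finset.sum_filter, Finset.sum_filter, Fin.sum_univ_succ]
  simp [Equiv.Perm.decomposeFin_symm_apply_succ, Fin.succ_le_succ_iff, Nat.succ_le_succ_iff]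

lemma emb_inj (p : Fin (n+1)) :
    Function.Injective (fun i : Fin n => Equiv.swap 0 p i.succ) :=
  fun a b hab => Fin.succ_injective _ ((Equiv.swap 0 p).injective hab)

lemma hgen_step (c : Fin (n+1) → ℝ)
    (hgen : ∀ S : Finset (Fin (n+1)), S.Nonempty → ∑ j ∈ S, c j ≠ 0) (p : Fin (n+1)) :
    ∀ S : Finset (Fin n), S.Nonempty →
      ∑ j ∈ S, (fun i : Fin n => c (Equiv.swap 0 p i.succ)) j ≠ 0 := by
  intro S hS
  rw [← Finset.sum_image (fun a _ b _ h => emb_inj p h)]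
  exact hgen _ (hS.image _)

lemma hprod_step (c : Fin (n+1) → ℝ) (p : Fin (n+1)) (hc0 : c p ≠ 0) :
    ∏ i : Fin n, c (Equiv.swap 0 p i.succ) = (∏ i, c i) / c p := by
  have h : ∏ j : Fin (n+1), c (Equiv.swap 0 p j) = ∏ i, c i :=
    Equiv.prod_comp (Equiv.swap 0 p) c
  rw [Fin.prod_univ_succ] at h
  field_simp at h ⊢
  rw [← h, Equiv.swap_apply_left]; ring

lemma map_univ_emb (p : Fin (n+1)) :
    (Finset.univ : Finset (Fin n)).map ⟨fun i => Equiv.swap 0 p i.succ, emb_inj p⟩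
      = Finset.univ.erase p := by
  apply Finset.eq_of_subset_of_card_le
  · intro j hj
    simp only [Finset.mem_map, Finset.mem_univ, true_and, Function.Embedding.coeFn_mk] at hj
    obtain ⟨i, hi⟩ := hj
    refine Finset.mem_erase.2 ⟨?_, Finset.mem_univ _⟩
    intro hjp
    rw [hjp] at hi
    have h2 : i.succ = (0 : Fin (n+1)) := by
      apply (Equiv.swap 0 p).injective
      rw [hi, Equiv.swap_apply_left]
    exact Fin.succ_ne_zero i h2
  · simp [Finset.card_erase_of_mem]

lemma image_univ_emb {n : ℕ} (p : Fin (n+1)) :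
    (Finset.univ : Finset (Fin n)).image (fun i => Equiv.swap 0 p i.succ)
      = Finset.univ.erase p := by
  have h := map_univ_emb p
  rw [Finset.map_eq_image] at h
  simpa using h

lemma powerset_image_emb {n : ℕ} (p : Fin (n+1)) :
    ((Finset.univ : Finset (Fin n)).powerset).image
        (fun S => S.image (fun i => Equiv.swap 0 p i.succ))
      = (Finset.univ.erase p).powerset := by
  ext T
  simp only [Finset.mem_image, Finset.mem_powerset]
  constructor
  · rintro ⟨S, -, rfl⟩
    rw [← image_univ_emb p]
    exact Finset.image_subset_image (Finset.subset_univ S)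
  · intro hT
    rw [← image_univ_emb p] at hT
    obtain ⟨S, _, rfl⟩ := Finset.subset_image_iff.1 hT
    exact ⟨S, Finset.subset_univ S, rfl⟩

end helpers

lemma lemL : ∀ (n : ℕ) (c : Fin n → ℝ),
    (∀ S : Finset (Fin n), S.Nonempty → ∑ j ∈ S, c j ≠ 0) →
    ∑ σ : Equiv.Perm (Fin n),
      (∏ k ∈ Finset.range n,
        (∑ i ∈ Finset.univ.filter (fun i : Fin n => k ≤ i.val), c (σ i)))⁻¹
    = (∏ i, c i)⁻¹ := by
  intro n
  induction n with
  | zero => intro c _; simp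
  | succ n IH =>
    intro c hgen
    have hc0 : ∀ i, c i ≠ 0 := fun i => by
      simpa using hgen {i} ⟨i, Finset.mem_singleton_self i⟩
    have htot : ∑ i, c i ≠ 0 := hgen univ ⟨0, Finset.mem_univ 0⟩
    rw [← Equiv.sum_comp (Equiv.Perm.decomposeFin.symm : _ ≃ Equiv.Perm (Fin (n+1)))]
    rw [Fintype.sum_prod_type]
    have key : ∀ (p : Fin (n+1)) (τ : Equiv.Perm (Fin n)),
        (∏ k ∈ Finset.range (n+1),
          (∑ i ∈ Finset.univ.filter (fun i : Fin (n+1) => k ≤ i.val),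
            c (Equiv.Perm.decomposeFin.symm (p, τ) i)))
        = (∏ k ∈ Finset.range n,
            (∑ i ∈ Finset.univ.filter (fun i : Fin n => k ≤ i.val),
              (fun i : Fin n => c (Equiv.swap 0 p i.succ)) (τ i))) * (∑ i, c i) := by
      intro p τ
      rw [Finset.prod_range_succ']
      congr 1
      · exact Finset.prod_congr rfl fun k _ => shift_sum c p τ k
      · have h0 : Finset.univ.filter (fun i : Fin (n+1) => 0 ≤ i.val) = Finset.univ := by
          simp
        rw [h0]
        exact Equiv.sum_comp _ c
    calc ∑ p : Fin (n+1), ∑ τ : Equiv.Perm (Fin n),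
          (∏ k ∈ Finset.range (n+1),
            (∑ i ∈ Finset.univ.filter (fun i : Fin (n+1) => k ≤ i.val),
              c (Equiv.Perm.decomposeFin.symm (p, τ) i)))⁻¹
        = ∑ p : Fin (n+1), ((∑ i, c i)⁻¹ * (∏ i : Fin n, c (Equiv.swap 0 p i.succ))⁻¹) := by
          refine Finset.sum_congr rfl fun p _ => ?_
          simp only [key p, mul_inv_rev]
          rw [← Finset.mul_sum, IH (fun i : Fin n => c (Equiv.swap 0 p i.succ)) (hgen_step c hgen p)]
      _ = (∏ i, c i)⁻¹ := by
          have : ∀ p : Fin (n+1), ∏ i : Fin n, c (Equiv.swap 0 p i.succ) = (∏ i, c i) / c p :=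
            fun p => hprod_step c p (hc0 p)
          simp only [this, inv_div]
          rw [← Finset.mul_sum, ← Finset.sum_div]
          field_simp

lemma key_alg : ∀ (n : ℕ) (c : Fin n → ℝ),
    (∀ S : Finset (Fin n), S.Nonempty → ∑ j ∈ S, c j ≠ 0) → ∀ (f : ℝ → ℝ),
    ∑ σ : Equiv.Perm (Fin n), ∑ j ∈ Finset.range (n + 1),
        f (∑ i ∈ Finset.univ.filter (fun i : Fin n => n - j ≤ i.val), c (σ i)) /
          ∏ k ∈ (Finset.range (n + 1)).erase j,
            ((∑ i ∈ Finset.univ.filter (fun i : Fin n => n - j ≤ i.val), c (σ i)) -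
              ∑ i ∈ Finset.univ.filter (fun i : Fin n => n - k ≤ i.val), c (σ i))
      = ∑ S ∈ (Finset.univ : Finset (Fin n)).powerset,
          (-1 : ℝ) ^ (n - S.card) * f (∑ i ∈ S, c i) / ∏ i, c i := by
  intro n
  induction n with
  | zero =>
    intro c _ f
    simp [Finset.sum_range_succ]
  | succ n IH =>
    intro c hgen f
    have hc0 : ∀ i, c i ≠ 0 := fun i => by
      simpa using hgen {i} ⟨i, Finset.mem_singleton_self i⟩
    have hprodne : ∏ i, c i ≠ 0 := Finset.prod_ne_zero_iff.2 fun i _ => hc0 i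
    have htot : ∑ i, c i ≠ 0 := hgen univ ⟨0, Finset.mem_univ 0⟩
    -- the j = n+1 term (last vertex = all-ones, value = total sum)
    have hB : ∑ σ : Equiv.Perm (Fin (n+1)),
        f (∑ i ∈ Finset.univ.filter (fun i : Fin (n+1) => n + 1 - (n+1) ≤ i.val), c (σ i)) /
          ∏ k ∈ (Finset.range (n + 2)).erase (n+1),
            ((∑ i ∈ Finset.univ.filter (fun i : Fin (n+1) => n + 1 - (n+1) ≤ i.val), c (σ i)) -
              ∑ i ∈ Finset.univ.filter (fun i : Fin (n+1) => n + 1 - k ≤ i.val), c (σ i))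
        = f (∑ i, c i) / ∏ i, c i := by
      have hfull : Finset.univ.filter (fun i : Fin (n+1) => n + 1 - (n+1) ≤ i.val)
          = (Finset.univ : Finset (Fin (n+1))) := by simp
      have herase : (Finset.range (n + 2)).erase (n+1) = Finset.range (n+1) := by
        rw [Finset.range_add_one, Finset.erase_insert (by simp)]
      have hstep2 : ∀ σ : Equiv.Perm (Fin (n+1)), ∀ k ∈ Finset.range (n+1),
          (∑ i, c i) - ∑ i ∈ Finset.univ.filter (fun i : Fin (n+1) => n + 1 - k ≤ i.val),
              c ((σ * (Fin.revPerm : Equiv.Perm (Fin (n+1)))) i)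
            = ∑ i ∈ Finset.univ.filter (fun i : Fin (n+1) => k ≤ i.val), c (σ i) := by
        intro σ k hk
        have hk' : k ≤ n := Nat.lt_succ_iff.mp (Finset.mem_range.mp hk)
        have h1 : (∑ i ∈ Finset.univ.filter (fun i : Fin (n+1) => n + 1 - k ≤ i.val),
              c ((σ * (Fin.revPerm : Equiv.Perm (Fin (n+1)))) i))
            + ∑ i ∈ Finset.univ.filter (fun i : Fin (n+1) => ¬ (n + 1 - k ≤ i.val)),
              c ((σ * (Fin.revPerm : Equiv.Perm (Fin (n+1)))) i)
            = ∑ i, c i := by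
          rw [Finset.sum_filter_add_sum_filter_not]
          exact Equiv.sum_comp _ c
        have h2 : ∑ i ∈ Finset.univ.filter (fun i : Fin (n+1) => ¬ (n + 1 - k ≤ i.val)),
              c ((σ * (Fin.revPerm : Equiv.Perm (Fin (n+1)))) i)
            = ∑ i ∈ Finset.univ.filter (fun i : Fin (n+1) => k ≤ i.val), c (σ i) := by
          rw [Finset.sum_filter, Finset.sum_filter,
            ← Equiv.sum_comp (Fin.revPerm : Equiv.Perm (Fin (n+1)))
              (fun i : Fin (n+1) => if k ≤ i.val then c (σ i) else 0)]
          refine Finset.sum_congr rfl fun i _ => ?_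
          have hi : i.val ≤ n := Fin.is_le i
          have hcond : (¬ (n + 1 - k ≤ i.val)) ↔ (k ≤ ((Fin.revPerm : Equiv.Perm (Fin (n+1))) i).val) := by
            simp only [Fin.revPerm_apply, Fin.val_rev]
            omega
          simp only [Equiv.Perm.mul_apply]
          by_cases h : n + 1 - k ≤ i.val
          · rw [if_neg (by tauto), if_neg (by tauto)]
          · rw [if_pos h, if_pos (hcond.mp h)]
        linarith
      simp only [hfull, herase]
      rw [← Equiv.sum_comp (Equiv.mulRight (Fin.revPerm : Equiv.Perm (Fin (n+1))))
        (fun σ : Equiv.Perm (Fin (n+1)) =>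
          f (∑ i ∈ (Finset.univ : Finset (Fin (n+1))), c (σ i)) /
            ∏ k ∈ Finset.range (n+1),
              ((∑ i ∈ (Finset.univ : Finset (Fin (n+1))), c (σ i)) -
                ∑ i ∈ Finset.univ.filter (fun i : Fin (n+1) => n + 1 - k ≤ i.val), c (σ i)))]
      have hmain : ∀ σ : Equiv.Perm (Fin (n+1)),
          f (∑ i ∈ (Finset.univ : Finset (Fin (n+1))),
              c ((Equiv.mulRight (Fin.revPerm : Equiv.Perm (Fin (n+1))) σ) i)) /
            ∏ k ∈ Finset.range (n+1),
              ((∑ i ∈ (Finset.univ : Finset (Fin (n+1))),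
                  c ((Equiv.mulRight (Fin.revPerm : Equiv.Perm (Fin (n+1))) σ) i)) -
                ∑ i ∈ Finset.univ.filter (fun i : Fin (n+1) => n + 1 - k ≤ i.val),
                  c ((Equiv.mulRight (Fin.revPerm : Equiv.Perm (Fin (n+1))) σ) i))
          = f (∑ i, c i) * (∏ k ∈ Finset.range (n+1),
              (∑ i ∈ Finset.univ.filter (fun i : Fin (n+1) => k ≤ i.val), c (σ i)))⁻¹ := by
        intro σ
        rw [div_eq_mul_inv]
        simp only [Equiv.coe_mulRight]
        rw [show (∑ i ∈ (Finset.univ : Finset (Fin (n+1))),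
            c ((σ * (Fin.revPerm : Equiv.Perm (Fin (n+1)))) i)) = ∑ i, c i from Equiv.sum_comp _ c]
        congr 2
        exact Finset.prod_congr rfl (hstep2 σ)
      simp only [hmain]
      rw [← Finset.mul_sum, lemL (n+1) c hgen, div_eq_mul_inv]
    -- the j ≤ n terms
    have hA : ∑ σ : Equiv.Perm (Fin (n+1)), ∑ j ∈ Finset.range (n + 1),
        f (∑ i ∈ Finset.univ.filter (fun i : Fin (n+1) => n + 1 - j ≤ i.val), c (σ i)) /
          ∏ k ∈ (Finset.range (n + 2)).erase j,
            ((∑ i ∈ Finset.univ.filter (fun i : Fin (n+1) => n + 1 - j ≤ i.val), c (σ i)) -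
              ∑ i ∈ Finset.univ.filter (fun i : Fin (n+1) => n + 1 - k ≤ i.val), c (σ i))
        = ∑ S ∈ ((Finset.univ : Finset (Fin (n+1))).powerset).erase Finset.univ,
            (-1 : ℝ) ^ (n + 1 - S.card) * f (∑ i ∈ S, c i) / ∏ i, c i := by
      have hfull : Finset.univ.filter (fun i : Fin (n+1) => n + 1 - (n+1) ≤ i.val)
          = (Finset.univ : Finset (Fin (n+1))) := by simp
      calc ∑ σ : Equiv.Perm (Fin (n+1)), ∑ j ∈ Finset.range (n + 1),
            f (∑ i ∈ Finset.univ.filter (fun i : Fin (n+1) => n + 1 - j ≤ i.val), c (σ i)) /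
              ∏ k ∈ (Finset.range (n + 2)).erase j,
                ((∑ i ∈ Finset.univ.filter (fun i : Fin (n+1) => n + 1 - j ≤ i.val), c (σ i)) -
                  ∑ i ∈ Finset.univ.filter (fun i : Fin (n+1) => n + 1 - k ≤ i.val), c (σ i))
          = ∑ σ : Equiv.Perm (Fin (n+1)), ∑ j ∈ Finset.range (n + 1),
            (f (∑ i ∈ Finset.univ.filter (fun i : Fin (n+1) => n + 1 - j ≤ i.val), c (σ i)) /
              ((∑ i ∈ Finset.univ.filter (fun i : Fin (n+1) => n + 1 - j ≤ i.val), c (σ i)) - ∑ i, c i)) /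
              ∏ k ∈ (Finset.range (n + 1)).erase j,
                ((∑ i ∈ Finset.univ.filter (fun i : Fin (n+1) => n + 1 - j ≤ i.val), c (σ i)) -
                  ∑ i ∈ Finset.univ.filter (fun i : Fin (n+1) => n + 1 - k ≤ i.val), c (σ i)) := by
            refine Finset.sum_congr rfl fun σ _ => Finset.sum_congr rfl fun j hj => ?_
            have hj' : j < n + 1 := Finset.mem_range.mp hj
            have hins : (Finset.range (n + 2)).erase j
                = insert (n+1) ((Finset.range (n + 1)).erase j) := by
              ext x
              simp only [Finset.mem_erase, Finset.mem_insert, Finset.mem_range]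
              omega
            rw [hins, Finset.prod_insert (by simp), hfull,
              show (∑ i ∈ (Finset.univ : Finset (Fin (n+1))), c (σ i)) = ∑ i, c i from
                Equiv.sum_comp σ c, ← div_div]
        _ = ∑ p : Fin (n+1), ∑ τ : Equiv.Perm (Fin n), ∑ j ∈ Finset.range (n + 1),
            (f (∑ i ∈ Finset.univ.filter (fun i : Fin n => n - j ≤ i.val),
                c (Equiv.swap 0 p (τ i).succ)) /
              ((∑ i ∈ Finset.univ.filter (fun i : Fin n => n - j ≤ i.val),
                c (Equiv.swap 0 p (τ i).succ)) - ∑ i, c i)) /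
              ∏ k ∈ (Finset.range (n + 1)).erase j,
                ((∑ i ∈ Finset.univ.filter (fun i : Fin n => n - j ≤ i.val),
                  c (Equiv.swap 0 p (τ i).succ)) -
                  ∑ i ∈ Finset.univ.filter (fun i : Fin n => n - k ≤ i.val),
                    c (Equiv.swap 0 p (τ i).succ)) := by
            rw [← Equiv.sum_comp (Equiv.Perm.decomposeFin.symm :
                Fin (n+1) × Equiv.Perm (Fin n) ≃ Equiv.Perm (Fin (n+1)))
              (fun σ : Equiv.Perm (Fin (n+1)) => ∑ j ∈ Finset.range (n + 1),
                (f (∑ i ∈ Finset.univ.filter (fun i : Fin (n+1) => n + 1 - j ≤ i.val), c (σ i)) /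
                  ((∑ i ∈ Finset.univ.filter (fun i : Fin (n+1) => n + 1 - j ≤ i.val), c (σ i)) - ∑ i, c i)) /
                  ∏ k ∈ (Finset.range (n + 1)).erase j,
                    ((∑ i ∈ Finset.univ.filter (fun i : Fin (n+1) => n + 1 - j ≤ i.val), c (σ i)) -
                      ∑ i ∈ Finset.univ.filter (fun i : Fin (n+1) => n + 1 - k ≤ i.val), c (σ i))),
              Fintype.sum_prod_type]
            refine Finset.sum_congr rfl fun p _ => Finset.sum_congr rfl fun τ _ => ?_
            have hs : ∀ j, j ≤ n →
                ∑ i ∈ Finset.univ.filter (fun i : Fin (n+1) => n + 1 - j ≤ i.val),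
                    c (Equiv.Perm.decomposeFin.symm (p, τ) i)
                  = ∑ i ∈ Finset.univ.filter (fun i : Fin n => n - j ≤ i.val),
                      c (Equiv.swap 0 p (τ i).succ) := by
              intro j hj
              have h1 : n + 1 - j = (n - j) + 1 := by omega
              rw [h1]
              exact shift_sum c p τ (n - j)
            refine Finset.sum_congr rfl fun j hj => ?_
            have hj' : j ≤ n := Nat.lt_succ_iff.mp (Finset.mem_range.mp hj)
            rw [hs j hj']
            congr 1
            refine Finset.prod_congr rfl fun k hk => ?_
            have hk' : k ≤ n := Nat.lt_succ_iff.mp (Finset.mem_range.mp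
              (Finset.mem_of_mem_erase hk))
            rw [hs k hk']
        _ = ∑ p : Fin (n+1), ∑ S' ∈ (Finset.univ : Finset (Fin n)).powerset,
            (-1 : ℝ) ^ (n - S'.card) *
              (f (∑ i ∈ S', c (Equiv.swap 0 p i.succ)) /
                ((∑ i ∈ S', c (Equiv.swap 0 p i.succ)) - ∑ i, c i)) /
              ∏ i : Fin n, c (Equiv.swap 0 p i.succ) := by
            exact Finset.sum_congr rfl fun p _ =>
              IH (fun i : Fin n => c (Equiv.swap 0 p i.succ)) (hgen_step c hgen p)
                (fun x => f x / (x - ∑ i, c i))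
        _ = ∑ p : Fin (n+1), ∑ T ∈ (Finset.univ.erase p).powerset,
            (-1 : ℝ) ^ (n - T.card) * f (∑ i ∈ T, c i) /
              ((∑ i ∈ T, c i) - ∑ i, c i) * c p / ∏ i, c i := by
            refine Finset.sum_congr rfl fun p _ => ?_
            rw [← powerset_image_emb p,
              Finset.sum_image (fun S1 _ S2 _ h => Finset.image_injective (emb_inj p) h)]
            refine Finset.sum_congr rfl fun S' _ => ?_
            rw [Finset.sum_image (fun i _ j _ h => emb_inj p h),
              Finset.card_image_of_injective _ (emb_inj p),
              hprod_step c p (hc0 p), div_div_eq_mul_div]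
            ring
        _ = ∑ T ∈ (Finset.univ : Finset (Fin (n+1))).powerset,
            (-1 : ℝ) ^ (n - T.card) * f (∑ i ∈ T, c i) /
              ((∑ i ∈ T, c i) - ∑ i, c i) *
              (∑ p ∈ Finset.univ.filter (fun p => p ∉ T), c p) / ∏ i, c i := by
            have hpows : ∀ p : Fin (n+1), (Finset.univ.erase p).powerset
                = Finset.univ.powerset.filter (fun T : Finset (Fin (n+1)) => p ∉ T) := by
              intro p
              ext T
              simp [Finset.subset_erase]
            simp only [hpows, Finset.sum_filter]
            rw [Finset.sum_comm]
            refine Finset.sum_congr rfl fun T _ => ?_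
            rw [← Finset.sum_filter, ← Finset.sum_div, ← Finset.mul_sum]
            rw [Finset.sum_filter]
        _ = ∑ S ∈ ((Finset.univ : Finset (Fin (n+1))).powerset).erase Finset.univ,
            (-1 : ℝ) ^ (n + 1 - S.card) * f (∑ i ∈ S, c i) / ∏ i, c i := by
            rw [← Finset.sum_erase_add _ _ (Finset.mem_powerset_self
              (Finset.univ : Finset (Fin (n+1))))]
            have huniv0 : (Finset.univ.filter (fun p : Fin (n+1) => p ∉ (Finset.univ : Finset (Fin (n+1))))) = ∅ := by
              simp
            rw [huniv0]
            simp only [Finset.sum_empty, mul_zero, zero_div, add_zero]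
            refine Finset.sum_congr rfl fun T hT => ?_
            obtain ⟨hTne, hTpow⟩ := Finset.mem_erase.mp hT
            have hss : T ⊂ Finset.univ :=
              (Finset.ssubset_iff_subset_ne).2 ⟨Finset.mem_powerset.mp hTpow, hTne⟩
            obtain ⟨p0, hp0u, hp0T⟩ := Finset.exists_of_ssubset hss
            have hex : (Finset.univ.filter (fun p : Fin (n+1) => p ∉ T)).Nonempty :=
              ⟨p0, Finset.mem_filter.2 ⟨hp0u, hp0T⟩⟩
            have hsum : ∑ p ∈ Finset.univ.filter (fun p : Fin (n+1) => p ∉ T), c p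
                = (∑ i, c i) - ∑ i ∈ T, c i := by
              have h1 := Finset.sum_filter_add_sum_filter_not
                (Finset.univ : Finset (Fin (n+1))) (fun p => p ∈ T) c
              have h2 : Finset.univ.filter (fun p : Fin (n+1) => p ∈ T) = T := by
                ext x; simp
              rw [h2] at h1
              linarith
            have hne : (∑ i ∈ T, c i) - ∑ i, c i ≠ 0 := by
              have := hgen _ hex
              rw [hsum] at this
              intro h
              apply this
              linarith
            have hcard : T.card ≤ n := by
              have h3 := Finset.card_lt_card hss
              simpa using Nat.lt_succ_iff.mp (by simpa using h3)
            rw [hsum, show n + 1 - T.card = (n - T.card) + 1 from by omega, pow_succ]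
            field_simp
            ring

    calc ∑ σ : Equiv.Perm (Fin (n+1)), ∑ j ∈ Finset.range (n + 2),
          f (∑ i ∈ Finset.univ.filter (fun i : Fin (n+1) => n + 1 - j ≤ i.val), c (σ i)) /
            ∏ k ∈ (Finset.range (n + 2)).erase j,
              ((∑ i ∈ Finset.univ.filter (fun i : Fin (n+1) => n + 1 - j ≤ i.val), c (σ i)) -
                ∑ i ∈ Finset.univ.filter (fun i : Fin (n+1) => n + 1 - k ≤ i.val), c (σ i))
        = (∑ σ : Equiv.Perm (Fin (n+1)), ∑ j ∈ Finset.range (n + 1),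
            f (∑ i ∈ Finset.univ.filter (fun i : Fin (n+1) => n + 1 - j ≤ i.val), c (σ i)) /
              ∏ k ∈ (Finset.range (n + 2)).erase j,
                ((∑ i ∈ Finset.univ.filter (fun i : Fin (n+1) => n + 1 - j ≤ i.val), c (σ i)) -
                  ∑ i ∈ Finset.univ.filter (fun i : Fin (n+1) => n + 1 - k ≤ i.val), c (σ i)))
          + ∑ σ : Equiv.Perm (Fin (n+1)),
            f (∑ i ∈ Finset.univ.filter (fun i : Fin (n+1) => n + 1 - (n+1) ≤ i.val), c (σ i)) /
              ∏ k ∈ (Finset.range (n + 2)).erase (n+1),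
                ((∑ i ∈ Finset.univ.filter (fun i : Fin (n+1) => n + 1 - (n+1) ≤ i.val), c (σ i)) -
                  ∑ i ∈ Finset.univ.filter (fun i : Fin (n+1) => n + 1 - k ≤ i.val), c (σ i)) := by
          rw [← Finset.sum_add_distrib]
          exact Finset.sum_congr rfl fun σ _ => Finset.sum_range_succ _ _
      _ = ∑ S ∈ (Finset.univ : Finset (Fin (n+1))).powerset,
            (-1 : ℝ) ^ (n + 1 - S.card) * f (∑ i ∈ S, c i) / ∏ i, c i := by
          rw [hA, hB]
          rw [← Finset.sum_erase_add _ _ (Finset.mem_powerset_self _)]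
          congr 1
          simp

lemma one_dim (a b : ℝ) (hb : b ≠ 0) (m : ℕ) :
    ∫ x in Set.Icc (0:ℝ) 1, (a + b * x) ^ m
      = ((a + b) ^ (m+1) - a ^ (m+1)) / (b * (m+1)) := by
  rw [MeasureTheory.integral_Icc_eq_integral_Ioc,
    ← intervalIntegral.integral_of_le (zero_le_one (α := ℝ))]
  have h1 : ∫ x in (0:ℝ)..1, (a + b * x) ^ m = ∫ x in (0:ℝ)..1, (b * x + a) ^ m := by
    apply intervalIntegral.integral_congr
    intro x _
    ring_nf
  rw [h1]
  have h := intervalIntegral.integral_comp_mul_add (a := 0) (b := 1)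
    (fun u : ℝ => u ^ m) hb a
  simp only [mul_zero, zero_add, mul_one] at h
  rw [h, integral_pow]
  have hm : ((m : ℝ) + 1) ≠ 0 := by positivity
  simp only [smul_eq_mul]
  push_cast
  field_simp
  ring

lemma powerset_image_inj {α β : Type*} [DecidableEq α] [DecidableEq β] {f : α → β}
    (hf : Function.Injective f) (s : Finset α) :
    (s.image f).powerset = s.powerset.image (fun S => S.image f) := by
  ext T
  simp only [Finset.mem_powerset, Finset.mem_image]
  constructor
  · intro hT
    obtain ⟨S, hS, rfl⟩ := Finset.subset_image_iff.1 hT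
    exact ⟨S, hS, rfl⟩
  · rintro ⟨S, hS, rfl⟩
    exact Finset.image_subset_image hS

lemma powerset_succ_split {n : ℕ} (g : Finset (Fin (n+1)) → ℝ) :
    ∑ S ∈ (Finset.univ : Finset (Fin (n+1))).powerset, g S
      = ∑ S' ∈ (Finset.univ : Finset (Fin n)).powerset,
          (g (S'.image Fin.succ) + g (insert 0 (S'.image Fin.succ))) := by
  have h0 : (0 : Fin (n+1)) ∉ (Finset.univ : Finset (Fin n)).image Fin.succ := by
    simp [Fin.succ_ne_zero]
  have huniv : (Finset.univ : Finset (Fin (n+1)))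
      = insert 0 ((Finset.univ : Finset (Fin n)).image Fin.succ) := by
    ext i
    simp only [Finset.mem_univ, Finset.mem_insert, Finset.mem_image, true_and, true_iff]
    rcases Fin.eq_zero_or_eq_succ i with h | ⟨j, rfl⟩
    · left; exact h
    · right; exact ⟨j, rfl⟩
  rw [huniv, Finset.sum_powerset_insert h0,
    powerset_image_inj (Fin.succ_injective n),
    Finset.sum_image (fun S1 _ S2 _ h => Finset.image_injective (Fin.succ_injective n) h),
    Finset.sum_image (fun S1 _ S2 _ h => Finset.image_injective (Fin.succ_injective n) h),
    ← Finset.sum_add_distrib]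

lemma star : ∀ (n : ℕ) (c : Fin n → ℝ),
    (∀ S : Finset (Fin n), S.Nonempty → ∑ j ∈ S, c j ≠ 0) → ∀ (t : ℝ) (q : ℕ),
    ∫ y in Set.Icc (0 : Fin n → ℝ) 1, (t + ∑ i, c i * y i) ^ q
      = (q.factorial : ℝ) / ((q + n).factorial : ℝ) *
          ∑ S ∈ (Finset.univ : Finset (Fin n)).powerset,
            (-1 : ℝ) ^ (n - S.card) * (t + ∑ i ∈ S, c i) ^ (q + n) / ∏ i, c i := by
  intro n
  induction n with
  | zero =>
    intro c _ t q
    have huniv : (Set.Icc (0 : Fin 0 → ℝ) 1) = Set.univ :=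
      Set.eq_univ_of_forall (fun x =>
        ⟨le_of_eq (Subsingleton.elim _ _), le_of_eq (Subsingleton.elim _ _)⟩)
    rw [huniv, MeasureTheory.setIntegral_univ]
    simp only [Finset.univ_eq_empty, Finset.sum_empty, add_zero]
    rw [MeasureTheory.integral_const]
    simp [MeasureTheory.volume_pi, MeasureTheory.Measure.pi_univ]
    exact Or.inl (by simp [Measure.real, MeasureTheory.Measure.pi_univ]; rw [div_self (by positivity)])
  | succ n IH =>
    intro c hgen t q
    have hc0 : ∀ i, c i ≠ 0 := fun i => by
      simpa using hgen {i} ⟨i, Finset.mem_singleton_self i⟩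
    have hgen' : ∀ S : Finset (Fin n), S.Nonempty → ∑ j ∈ S, c j.succ ≠ 0 := by
      intro S hS
      rw [← Finset.sum_image (fun a _ b _ h => Fin.succ_injective n h)]
      exact hgen _ (hS.image _)
    set e := MeasurableEquiv.piFinSuccAbove (fun _ : Fin (n+1) => ℝ) 0 with he
    have hmp : MeasurePreserving (⇑e.symm) volume volume :=
      (volume_preserving_piFinSuccAbove (fun _ : Fin (n+1) => ℝ) 0).symm
    have hsymm : ∀ z : ℝ × (Fin n → ℝ), e.symm z = Fin.insertNth 0 z.1 z.2 := by
      intro z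
      simp [he, MeasurableEquiv.piFinSuccAbove, Fin.insertNthEquiv]
    have hpre : ⇑e.symm ⁻¹' (Set.Icc (0 : Fin (n+1) → ℝ) 1)
        = Set.Icc (0:ℝ) 1 ×ˢ Set.Icc (0 : Fin n → ℝ) 1 := by
      ext z
      simp only [Set.mem_preimage, Set.mem_prod, Set.mem_Icc, hsymm z]
      constructor
      · rintro ⟨h0, h1⟩
        refine ⟨⟨?_, ?_⟩, ⟨?_, ?_⟩⟩
        · simpa using h0 0
        · simpa using h1 0
        · intro i
          simpa [Fin.zero_succAbove] using h0 ((0 : Fin (n+1)).succAbove i)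
        · intro i
          simpa [Fin.zero_succAbove] using h1 ((0 : Fin (n+1)).succAbove i)
      · rintro ⟨⟨hx0, hx1⟩, hy0, hy1⟩
        constructor
        · intro j
          rcases Fin.eq_zero_or_eq_succ j with rfl | ⟨i, rfl⟩
          · simpa using hx0
          · rw [← Fin.zero_succAbove i]
            simpa [Fin.insertNth_apply_succAbove] using hy0 i
        · intro j
          rcases Fin.eq_zero_or_eq_succ j with rfl | ⟨i, rfl⟩
          · simpa using hx1
          · rw [← Fin.zero_succAbove i]
            simpa [Fin.insertNth_apply_succAbove] using hy1 i
    have hfun : ∀ z : ℝ × (Fin n → ℝ),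
        (t + ∑ i, c i * (e.symm z) i) = ((t + c 0 * z.1) + ∑ i : Fin n, c i.succ * z.2 i) := by
      intro z
      rw [hsymm z, Fin.sum_univ_succ]
      have h1 : Fin.insertNth (α := fun _ : Fin (n+1) => ℝ) 0 z.1 z.2 0 = z.1 := by simp
      have h2 : ∀ i : Fin n, Fin.insertNth (α := fun _ : Fin (n+1) => ℝ) 0 z.1 z.2 i.succ = z.2 i := by
        intro i
        rw [← Fin.zero_succAbove i]
        simp
      simp only [h1, h2]
      ring
    have step1 : ∫ y in Set.Icc (0 : Fin (n+1) → ℝ) 1, (t + ∑ i, c i * y i) ^ q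
        = ∫ z in Set.Icc (0:ℝ) 1 ×ˢ Set.Icc (0 : Fin n → ℝ) 1,
            ((t + c 0 * z.1) + ∑ i : Fin n, c i.succ * z.2 i) ^ q := by
      rw [← hmp.setIntegral_preimage_emb e.symm.measurableEmbedding
        (fun y => (t + ∑ i, c i * y i) ^ q) _, hpre]
      apply MeasureTheory.setIntegral_congr_fun (by measurability)
      intro z _
      simp only
      rw [hfun z]
    have hcont : Continuous (fun z : ℝ × (Fin n → ℝ) =>
        ((t + c 0 * z.1) + ∑ i : Fin n, c i.succ * z.2 i) ^ q) := by
      apply Continuous.pow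
      apply Continuous.add
      · exact (continuous_const.add (continuous_const.mul continuous_fst))
      · apply continuous_finset_sum
        intro i _
        exact continuous_const.mul ((continuous_apply i).comp continuous_snd)
    have hInt : MeasureTheory.IntegrableOn (fun z : ℝ × (Fin n → ℝ) =>
        ((t + c 0 * z.1) + ∑ i : Fin n, c i.succ * z.2 i) ^ q)
        (Set.Icc (0:ℝ) 1 ×ˢ Set.Icc (0 : Fin n → ℝ) 1)
        ((volume : Measure ℝ).prod (volume : Measure (Fin n → ℝ))) :=
      ContinuousOn.integrableOn_compact (isCompact_Icc.prod isCompact_Icc)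
        hcont.continuousOn
    have step2 : ∫ z in Set.Icc (0:ℝ) 1 ×ˢ Set.Icc (0 : Fin n → ℝ) 1,
        ((t + c 0 * z.1) + ∑ i : Fin n, c i.succ * z.2 i) ^ q
        = ∫ x in Set.Icc (0:ℝ) 1, ∫ y in Set.Icc (0 : Fin n → ℝ) 1,
            ((t + c 0 * x) + ∑ i : Fin n, c i.succ * y i) ^ q := by
      rw [MeasureTheory.Measure.volume_eq_prod]
      exact MeasureTheory.setIntegral_prod _ hInt
    have step3 : (∫ x in Set.Icc (0:ℝ) 1, ∫ y in Set.Icc (0 : Fin n → ℝ) 1,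
            ((t + c 0 * x) + ∑ i : Fin n, c i.succ * y i) ^ q)
        = ∫ x in Set.Icc (0:ℝ) 1, ((q.factorial:ℝ)/((q+n).factorial:ℝ) *
            ∑ S ∈ (Finset.univ : Finset (Fin n)).powerset,
              (-1:ℝ)^(n - S.card) * ((t + c 0 * x) + ∑ i ∈ S, c i.succ)^(q+n) /
                ∏ i : Fin n, c i.succ) := by
      apply MeasureTheory.setIntegral_congr_fun measurableSet_Icc
      intro x _
      simp only
      exact IH (fun i => c i.succ) hgen' (t + c 0 * x) q
    rw [step1, step2, step3]
    rw [MeasureTheory.integral_const_mul]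
    have hIntS : ∀ S ∈ (Finset.univ : Finset (Fin n)).powerset,
        MeasureTheory.IntegrableOn (fun x : ℝ =>
          (-1:ℝ)^(n - S.card) * ((t + c 0 * x) + ∑ i ∈ S, c i.succ)^(q+n) /
            ∏ i : Fin n, c i.succ) (Set.Icc (0:ℝ) 1) volume := by
      intro S _
      apply ContinuousOn.integrableOn_compact isCompact_Icc
      apply Continuous.continuousOn
      apply Continuous.div_const
      apply Continuous.mul continuous_const
      apply Continuous.pow
      exact (continuous_const.add (continuous_const.mul continuous_id)).add continuous_const
    rw [MeasureTheory.integral_finset_sum _ hIntS]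
    rw [powerset_succ_split (fun S : Finset (Fin (n+1)) =>
      (-1 : ℝ) ^ (n + 1 - S.card) * (t + ∑ i ∈ S, c i) ^ (q + (n+1)) / ∏ i, c i)]
    rw [Finset.mul_sum, Finset.mul_sum]
    refine Finset.sum_congr rfl fun S hS => ?_
    have harr : ∀ x : ℝ,
        (-1:ℝ)^(n - S.card) * ((t + c 0 * x) + ∑ i ∈ S, c i.succ)^(q+n) /
            ∏ i : Fin n, c i.succ
          = ((-1:ℝ)^(n - S.card) / ∏ i : Fin n, c i.succ) *
              ((t + ∑ i ∈ S, c i.succ) + c 0 * x)^(q+n) := by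
      intro x
      have hb : (t + c 0 * x) + ∑ i ∈ S, c i.succ = (t + ∑ i ∈ S, c i.succ) + c 0 * x := by
        ring
      rw [hb]
      ring
    simp only [harr]
    rw [MeasureTheory.integral_const_mul, one_dim _ _ (hc0 0) (q+n)]
    -- now pure algebra
    have h0img : (0 : Fin (n+1)) ∉ S.image Fin.succ := by
      simp [Fin.succ_ne_zero]
    rw [Finset.sum_image (fun a _ b _ h => Fin.succ_injective n h),
      Finset.card_image_of_injective _ (Fin.succ_injective n),
      Finset.sum_insert h0img, Finset.card_insert_of_notMem h0img,
      Finset.sum_image (fun a _ b _ h => Fin.succ_injective n h),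
      Finset.card_image_of_injective _ (Fin.succ_injective n)]
    have hSle : S.card ≤ n := by
      have := Finset.card_le_card (Finset.mem_powerset.mp hS)
      simpa using this
    rw [show q + (n+1) = (q+n) + 1 from rfl, Nat.factorial_succ,
      show n + 1 - S.card = (n - S.card) + 1 from by omega,
      show n + 1 - (S.card + 1) = n - S.card from by omega,
      Fin.prod_univ_succ]
    rw [show (t + (c 0 + ∑ x ∈ S, c x.succ)) = (t + ∑ i ∈ S, c i.succ + c 0) from by ring]
    have hfac : ((q+n).factorial : ℝ) ≠ 0 := by positivity
    have hprod' : (∏ i : Fin n, c i.succ) ≠ 0 :=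
      Finset.prod_ne_zero_iff.2 fun i _ => hc0 i.succ
    push_cast
    have hqn : ((q:ℝ) + (n:ℝ) + 1) ≠ 0 := by positivity
    generalize (t + ∑ i ∈ S, c i.succ + c 0) = A
    generalize (t + ∑ i ∈ S, c i.succ) = B
    rw [pow_succ]
    have hc00 : c 0 ≠ 0 := hc0 0
    set G := ((q + n).factorial : ℝ) with hG
    set P := ∏ i : Fin n, c i.succ with hP
    set s1 := (-1 : ℝ) ^ (n - S.card) with hs1
    set X := A ^ (q + n + 1) with hX
    set Y := B ^ (q + n + 1) with hY
    field_simp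
    ring



end aux

/-- Triangulation (Brion) formula for the integral of `(cᵀy)^q` over the unit
hypercube, under the genericity condition that all nonempty partial sums of the
coordinates of `c` are nonzero.  Here `(c_σᵀ w_j) = ∑_{i : n−j ≤ i} c (σ i)`
where `w_j` has ones in its last `j` coordinates. -/
theorem stmt_8 (n : ℕ) (hn : 1 ≤ n) (c : Fin n → ℝ)
    (hgen : ∀ S : Finset (Fin n), S.Nonempty → ∑ j ∈ S, c j ≠ 0)
    (q : ℕ) (hq : 1 < q) :
    ∫ y in Set.Icc (0 : Fin n → ℝ) 1, (∑ i, c i * y i) ^ q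
      = ∑ σ : Equiv.Perm (Fin n),
          ((q.factorial : ℝ) / ((q + n).factorial : ℝ)) *
            ∑ j ∈ Finset.range (n + 1),
              (∑ i ∈ Finset.univ.filter (fun i : Fin n => n - j ≤ i.val), c (σ i)) ^ (q + n) /
                ∏ k ∈ (Finset.range (n + 1)).erase j,
                  ((∑ i ∈ Finset.univ.filter (fun i : Fin n => n - j ≤ i.val), c (σ i)) -
                    ∑ i ∈ Finset.univ.filter (fun i : Fin n => n - k ≤ i.val), c (σ i)) := by
  have h1 := star n c hgen 0 q
  simp only [zero_add] at h1
  have h2 := key_alg n c hgen (fun x => x ^ (q + n))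
  rw [h1, ← h2, Finset.mul_sum]
end

section
/- Let n ≥ 1 and let q be an integer with q > 1. Then ∫_{[0,1]^n} (y₁ + y₂ + ⋯ + yₙ)^q dy = (q!/(q+n)!) · Σ_{j=0}^n (−1)^{n−j} · C(n,j) · j^{q+n}, where C(n,j) denotes the binomial coefficient. -/
open MeasureTheory Finset fwdDiff

private lemma int_pow_Icc (c : ℝ) (m : ℕ) :
    ∫ t in Set.Icc (0:ℝ) 1, (c + t) ^ m = ((c+1)^(m+1) - c^(m+1)) / (m+1) := by
  rw [integral_Icc_eq_integral_Ioc, ← intervalIntegral.integral_of_le zero_le_one]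
  have h1 : ∀ t : ℝ, (c + t) ^ m = (t + c) ^ m := fun t => by ring_nf
  simp only [h1]
  rw [intervalIntegral.integral_comp_add_right (fun x => x ^ m) c, integral_pow]
  ring_nf

private lemma int_fwdDiff (m n : ℕ) (s : ℝ) :
    ∫ t in Set.Icc (0:ℝ) 1, (fwdDiff (1:ℝ))^[n] (fun x => x ^ m) (s + t)
      = (fwdDiff (1:ℝ))^[n+1] (fun x => x ^ (m+1)) s / (m+1) := by
  rw [Function.iterate_succ_apply]
  simp only [fwdDiff_iter_eq_sum_shift, fwdDiff, zsmul_eq_mul, nsmul_eq_mul, mul_one]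
  rw [integral_finset_sum]
  · rw [Finset.sum_div]
    refine Finset.sum_congr rfl fun k hk => ?_
    rw [integral_const_mul]
    have h1 : ∀ t : ℝ, (s + t + (k:ℝ)) ^ m = ((s + k) + t) ^ m := fun t => by ring_nf
    simp only [h1]
    rw [int_pow_Icc (s + k) m]
    ring
  · intro k hk
    exact (Continuous.continuousOn (by fun_prop)).integrableOn_compact isCompact_Icc

private lemma key (n : ℕ) : ∀ (q : ℕ) (s : ℝ),
    ∫ y in Set.Icc (0 : Fin n → ℝ) 1, (s + ∑ i, y i) ^ q
      = ((q.factorial : ℝ) / ((q+n).factorial : ℝ)) *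
          (fwdDiff (1:ℝ))^[n] (fun x => x ^ (q+n)) s := by
  induction n with
  | zero =>
    intro q s
    simp only [Finset.univ_eq_empty, Finset.sum_empty, add_zero, Nat.add_zero,
      Function.iterate_zero, id_eq]
    rw [setIntegral_const]
    have : (volume (Set.Icc (0 : Fin 0 → ℝ) 1)).toReal = 1 := by
      rw [Real.volume_Icc_pi]
      simp
    rw [measureReal_def, this, div_self (by positivity), one_smul, one_mul]
  | succ n IH =>
    intro q s
    have fubini : ∫ y in Set.Icc (0 : Fin (n+1) → ℝ) 1, (s + ∑ i, y i) ^ q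
        = ∫ t in Set.Icc (0:ℝ) 1, ∫ y in Set.Icc (0 : Fin n → ℝ) 1,
            ((s + t) + ∑ i, y i) ^ q := by
      have mp := (volume_preserving_piFinSuccAbove (fun _ : Fin (n+1) => ℝ) 0).symm
      rw [← mp.map_eq, setIntegral_map_equiv]
      have hset : (MeasurableEquiv.piFinSuccAbove (fun _ : Fin (n+1) => ℝ) 0).symm ⁻¹'
          (Set.Icc 0 1) = (Set.Icc (0:ℝ) 1) ×ˢ (Set.Icc (0 : Fin n → ℝ) 1) := by
        ext ⟨t, y⟩
        simp only [Set.mem_preimage, Set.mem_Icc, Set.mem_prod, Pi.le_def,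
          MeasurableEquiv.piFinSuccAbove_symm_apply, Fin.forall_iff_succAbove 0,
          Fin.insertNth_apply_same, Fin.insertNth_apply_succAbove, Pi.zero_apply,
          Pi.one_apply, Fin.insertNthEquiv_apply]
        tauto
      have hfun : (fun x : ℝ × (Fin n → ℝ) =>
            (s + ∑ i, (MeasurableEquiv.piFinSuccAbove (fun _ : Fin (n+1) => ℝ) 0).symm x i) ^ q)
          = fun x => ((s + x.1) + ∑ i, x.2 i) ^ q := by
        ext ⟨t, y⟩
        simp only [MeasurableEquiv.piFinSuccAbove_symm_apply,
          Fin.sum_univ_succAbove _ 0, Fin.insertNth_apply_same,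
          Fin.insertNth_apply_succAbove, Fin.insertNthEquiv_apply]
        ring
      rw [hset, hfun, Measure.volume_eq_prod, setIntegral_prod]
      exact (Continuous.continuousOn (by fun_prop)).integrableOn_compact
        (isCompact_Icc.prod isCompact_Icc)
    rw [fubini]
    simp only [IH q]
    rw [integral_const_mul, int_fwdDiff (q+n) n s]
    have hfac : ((q + (n+1)).factorial : ℝ) = ((q+n) + 1) * (q+n).factorial := by
      rw [show q + (n+1) = (q+n) + 1 by ring, Nat.factorial_succ]
      push_cast; ring
    have h1 : ((q+n).factorial : ℝ) ≠ 0 := by positivity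
    have h2 : ((q+n : ℕ) : ℝ) + 1 ≠ 0 := by positivity
    rw [hfac]
    simp only [show q + (n + 1) = q + n + 1 from rfl]
    push_cast
    field_simp

/-- Integral of `(y₁ + ⋯ + yₙ)^q` over the unit hypercube. -/
theorem stmt_9 (n : ℕ) (hn : 1 ≤ n) (q : ℕ) (hq : 1 < q) :
    ∫ y in Set.Icc (0 : Fin n → ℝ) 1, (∑ i, y i) ^ q
      = ((q.factorial : ℝ) / ((q + n).factorial : ℝ)) *
          ∑ j ∈ Finset.range (n + 1),
            (-1 : ℝ) ^ (n - j) * (n.choose j : ℝ) * (j : ℝ) ^ (q + n) := by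
  have h := key n q 0
  simp only [zero_add] at h
  rw [h, fwdDiff_iter_eq_sum_shift]
  congr 1
  refine Finset.sum_congr rfl fun k hk => ?_
  simp only [zsmul_eq_mul, nsmul_eq_mul, mul_one, zero_add]
  push_cast
  ring
end

section
/- Let d ≥ 1, let c ∈ ℝ^d with c_j ≠ 0 for all j, let v₀ ∈ ℝ^d, let u > 0, and set f(x) := e^{cᵀx} − 1 and Q_u := v₀ + u·[0,1]^d. Then (1/(d+2))·∫_{Q_u} f(x) dx − ∫_0^1 z^d · (∫_{Q_u} f(z·x) dx) dz = (1/∏_{j=1}^d c_j) · ( e^{cᵀv₀}·∏_{j=1}^d (e^{u·c_j} − 1)/(d+2) − ∫_0^1 e^{z·cᵀv₀} · ∏_{j=1}^d (e^{z·u·c_j} − 1) dz ) + u^d/((d+1)(d+2)). -/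
open MeasureTheory

lemma box_integral {d : ℕ} (g : Fin d → ℝ → ℝ) (a b : Fin d → ℝ) :
    ∫ x in Set.Icc a b, ∏ i, g i (x i) = ∏ i, ∫ t in Set.Icc (a i) (b i), g i t := by
  rw [← Set.pi_univ_Icc,
    ← MeasureTheory.integral_indicator (MeasurableSet.univ_pi fun i => measurableSet_Icc)]
  have h : (Set.univ.pi fun i => Set.Icc (a i) (b i)).indicator (fun x => ∏ i, g i (x i))
      = fun x => ∏ i, (Set.Icc (a i) (b i)).indicator (g i) (x i) := by
    funext x
    by_cases hx : x ∈ Set.univ.pi fun i => Set.Icc (a i) (b i)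
    · rw [Set.indicator_of_mem hx]
      exact Finset.prod_congr rfl fun i _ =>
        (Set.indicator_of_mem (hx i (Set.mem_univ i)) _).symm
    · rw [Set.indicator_of_notMem hx]
      simp only [Set.mem_pi, Set.mem_univ, forall_true_left, not_forall] at hx
      obtain ⟨i, hi⟩ := hx
      exact (Finset.prod_eq_zero (Finset.mem_univ i) (Set.indicator_of_notMem hi _)).symm
  rw [h, MeasureTheory.integral_fintype_prod_volume_eq_prod]
  exact Finset.prod_congr rfl fun i _ => MeasureTheory.integral_indicator measurableSet_Icc

lemma exp1 (k a b : ℝ) (hab : a ≤ b) (hk : k ≠ 0) :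
    ∫ t in Set.Icc a b, Real.exp (k * t)
      = k⁻¹ * (Real.exp (k * b) - Real.exp (k * a)) := by
  rw [MeasureTheory.integral_Icc_eq_integral_Ioc, ← intervalIntegral.integral_of_le hab,
    intervalIntegral.integral_comp_mul_left (fun t => Real.exp t) hk, integral_exp]
  simp [smul_eq_mul]

lemma factor (k a u : ℝ) (hu : 0 ≤ u) (hk : k ≠ 0) (z : ℝ) :
    z * ∫ t in Set.Icc a (a + u), Real.exp (z * k * t)
      = k⁻¹ * (Real.exp (z * k * a) * (Real.exp (z * u * k) - 1)) := by
  rcases eq_or_ne z 0 with rfl | hz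
  · simp
  · rw [exp1 (z * k) a (a + u) (le_add_of_nonneg_right hu) (mul_ne_zero hz hk)]
    rw [mul_add, Real.exp_add]
    field_simp

/-- Cut-off amount for the exponential function `f(x) = e^{cᵀx} − 1` on the box
`Q_u = v₀ + u·[0,1]^d`. -/
theorem stmt_13 (d : ℕ) (hd : 1 ≤ d) (c v₀ : Fin d → ℝ)
    (hc : ∀ j, c j ≠ 0) (u : ℝ) (hu : 0 < u)
    (f : (Fin d → ℝ) → ℝ) (hf : f = fun x => Real.exp (∑ i, c i * x i) - 1)
    (Qu : Set (Fin d → ℝ))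
    (hQu : Qu = (fun y : Fin d → ℝ => v₀ + u • y) '' Set.Icc (0 : Fin d → ℝ) 1) :
    (1 / ((d : ℝ) + 2)) * (∫ x in Qu, f x)
        - ∫ z in (0:ℝ)..1, z ^ d * ∫ x in Qu, f (z • x)
      = (1 / ∏ j, c j) *
          (Real.exp (∑ i, c i * v₀ i) * (∏ j, (Real.exp (u * c j) - 1)) / ((d : ℝ) + 2)
            - ∫ z in (0:ℝ)..1,
                Real.exp (z * ∑ i, c i * v₀ i) * ∏ j, (Real.exp (z * u * c j) - 1))
        + u ^ d / (((d : ℝ) + 1) * ((d : ℝ) + 2)) := by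
  -- Qu is a box
  have hQ : Qu = Set.Icc v₀ (v₀ + u • (1 : Fin d → ℝ)) := by
    rw [hQu]; ext x
    constructor
    · rintro ⟨y, hy, rfl⟩
      rw [Set.mem_Icc] at hy ⊢
      constructor
      · intro i
        have h0 : (0:ℝ) ≤ y i := hy.1 i
        simp only [Pi.add_apply, Pi.smul_apply, smul_eq_mul]
        nlinarith
      · intro i
        have h1 : y i ≤ 1 := hy.2 i
        simp only [Pi.add_apply, Pi.smul_apply, smul_eq_mul, Pi.one_apply]
        nlinarith
    · intro hx
      rw [Set.mem_Icc] at hx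
      refine ⟨u⁻¹ • (x - v₀), Set.mem_Icc.mpr ⟨?_, ?_⟩, ?_⟩
      · intro i
        simp only [Pi.smul_apply, Pi.sub_apply, smul_eq_mul, Pi.zero_apply]
        have h0 : v₀ i ≤ x i := hx.1 i
        have : (0:ℝ) ≤ x i - v₀ i := by linarith
        positivity
      · intro i
        simp only [Pi.smul_apply, Pi.sub_apply, smul_eq_mul, Pi.one_apply]
        have h1 := hx.2 i
        simp only [Pi.add_apply, Pi.smul_apply, Pi.one_apply, smul_eq_mul, mul_one] at h1
        rw [inv_mul_le_iff₀ hu]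
        linarith
      · show v₀ + u • (u⁻¹ • (x - v₀)) = x
        rw [smul_smul, mul_inv_cancel₀ hu.ne', one_smul]
        abel
  have hw : v₀ ≤ v₀ + u • (1 : Fin d → ℝ) := by
    intro i; simp [hu.le]
  have hvolQ : volume Qu < ⊤ := by
    rw [hQ]; exact isCompact_Icc.measure_lt_top
  have hvol : ∫ x in Qu, (1:ℝ) = u ^ d := by
    rw [hQ, MeasureTheory.setIntegral_const, measureReal_def, Real.volume_Icc_pi_toReal hw, smul_eq_mul, mul_one]
    simp
  have hint : ∀ z : ℝ,
      IntegrableOn (fun x : Fin d → ℝ => Real.exp (∑ i, (z * c i) * x i)) Qu := by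
    intro z
    rw [hQ]
    exact (Continuous.continuousOn (by fun_prop)).integrableOn_compact isCompact_Icc
  have hE : ∀ z : ℝ, z ^ d * ∫ x in Qu, Real.exp (∑ i, (z * c i) * x i)
      = (∏ j, c j)⁻¹ *
          (Real.exp (z * ∑ i, c i * v₀ i) * ∏ j, (Real.exp (z * u * c j) - 1)) := by
    intro z
    have h1 : (fun x : Fin d → ℝ => Real.exp (∑ i, (z * c i) * x i))
        = fun x => ∏ i, Real.exp ((z * c i) * x i) := by
      funext x; rw [← Real.exp_sum]
    rw [hQ, h1, box_integral (fun i t => Real.exp (z * c i * t)) v₀ (v₀ + u • 1)]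
    have h3 : ∀ i : Fin d,
        (∫ t in Set.Icc (v₀ i) ((v₀ + u • (1 : Fin d → ℝ)) i), Real.exp (z * c i * t))
          = ∫ t in Set.Icc (v₀ i) (v₀ i + u), Real.exp (z * c i * t) := by
      intro i
      have : (v₀ + u • (1 : Fin d → ℝ)) i = v₀ i + u := by simp
      rw [this]
    have h4 : (∏ _i : Fin d, z) *
          ∏ i, ∫ t in Set.Icc (v₀ i) ((v₀ + u • (1 : Fin d → ℝ)) i), Real.exp (z * c i * t)
        = ∏ i, (c i)⁻¹ * (Real.exp (z * c i * v₀ i) * (Real.exp (z * u * c i) - 1)) := by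
      rw [← Finset.prod_mul_distrib]
      refine Finset.prod_congr rfl fun i _ => ?_
      rw [h3 i]
      exact factor (c i) (v₀ i) u hu.le (hc i) z
    rw [show z ^ d = ∏ _i : Fin d, z by simp [Finset.prod_const], h4,
      Finset.prod_mul_distrib, Finset.prod_mul_distrib, Finset.prod_inv_distrib]
    congr 2
    rw [← Real.exp_sum]
    congr 1
    rw [Finset.mul_sum]
    exact Finset.sum_congr rfl fun i _ => mul_assoc _ _ _
  have hI : ∀ z : ℝ, (∫ x in Qu, f (z • x))
      = (∫ x in Qu, Real.exp (∑ i, (z * c i) * x i)) - u ^ d := by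
    intro z
    have h1 : (fun x : Fin d → ℝ => f (z • x))
        = fun x => Real.exp (∑ i, (z * c i) * x i) - 1 := by
      funext x
      rw [hf]
      simp only [Pi.smul_apply, smul_eq_mul]
      congr 2
      exact Finset.sum_congr rfl fun i _ => by ring
    calc (∫ x in Qu, f (z • x))
        = ∫ x in Qu, (Real.exp (∑ i, (z * c i) * x i) - 1) := by rw [← h1]
      _ = (∫ x in Qu, Real.exp (∑ i, (z * c i) * x i)) - ∫ x in Qu, (1:ℝ) :=
          integral_sub (hint z) (integrableOn_const hvolQ.ne)
      _ = _ := by rw [hvol]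
  have hg : ∀ z : ℝ, z ^ d * ∫ x in Qu, f (z • x)
      = (∏ j, c j)⁻¹ *
          (Real.exp (z * ∑ i, c i * v₀ i) * ∏ j, (Real.exp (z * u * c j) - 1))
        - z ^ d * u ^ d := by
    intro z; rw [hI z, mul_sub, hE z]
  have hone : (∫ x in Qu, f x)
      = (∏ j, c j)⁻¹ *
          (Real.exp (∑ i, c i * v₀ i) * ∏ j, (Real.exp (u * c j) - 1)) - u ^ d := by
    have h := hg 1
    simp only [one_smul, one_pow, one_mul] at h
    exact h
  rw [show (∫ z in (0:ℝ)..1, z ^ d * ∫ x in Qu, f (z • x))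
      = ∫ z in (0:ℝ)..1,
          ((∏ j, c j)⁻¹ *
            (Real.exp (z * ∑ i, c i * v₀ i) * ∏ j, (Real.exp (z * u * c j) - 1))
          - z ^ d * u ^ d) from intervalIntegral.integral_congr fun z _ => hg z]
  have hcont : Continuous fun z : ℝ =>
      Real.exp (z * ∑ i, c i * v₀ i) * ∏ j, (Real.exp (z * u * c j) - 1) := by
    fun_prop
  rw [intervalIntegral.integral_sub
    (f := fun z => (∏ j, c j)⁻¹ *
      (Real.exp (z * ∑ i, c i * v₀ i) * ∏ j, (Real.exp (z * u * c j) - 1)))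
    (g := fun z => z ^ d * u ^ d) ((continuous_const.mul hcont).intervalIntegrable 0 1)
    (((continuous_pow d).mul continuous_const).intervalIntegrable 0 1)]
  rw [intervalIntegral.integral_const_mul, intervalIntegral.integral_mul_const, integral_pow]
  rw [hone]
  have hP : (∏ j, c j) ≠ 0 := Finset.prod_ne_zero_iff.mpr fun j _ => hc j
  have hd1 : ((d:ℝ) + 1) ≠ 0 := by positivity
  have hd2 : ((d:ℝ) + 2) ≠ 0 := by positivity
  rw [zero_pow (Nat.succ_ne_zero d), one_pow]
  generalize (∫ z in (0:ℝ)..1, Real.exp (z * ∑ i, c i * v₀ i) * ∏ j, (Real.exp (z * u * c j) - 1)) = J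
  field_simp
  ring
end

section
/- Let d ≥ 1, let c ∈ ℝ^d with c > 0 componentwise, let v₀ ∈ ℝ^d with v₀ > 0 componentwise, and set f(x) := e^{cᵀx} − 1, Q_u := v₀ + u·[0,1]^d, F(u) := e^{cᵀv₀ + u·cᵀ𝟙} − 1, and I(u) := ∫_0^1 z^d · (∫_{Q_u} f(z·x) dx) dz. For each u > 0 let ν_u : Q_u → ℝ be the concave envelope of f on Q_u, i.e., ν_u is concave on Q_u, ν_u(x) ≥ f(x) for all x ∈ Q_u, and ν_u(x) ≤ g(x) on Q_u for every concave g : Q_u → ℝ with g ≥ f on Q_u. Then the ratio ( (u^d·F(u))/(d+2) − I(u) ) / ( (1/(d+2))·∫_{Q_u} ν_u(x) dx − I(u) ) tends to d+1 as u → ∞. -/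
open MeasureTheory Filter Set

section helpers

lemma concaveOn_finset_inf' {E : Type*} [AddCommGroup E] [Module ℝ E] {s : Set E}
    {ι : Type*} {t : Finset ι} (ht : t.Nonempty) {f : ι → E → ℝ}
    (h : ∀ i ∈ t, ConcaveOn ℝ s (f i)) :
    ConcaveOn ℝ s fun x => t.inf' ht fun i => f i x := by
  induction ht using Finset.Nonempty.cons_induction with
  | singleton a => simpa using h a (by simp)
  | cons a t ha hne ih =>
    have h1 : ConcaveOn ℝ s (f a) := h a (by simp)
    have h2 := ih fun i hi => h i (by simp [hi])
    have := h1.inf h2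
    refine this.congr fun x _ => ?_
    rw [Finset.inf'_cons]
    rfl

lemma continuous_finset_inf'' {E : Type*} [TopologicalSpace E]
    {ι : Type*} {t : Finset ι} (ht : t.Nonempty) {f : ι → E → ℝ}
    (h : ∀ i ∈ t, Continuous (f i)) :
    Continuous fun x => t.inf' ht fun i => f i x := by
  rw [continuous_iff_continuousAt]
  intro x
  exact ContinuousAt.finset_inf'_apply ht fun i hi => (h i hi).continuousAt

lemma exp_le_one_sub {a s : ℝ} (ha : 2 * Real.log 2 ≤ a) (hs0 : 0 ≤ s) (hs : s ≤ 1/2) :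
    Real.exp (-(a * s)) ≤ 1 - s := by
  have h1 : Real.exp (-(a * s)) ≤ Real.exp (-(2 * Real.log 2 * s)) := by
    apply Real.exp_le_exp.2
    nlinarith
  refine h1.trans ?_
  have key := convexOn_exp.2 (Set.mem_univ (0:ℝ)) (Set.mem_univ (-Real.log 2))
    (show (0:ℝ) ≤ 1 - 2*s by linarith) (show (0:ℝ) ≤ 2*s by linarith) (by ring)
  simp only [smul_eq_mul, mul_zero, zero_add, Real.exp_zero, mul_one] at key
  have h2 : Real.exp (-Real.log 2) = 1/2 := by
    rw [Real.exp_neg, Real.exp_log two_pos]; norm_num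
  rw [h2] at key
  have h3 : -(2 * Real.log 2 * s) = 2 * s * -Real.log 2 := by ring
  rw [h3]
  calc Real.exp (2*s * -Real.log 2) ≤ (1 - 2*s) + 2*s * (1/2) := key
    _ = 1 - s := by ring

lemma integral_box_inf' (d : ℕ) (hd : 1 ≤ d) (v₀ : Fin d → ℝ) (u : ℝ) (hu : 0 < u) :
    (∫ x in Icc v₀ (v₀ + u • (1 : Fin d → ℝ)),
      Finset.univ.inf' (⟨⟨0, hd⟩, Finset.mem_univ _⟩ : (Finset.univ : Finset (Fin d)).Nonempty)
        fun i => x i - v₀ i)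
      = u ^ (d+1) / (d+1) := by
  have hne : (Finset.univ : Finset (Fin d)).Nonempty := ⟨⟨0, hd⟩, Finset.mem_univ _⟩
  set b := v₀ + u • (1 : Fin d → ℝ) with hbdef
  have hb : ∀ i, b i = v₀ i + u := by intro i; simp [hbdef]
  set m : (Fin d → ℝ) → ℝ := fun x => Finset.univ.inf' hne fun i => x i - v₀ i with hmdef
  have hmc : Continuous m :=
    continuous_finset_inf'' hne fun i _ => (continuous_apply i).sub continuous_const
  have hint : IntegrableOn m (Icc v₀ b) :=
    hmc.continuousOn.integrableOn_compact isCompact_Icc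
  have hnn : 0 ≤ᵐ[volume.restrict (Icc v₀ b)] m := by
    refine ae_restrict_of_forall_mem measurableSet_Icc fun x hx => ?_
    rw [hmdef]
    refine Finset.le_inf' hne _ fun i _ => ?_
    exact sub_nonneg.2 (hx.1 i)
  have key := Integrable.integral_eq_integral_meas_lt hint hnn
  rw [key]
  have hmeas : ∀ t : ℝ, MeasurableSet {a | t < m a} :=
    fun t => (isOpen_lt continuous_const hmc).measurableSet
  have hval : ∀ t ∈ Ioi (0:ℝ),
      ((volume.restrict (Icc v₀ b)) {a | t < m a}).toReal = (max (u - t) 0) ^ d := by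
    intro t ht
    rw [Measure.restrict_apply (hmeas t)]
    have hset : {a | t < m a} ∩ Icc v₀ b
        = Set.pi Set.univ (fun i => Ioc (v₀ i + t) (v₀ i + u)) := by
      ext x
      simp only [Set.mem_inter_iff, Set.mem_setOf_eq, Set.mem_Icc, Set.mem_univ_pi,
        Set.mem_Ioc, hmdef, Finset.lt_inf'_iff, Finset.mem_univ, true_implies, Pi.le_def]
      constructor
      · rintro ⟨h1, _, h3⟩ i
        exact ⟨by linarith [h1 i], by have := h3 i; rw [hb i] at this; linarith⟩
      · intro h
        refine ⟨fun i => by linarith [(h i).1], fun i => by have := ht.out; linarith [(h i).1],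
          fun i => by rw [hb i]; exact (h i).2⟩
    rw [hset, volume_pi_pi]
    simp only [Real.volume_Ioc, add_sub_add_left_eq_sub]
    rw [Finset.prod_const, Finset.card_univ, Fintype.card_fin,
      ENNReal.toReal_pow, ENNReal.toReal_ofReal']
  rw [setIntegral_congr_fun measurableSet_Ioi (fun t ht => (measureReal_def _ _).trans (hval t ht))]
  have hsplit : (∫ t in Ioi (0:ℝ), (max (u - t) 0) ^ d)
      = ∫ t in Ioc (0:ℝ) u, (max (u - t) 0) ^ d := by
    refine setIntegral_eq_of_subset_of_ae_diff_eq_zero measurableSet_Ioi.nullMeasurableSet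
      Ioc_subset_Ioi_self ?_
    refine Eventually.of_forall fun t ht => ?_
    have h2 : u < t := by
      rcases ht with ⟨h1, h2⟩
      simp only [Set.mem_Ioc, not_and, not_le] at h2
      exact h2 h1.out
    have h3 : max (u - t) 0 = 0 := max_eq_right (by linarith)
    rw [h3]
    exact zero_pow (by omega)
  rw [hsplit]
  have hcong : ∀ t ∈ Ioc (0:ℝ) u, (max (u - t) 0) ^ d = (u - t) ^ d := by
    intro t ht
    rw [max_eq_left (by linarith [ht.2])]
  rw [setIntegral_congr_fun measurableSet_Ioc hcong,
    ← intervalIntegral.integral_of_le hu.le,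
    intervalIntegral.integral_comp_sub_left (fun s => s ^ d) u]
  simp only [sub_zero, sub_self]
  rw [integral_pow]
  simp

end helpers

set_option maxHeartbeats 1000000 in
/-- The ratio of the volume of the naïve relaxation with the constant upper
bound `F` to that with the concave-envelope upper bound tends to `d + 1`
as the box `Q_u = v₀ + u·[0,1]^d` is scaled up, for `f(x) = e^{cᵀx} − 1`. -/
theorem stmt_15 (d : ℕ) (hd : 1 ≤ d) (c v₀ : Fin d → ℝ)
    (hc : ∀ i, 0 < c i) (hv : ∀ i, 0 < v₀ i)
    (f : (Fin d → ℝ) → ℝ) (hf : f = fun x => Real.exp (∑ i, c i * x i) - 1)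
    (Q : ℝ → Set (Fin d → ℝ))
    (hQ : ∀ u : ℝ, Q u = (fun y : Fin d → ℝ => v₀ + u • y) '' Set.Icc (0 : Fin d → ℝ) 1)
    (F : ℝ → ℝ)
    (hF : ∀ u : ℝ, F u = Real.exp (∑ i, c i * v₀ i + u * ∑ i, c i) - 1)
    (I : ℝ → ℝ)
    (hI : ∀ u : ℝ, I u = ∫ z in (0:ℝ)..1, z ^ d * ∫ x in Q u, f (z • x))
    (ν : ℝ → (Fin d → ℝ) → ℝ)
    (hν : ∀ u : ℝ, 0 < u →
      ConcaveOn ℝ (Q u) (ν u) ∧ (∀ x ∈ Q u, f x ≤ ν u x) ∧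
        ∀ g : (Fin d → ℝ) → ℝ, ConcaveOn ℝ (Q u) g → (∀ x ∈ Q u, f x ≤ g x) →
          ∀ x ∈ Q u, ν u x ≤ g x) :
    Tendsto (fun u : ℝ =>
        ((u ^ d * F u) / ((d : ℝ) + 2) - I u) /
          ((1 / ((d : ℝ) + 2)) * (∫ x in Q u, ν u x) - I u))
      atTop (nhds ((d : ℝ) + 1)) := by
  classical
  have hne : (Finset.univ : Finset (Fin d)).Nonempty := ⟨⟨0, hd⟩, Finset.mem_univ _⟩
  set S : ℝ := ∑ i, c i with hSdef
  set A : ℝ := ∑ i, c i * v₀ i with hAdef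
  have hSpos : 0 < S := Finset.sum_pos (fun i _ => hc i) hne
  have hApos : 0 < A := Finset.sum_pos (fun i _ => mul_pos (hc i) (hv i)) hne
  set cm : ℝ := Finset.univ.inf' hne c with hcmdef
  have hcmpos : 0 < cm := (Finset.lt_inf'_iff hne).2 fun i _ => hc i
  set E : ℝ → ℝ := fun u => Real.exp (A + u * S) with hEdef
  have hEpos : ∀ u, 0 < E u := fun u => Real.exp_pos _
  have hFE : ∀ u, F u = E u - 1 := fun u => hF u
  have hk_pos : ∀ u : ℝ, 0 < u → 0 < A + u * S :=
    fun u hu => add_pos hApos (mul_pos hu hSpos)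
  -- the box
  set b : ℝ → (Fin d → ℝ) := fun u => v₀ + u • (1 : Fin d → ℝ) with hbdef
  have hb : ∀ u i, b u i = v₀ i + u := by intro u i; simp [hbdef]
  have hvb : ∀ u : ℝ, 0 ≤ u → v₀ ≤ b u := fun u hu i => by rw [hb]; linarith
  have hQ' : ∀ u : ℝ, 0 < u → Q u = Icc v₀ (b u) := by
    intro u hu
    rw [hQ]
    ext x
    simp only [Set.mem_image, Set.mem_Icc, Pi.le_def]
    constructor
    · rintro ⟨y, ⟨hy1, hy2⟩, rfl⟩
      constructor <;> intro i <;>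
        simp only [Pi.add_apply, Pi.smul_apply, smul_eq_mul, hb, Pi.one_apply]
      · have h1 := hy1 i; have h2 := hy2 i
        simp only [Pi.zero_apply] at h1
        nlinarith
      · have h1 := hy1 i; have h2 := hy2 i
        simp only [Pi.zero_apply] at h1
        simp only [Pi.one_apply] at h2
        nlinarith
    · rintro ⟨h1, h2⟩
      refine ⟨u⁻¹ • (x - v₀), ⟨fun i => ?_, fun i => ?_⟩, ?_⟩
      · simp only [Pi.smul_apply, Pi.sub_apply, smul_eq_mul, Pi.zero_apply]
        have h3 : 0 ≤ x i - v₀ i := sub_nonneg.2 (h1 i)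
        exact mul_nonneg (inv_nonneg.2 hu.le) h3
      · simp only [Pi.smul_apply, Pi.sub_apply, smul_eq_mul, Pi.one_apply]
        rw [inv_mul_le_iff₀ hu, mul_one]
        have := h2 i; rw [hb] at this; linarith
      · funext i
        simp only [Pi.add_apply, Pi.smul_apply, Pi.sub_apply, smul_eq_mul]
        field_simp
        ring
  -- linear functional
  set e : (Fin d → ℝ) → ℝ := fun x => ∑ i, c i * x i with hedef
  have hfe : ∀ x, f x = Real.exp (e x) - 1 := fun x => by rw [hf]
  have he_b : ∀ u, e (b u) = A + u * S := by
    intro u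
    rw [hedef, hAdef, hSdef]
    simp only [hb]
    rw [Finset.mul_sum, ← Finset.sum_add_distrib]
    exact Finset.sum_congr rfl fun i _ => by ring
  have he_lb : ∀ u x, x ∈ Icc v₀ (b u) → A ≤ e x := by
    intro u x hx
    exact Finset.sum_le_sum fun i _ => mul_le_mul_of_nonneg_left (hx.1 i) (hc i).le
  have he_ub : ∀ u x, x ∈ Icc v₀ (b u) → e x ≤ A + u * S := by
    intro u x hx
    rw [← he_b u]
    exact Finset.sum_le_sum fun i _ => mul_le_mul_of_nonneg_left (hx.2 i) (hc i).le
  have hf_nonneg : ∀ u x, x ∈ Icc v₀ (b u) → 0 ≤ f x := by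
    intro u x hx
    rw [hfe]
    have h1 : (0:ℝ) ≤ e x := le_trans hApos.le (he_lb u x hx)
    have h2 := Real.one_le_exp h1
    linarith
  -- the min function
  set m : (Fin d → ℝ) → ℝ := fun x => Finset.univ.inf' hne fun i => x i - v₀ i with hmdef
  have hmc : Continuous m :=
    continuous_finset_inf'' hne fun i _ => (continuous_apply i).sub continuous_const
  have hm_nonneg : ∀ u x, x ∈ Icc v₀ (b u) → 0 ≤ m x := fun u x hx =>
    Finset.le_inf' hne _ fun i _ => sub_nonneg.2 (hx.1 i)
  have hm_le : ∀ x i, m x ≤ x i - v₀ i := fun x i => Finset.inf'_le _ (Finset.mem_univ i)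
  have hm_le_u : ∀ u x, x ∈ Icc v₀ (b u) → m x ≤ u := by
    intro u x hx
    refine (hm_le x ⟨0, hd⟩).trans ?_
    have h1 := hx.2 ⟨0, hd⟩; rw [hb] at h1; linarith
  have hmconc : ∀ s : Set (Fin d → ℝ), Convex ℝ s → ConcaveOn ℝ s m := by
    intro s hs
    refine concaveOn_finset_inf' hne fun i _ => ⟨hs, fun x _ y _ a a' ha ha' hab => ?_⟩
    refine le_of_eq ?_
    simp only [Pi.add_apply, Pi.smul_apply, smul_eq_mul]
    linear_combination (-(v₀ i)) * hab
  have hvol : ∀ u : ℝ, 0 ≤ u → (volume (Icc v₀ (b u))).toReal = u ^ d := by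
    intro u hu
    rw [Real.volume_Icc_pi_toReal (hvb u hu)]
    have h1 : ∀ i, b u i - v₀ i = u := fun i => by rw [hb]; ring
    simp only [h1]
    rw [Finset.prod_const, Finset.card_univ, Fintype.card_fin]
  have hJ : ∀ u : ℝ, 0 < u → (∫ x in Icc v₀ (b u), m x) = u ^ (d+1) / (d+1) :=
    fun u hu => integral_box_inf' d hd v₀ u hu
  have he_smul : ∀ (z : ℝ) (x : Fin d → ℝ), e (z • x) = z * e x := by
    intro z x
    rw [hedef, Finset.mul_sum]
    refine Finset.sum_congr rfl fun i _ => ?_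
    simp only [Pi.smul_apply, smul_eq_mul]
    ring
  have hcm_le : ∀ i, cm ≤ c i := fun i => Finset.inf'_le _ (Finset.mem_univ i)
  have hE_ge1 : ∀ u : ℝ, 0 ≤ u → 1 ≤ E u := by
    intro u hu
    rw [hEdef]
    exact Real.one_le_exp (by positivity)
  have hE_top : Tendsto E atTop atTop := by
    rw [hEdef]
    exact Real.tendsto_exp_atTop.comp
      (tendsto_atTop_add_const_left _ A (Tendsto.atTop_mul_const hSpos tendsto_id))
  clear_value S A cm E b e m
  -- I bounds
  have hIb : ∀ u : ℝ, 0 < u → 0 ≤ I u ∧ I u ≤ u ^ d * E u / (A + u * S) := by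
    intro u hu
    have hk : 0 < A + u * S := hk_pos u hu
    have hQu := hQ' u hu
    have hinner_nonneg : ∀ z ∈ Icc (0:ℝ) 1, 0 ≤ ∫ x in Q u, f (z • x) := by
      intro z hz
      rw [hQu]
      refine setIntegral_nonneg measurableSet_Icc fun x hx => ?_
      rw [hfe, he_smul]
      have h1 : 0 ≤ z * e x := mul_nonneg hz.1 (le_trans hApos.le (he_lb u x hx))
      linarith [Real.one_le_exp h1]
    have hinner_le : ∀ z ∈ Icc (0:ℝ) 1,
        (∫ x in Q u, f (z • x)) ≤ u ^ d * Real.exp (z * (A + u * S)) := by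
      intro z hz
      rw [hQu]
      have hfcont : Continuous fun x : Fin d → ℝ => f (z • x) := by
        rw [hf]
        refine Continuous.sub ?_ continuous_const
        refine Real.continuous_exp.comp ?_
        refine continuous_finset_sum _ fun i _ => ?_
        exact continuous_const.mul ((continuous_apply i).comp (continuous_const_smul z))
      have h1 : IntegrableOn (fun x => f (z • x)) (Icc v₀ (b u)) :=
        hfcont.continuousOn.integrableOn_compact isCompact_Icc
      have h2 : IntegrableOn (fun _ : Fin d → ℝ => Real.exp (z * (A + u * S)))
          (Icc v₀ (b u)) := integrableOn_const isCompact_Icc.measure_lt_top.ne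
      have hpt : ∀ x ∈ Icc v₀ (b u), f (z • x) ≤ Real.exp (z * (A + u * S)) := by
        intro x hx
        rw [hfe, he_smul]
        have h3 : z * e x ≤ z * (A + u * S) :=
          mul_le_mul_of_nonneg_left (he_ub u x hx) hz.1
        have h4 := Real.exp_le_exp.2 h3
        linarith
      have h5 := setIntegral_mono_on h1 h2 measurableSet_Icc hpt
      rw [setIntegral_const, measureReal_def, hvol u hu.le, smul_eq_mul] at h5
      exact h5
    constructor
    · rw [hI]
      exact intervalIntegral.integral_nonneg zero_le_one fun z hz =>
        mul_nonneg (pow_nonneg hz.1 d) (hinner_nonneg z hz)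
    · rw [hI]
      have hRHScont : Continuous fun z : ℝ => u ^ d * Real.exp (z * (A + u * S)) :=
        continuous_const.mul (Real.continuous_exp.comp (continuous_id.mul continuous_const))
      have hRHSint : IntervalIntegrable (fun z : ℝ => u ^ d * Real.exp (z * (A + u * S)))
          volume 0 1 := hRHScont.intervalIntegrable 0 1
      have hIle : (∫ z in (0:ℝ)..1, z ^ d * ∫ x in Q u, f (z • x))
          ≤ ∫ z in (0:ℝ)..1, u ^ d * Real.exp (z * (A + u * S)) := by
        by_cases hii : IntervalIntegrable (fun z => z ^ d * ∫ x in Q u, f (z • x)) volume 0 1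
        · refine intervalIntegral.integral_mono_on zero_le_one hii hRHSint fun z hz => ?_
          have h1 : z ^ d ≤ 1 := pow_le_one₀ hz.1 hz.2
          calc z ^ d * (∫ x in Q u, f (z • x)) ≤ 1 * ∫ x in Q u, f (z • x) :=
                mul_le_mul_of_nonneg_right h1 (hinner_nonneg z hz)
            _ = ∫ x in Q u, f (z • x) := one_mul _
            _ ≤ _ := hinner_le z hz
        · rw [intervalIntegral.integral_undef hii]
          refine intervalIntegral.integral_nonneg zero_le_one fun z hz => ?_
          exact mul_nonneg (pow_nonneg hu.le d) (Real.exp_pos _).le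
      refine hIle.trans ?_
      have hcomp : (∫ z in (0:ℝ)..1, u ^ d * Real.exp (z * (A + u * S)))
          = u ^ d * ((A + u * S)⁻¹ * (Real.exp (A + u * S) - 1)) := by
        rw [intervalIntegral.integral_const_mul]
        congr 1
        rw [intervalIntegral.integral_comp_mul_right Real.exp (ne_of_gt hk)]
        rw [integral_exp]
        simp [smul_eq_mul]
      rw [hcomp]
      simp only [hEdef]
      have h6 : (A + u * S)⁻¹ * (Real.exp (A + u * S) - 1)
          ≤ Real.exp (A + u * S) / (A + u * S) := by
        rw [inv_mul_eq_div]
        gcongr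
        linarith
      calc u ^ d * ((A + u * S)⁻¹ * (Real.exp (A + u * S) - 1))
          ≤ u ^ d * (Real.exp (A + u * S) / (A + u * S)) :=
            mul_le_mul_of_nonneg_left h6 (pow_nonneg hu.le d)
        _ = u ^ d * Real.exp (A + u * S) / (A + u * S) := by ring
  -- ν bounds
  have hνb : ∀ u : ℝ, 0 < u → 2 * Real.log 2 ≤ u * cm →
      F u * u ^ d / ((d:ℝ)+1) ≤ (∫ x in Icc v₀ (b u), ν u x) ∧
      (∫ x in Icc v₀ (b u), ν u x)
        ≤ u ^ d * E u / ((d:ℝ)+1) + Real.exp (A + u * S - u * cm / 2) * u ^ d := by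
    intro u hu hu2
    obtain ⟨hconc, hge, hmin⟩ := hν u hu
    have hQu := hQ' u hu
    rw [hQu] at hconc hge hmin
    set Cc : ℝ := Real.exp (A + u * S - u * cm / 2) with hCc
    have hCcpos : 0 < Cc := Real.exp_pos _
    clear_value Cc
    set g : (Fin d → ℝ) → ℝ := fun x => (E u / u) * m x + Cc with hg
    have hEu0 : 0 ≤ E u / u := div_nonneg (hEpos u).le hu.le
    have hgcont : Continuous g := (continuous_const.mul hmc).add continuous_const
    clear_value g
    have hgconc : ConcaveOn ℝ (Icc v₀ (b u)) g := by
      obtain ⟨hcvx, hineq⟩ := hmconc (Icc v₀ (b u)) (convex_Icc _ _)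
      refine ⟨hcvx, fun x hx y hy a a' ha ha' hab => ?_⟩
      have h := hineq hx hy ha ha' hab
      have h2 : a * Cc + a' * Cc = Cc := by rw [← add_mul, hab, one_mul]
      simp only [hg, smul_eq_mul] at h ⊢
      nlinarith [mul_le_mul_of_nonneg_left h hEu0, h2]
    have hfg : ∀ x ∈ Icc v₀ (b u), f x ≤ g x := by
      intro x hx
      obtain ⟨j, _, hj⟩ := Finset.exists_mem_eq_inf' hne fun i => x i - v₀ i
      have hmx1 : e x ≤ A + u * S - cm * (u - m x) := by
        have hsum : c j * (u - (x j - v₀ j)) ≤ ∑ i, c i * (u - (x i - v₀ i)) := by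
          refine Finset.single_le_sum (f := fun i => c i * (u - (x i - v₀ i)))
            (fun i _ => ?_) (Finset.mem_univ j)
          show (0:ℝ) ≤ c i * (u - (x i - v₀ i))
          have h1 := hx.2 i; rw [hb] at h1
          have h3 : 0 ≤ u - (x i - v₀ i) := by linarith
          exact mul_nonneg (hc i).le h3
        have hsum2 : (∑ i, c i * (u - (x i - v₀ i))) = A + u * S - e x := by
          rw [hedef, hAdef, hSdef]
          rw [Finset.mul_sum, ← Finset.sum_add_distrib, ← Finset.sum_sub_distrib]
          exact Finset.sum_congr rfl fun i _ => by ring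
        have hcmj : cm ≤ c j := hcm_le j
        have hmu : u - m x = u - (x j - v₀ j) := by
          simp only [hmdef]
          rw [hj]
        have hmnn : 0 ≤ u - m x := sub_nonneg.2 (hm_le_u u x hx)
        rw [hsum2] at hsum
        rw [hmu]
        nlinarith [hmu, hmnn]
      have hmx0 := hm_nonneg u x hx
      have hmxu := hm_le_u u x hx
      set s : ℝ := 1 - m x / u with hs
      clear_value s
      have hs0 : 0 ≤ s := by
        rw [hs]
        have h1 : m x / u ≤ 1 := by rw [div_le_one hu]; exact hmxu
        linarith
      have hs1 : s ≤ 1 := by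
        rw [hs]
        have h1 : 0 ≤ m x / u := div_nonneg hmx0 hu.le
        linarith
      have hus : u - m x = u * s := by rw [hs]; field_simp
      have hex : Real.exp (e x) ≤ E u * Real.exp (-(u * cm * s)) := by
        simp only [hEdef, ← Real.exp_add]
        apply Real.exp_le_exp.2
        rw [hus] at hmx1
        nlinarith [hmx1]
      rcases le_or_gt (1/2 : ℝ) s with hhalf | hhalf
      · have h1 : Real.exp (-(u * cm * s)) ≤ Real.exp (-(u * cm / 2)) := by
          apply Real.exp_le_exp.2
          nlinarith [hu2, Real.log_pos (by norm_num : (1:ℝ) < 2), hhalf]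
        have h2 : E u * Real.exp (-(u * cm / 2)) = Cc := by
          simp only [hCc, hEdef, ← Real.exp_add]
          try congr 1
          try ring
        have h3 : f x ≤ Cc := by
          rw [hfe]
          have h4 : Real.exp (e x) ≤ Cc := by
            calc Real.exp (e x) ≤ E u * Real.exp (-(u * cm * s)) := hex
              _ ≤ E u * Real.exp (-(u * cm / 2)) :=
                  mul_le_mul_of_nonneg_left h1 (hEpos u).le
              _ = Cc := h2
          linarith
        refine h3.trans ?_
        have h5 : 0 ≤ (E u / u) * m x := mul_nonneg hEu0 hmx0
        simp only [hg]
        linarith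
      · have h1 : Real.exp (-(u * cm * s)) ≤ 1 - s :=
          exp_le_one_sub hu2 hs0 hhalf.le
        have h2 : f x ≤ (E u / u) * m x := by
          rw [hfe]
          have h3 : E u * (1 - s) = (E u / u) * m x := by
            rw [hs]
            field_simp
            ring
          have h4 : E u * Real.exp (-(u * cm * s)) ≤ E u * (1 - s) :=
            mul_le_mul_of_nonneg_left h1 (hEpos u).le
          linarith [hex, h4, h3]
        refine h2.trans ?_
        simp only [hg]
        linarith
    have hν_le_g : ∀ x ∈ Icc v₀ (b u), ν u x ≤ g x := hmin g hgconc hfg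
    have hb_mem : b u ∈ Icc v₀ (b u) := ⟨hvb u hu.le, le_refl _⟩
    have hfb : f (b u) = F u := by
      rw [hfe, he_b u, hFE]
      simp only [hEdef]
    have hF0 : 0 ≤ F u := by
      rw [hFE]
      have h1 : 1 ≤ E u := hE_ge1 u hu.le
      linarith
    have hνtop : F u ≤ ν u (b u) := hfb ▸ hge (b u) hb_mem
    have hν_ge_l : ∀ x ∈ Icc v₀ (b u), (F u / u) * m x ≤ ν u x := by
      intro x hx
      set lam : ℝ := m x / u with hlam
      clear_value lam
      have hmx0 := hm_nonneg u x hx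
      have hmxu := hm_le_u u x hx
      have hlam0 : 0 ≤ lam := by rw [hlam]; exact div_nonneg hmx0 hu.le
      have hlam1 : lam ≤ 1 := by rw [hlam, div_le_one hu]; exact hmxu
      have hlmu : lam * u = m x := by rw [hlam]; field_simp
      have hgoal_eq : (F u / u) * m x = lam * F u := by
        rw [hlam]; ring
      rw [hgoal_eq]
      rcases eq_or_lt_of_le hlam1 with heq | hlt
      · have hmxeq : m x = u := by rw [← hlmu, heq, one_mul]
        have hxb : x = b u := by
          funext i
          have h1 := hm_le x i
          have h2 := hx.2 i
          rw [hb]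
          rw [hmxeq] at h1
          have h3 : b u i = v₀ i + u := hb u i
          rw [h3] at h2
          linarith
        rw [hxb, heq, one_mul]
        exact hνtop
      · have h1lam : 0 < 1 - lam := by linarith
        set y : Fin d → ℝ := fun i => (x i - lam * (v₀ i + u)) / (1 - lam) with hy
        clear_value y
        have hy_mem : y ∈ Icc v₀ (b u) := by
          constructor <;> intro i
          · simp only [hy]
            rw [le_div_iff₀ h1lam]
            have h2 := hm_le x i
            nlinarith [hlmu]
          · simp only [hy]
            rw [hb, div_le_iff₀ h1lam]
            have h2 := hx.2 i; rw [hb] at h2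
            nlinarith
        have hcomb : x = lam • (b u) + (1 - lam) • y := by
          funext i
          simp only [Pi.add_apply, Pi.smul_apply, smul_eq_mul, hb, hy]
          field_simp
          ring
        have hconc2 := hconc.2 hb_mem hy_mem hlam0 h1lam.le (by ring)
        rw [← hcomb] at hconc2
        simp only [smul_eq_mul] at hconc2
        have hνy : 0 ≤ ν u y := le_trans (hf_nonneg u y hy_mem) (hge y hy_mem)
        nlinarith [mul_le_mul_of_nonneg_left hνtop hlam0,
          mul_nonneg h1lam.le hνy]
    -- integrability of ν
    have hν_nonneg : ∀ x ∈ Icc v₀ (b u), 0 ≤ ν u x := fun x hx =>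
      le_trans (hf_nonneg u x hx) (hge x hx)
    have hg_int : IntegrableOn g (Icc v₀ (b u)) :=
      hgcont.continuousOn.integrableOn_compact isCompact_Icc
    set T : Set (Fin d → ℝ) := Set.pi Set.univ (fun i => Ioo (v₀ i) (b u i)) with hT
    have hT_open : IsOpen T := isOpen_set_pi finite_univ fun i _ => isOpen_Ioo
    have hT_sub : T ⊆ Icc v₀ (b u) := by
      rw [← Set.pi_univ_Icc]
      exact Set.pi_mono fun i _ => Ioo_subset_Icc_self
    have hT_ae : T =ᵐ[volume] Icc v₀ (b u) := by
      have h1 := MeasureTheory.Measure.univ_pi_Ioo_ae_eq_Icc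
        (μ := fun _ : Fin d => (volume : Measure ℝ)) (f := v₀) (g := b u)
      rwa [← MeasureTheory.volume_pi] at h1
    have hνT_cont : ContinuousOn (ν u) T :=
      hconc.continuousOn_interior.mono (interior_maximal hT_sub hT_open)
    have hν_int : IntegrableOn (ν u) (Icc v₀ (b u)) := by
      have hmT : MeasurableSet T := hT_open.measurableSet
      have haes : AEStronglyMeasurable (ν u) (volume.restrict T) :=
        hνT_cont.aestronglyMeasurable hmT
      have hintT : IntegrableOn (ν u) T := by
        refine Integrable.mono' (hg_int.mono_set hT_sub) haes ?_
        refine ae_restrict_of_forall_mem hmT fun x hx => ?_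
        rw [Real.norm_eq_abs, abs_of_nonneg (hν_nonneg x (hT_sub hx))]
        exact hν_le_g x (hT_sub hx)
      rwa [IntegrableOn, ← Measure.restrict_congr_set hT_ae]
    constructor
    · have hl_int : IntegrableOn (fun x => (F u / u) * m x) (Icc v₀ (b u)) :=
        ((continuous_const.mul hmc).continuousOn).integrableOn_compact isCompact_Icc
      have h1 := setIntegral_mono_on hl_int hν_int measurableSet_Icc hν_ge_l
      have h2 : (∫ x in Icc v₀ (b u), (F u / u) * m x)
          = (F u / u) * (u ^ (d+1) / ((d:ℝ)+1)) := by
        rw [MeasureTheory.integral_const_mul, hJ u hu]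
        try push_cast
        try ring
      rw [h2] at h1
      refine le_trans (le_of_eq ?_) h1
      rw [pow_succ]
      field_simp
    · have h1 := setIntegral_mono_on hν_int hg_int measurableSet_Icc hν_le_g
      have hm_int : IntegrableOn (fun x => (E u / u) * m x) (Icc v₀ (b u)) :=
        ((continuous_const.mul hmc).continuousOn).integrableOn_compact isCompact_Icc
      have hc_int : IntegrableOn (fun _ : Fin d → ℝ => Cc) (Icc v₀ (b u)) :=
        integrableOn_const isCompact_Icc.measure_lt_top.ne
      have h2 : (∫ x in Icc v₀ (b u), g x)
          = (E u / u) * (u ^ (d+1) / ((d:ℝ)+1)) + Cc * u ^ d := by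
        simp only [hg]
        rw [MeasureTheory.integral_add hm_int hc_int]
        rw [MeasureTheory.integral_const_mul, hJ u hu, setIntegral_const,
          measureReal_def, hvol u hu.le, smul_eq_mul]
        try push_cast
        try ring
      rw [h2] at h1
      refine h1.trans (le_of_eq ?_)
      rw [pow_succ]
      field_simp
  -- limits
  have hk_top : Tendsto (fun u : ℝ => A + u * S) atTop atTop :=
    tendsto_atTop_add_const_left _ A (Tendsto.atTop_mul_const hSpos tendsto_id)
  have hFE_lim : Tendsto (fun u => F u / E u) atTop (nhds 1) := by
    have h1 : Tendsto (fun u => 1 - (E u)⁻¹) atTop (nhds (1 - 0)) :=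
      tendsto_const_nhds.sub hE_top.inv_tendsto_atTop
    rw [sub_zero] at h1
    refine h1.congr fun u => ?_
    rw [hFE]
    have h2 := (hEpos u).ne'
    field_simp
  have hI_lim : Tendsto (fun u => I u / (u ^ d * E u)) atTop (nhds 0) := by
    have hupper : Tendsto (fun u : ℝ => (A + u * S)⁻¹) atTop (nhds 0) :=
      hk_top.inv_tendsto_atTop
    refine tendsto_of_tendsto_of_tendsto_of_le_of_le' tendsto_const_nhds hupper ?_ ?_
    · filter_upwards [eventually_gt_atTop 0] with u hu
      exact div_nonneg (hIb u hu).1 (mul_pos (pow_pos hu d) (hEpos u)).le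
    · filter_upwards [eventually_gt_atTop 0] with u hu
      have h1 := (hIb u hu).2
      have hk : 0 < A + u * S := hk_pos u hu
      have hE := hEpos u
      have hden : 0 < u ^ d * E u := mul_pos (pow_pos hu d) (hEpos u)
      calc I u / (u ^ d * E u) ≤ (u ^ d * E u / (A + u * S)) / (u ^ d * E u) := by
            gcongr
        _ = (A + u * S)⁻¹ := by
            field_simp
  have hcond : ∀ᶠ u : ℝ in atTop, 0 < u ∧ 2 * Real.log 2 ≤ u * cm := by
    filter_upwards [eventually_gt_atTop 0, eventually_ge_atTop (2 * Real.log 2 / cm)]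
      with u h1 h2
    refine ⟨h1, ?_⟩
    rw [div_le_iff₀ hcmpos] at h2
    linarith
  have hν_lim : Tendsto (fun u => (∫ x in Q u, ν u x) / (u ^ d * E u)) atTop
      (nhds (1/((d:ℝ)+1))) := by
    have hlow_lim : Tendsto (fun u => (F u / E u) * (1/((d:ℝ)+1))) atTop
        (nhds (1 * (1/((d:ℝ)+1)))) := hFE_lim.mul tendsto_const_nhds
    rw [one_mul] at hlow_lim
    have hexp_lim : Tendsto (fun u : ℝ => Real.exp (A + u * S - u * cm / 2) / E u)
        atTop (nhds 0) := by
      have h1 : ∀ u : ℝ, Real.exp (A + u * S - u * cm / 2) / E u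
          = ((fun u : ℝ => Real.exp (u * (cm / 2))) u)⁻¹ := by
        intro u
        simp only [hEdef]
        rw [← Real.exp_sub]
        have h2 : A + u * S - u * cm / 2 - (A + u * S) = -(u * (cm / 2)) := by ring
        rw [h2, Real.exp_neg]
      have h3 : Tendsto (fun u : ℝ => Real.exp (u * (cm / 2))) atTop atTop :=
        Real.tendsto_exp_atTop.comp (Tendsto.atTop_mul_const (half_pos hcmpos) tendsto_id)
      exact h3.inv_tendsto_atTop.congr fun u => (h1 u).symm
    have hup_lim : Tendsto
        (fun u : ℝ => 1/((d:ℝ)+1) + Real.exp (A + u * S - u * cm / 2) / E u) atTop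
        (nhds (1/((d:ℝ)+1) + 0)) := tendsto_const_nhds.add hexp_lim
    rw [add_zero] at hup_lim
    refine tendsto_of_tendsto_of_tendsto_of_le_of_le' hlow_lim hup_lim ?_ ?_
    · filter_upwards [hcond] with u hu
      obtain ⟨hu1, hu2⟩ := hu
      have h := (hνb u hu1 hu2).1
      rw [hQ' u hu1]
      have hE := (hEpos u).ne'
      have hu' := hu1.ne'
      have hden : 0 < u ^ d * E u := mul_pos (pow_pos hu1 d) (hEpos u)
      have hd1 : ((d:ℝ) + 1) ≠ 0 := by positivity
      calc (F u / E u) * (1/((d:ℝ)+1))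
          = (F u * u ^ d / ((d:ℝ)+1)) / (u ^ d * E u) := by
            field_simp
        _ ≤ _ := by gcongr
    · filter_upwards [hcond] with u hu
      obtain ⟨hu1, hu2⟩ := hu
      have h := (hνb u hu1 hu2).2
      rw [hQ' u hu1]
      have hE := (hEpos u).ne'
      have hu' := hu1.ne'
      have hden : 0 < u ^ d * E u := mul_pos (pow_pos hu1 d) (hEpos u)
      have hd1 : ((d:ℝ) + 1) ≠ 0 := by positivity
      calc (∫ x in Icc v₀ (b u), ν u x) / (u ^ d * E u)
          ≤ (u ^ d * E u / ((d:ℝ)+1) + Real.exp (A + u * S - u * cm / 2) * u ^ d)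
              / (u ^ d * E u) := by gcongr
        _ = 1/((d:ℝ)+1) + Real.exp (A + u * S - u * cm / 2) / E u := by
            field_simp
  -- assemble
  have hN_lim : Tendsto (fun u => ((u ^ d * F u) / ((d:ℝ)+2) - I u) / (u ^ d * E u))
      atTop (nhds (1/((d:ℝ)+2))) := by
    have h1 : Tendsto (fun u => (F u / E u) * (1/((d:ℝ)+2)) - I u / (u ^ d * E u))
        atTop (nhds (1 * (1/((d:ℝ)+2)) - 0)) :=
      (hFE_lim.mul tendsto_const_nhds).sub hI_lim
    rw [one_mul, sub_zero] at h1
    refine Tendsto.congr' ?_ h1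
    filter_upwards [eventually_gt_atTop 0] with u hu
    have hE := (hEpos u).ne'
    have hd2 : ((d:ℝ)+2) ≠ 0 := by positivity
    have hu' : u ≠ 0 := hu.ne'
    field_simp
  have hD_lim : Tendsto
      (fun u => ((1/((d:ℝ)+2)) * (∫ x in Q u, ν u x) - I u) / (u ^ d * E u))
      atTop (nhds ((1/((d:ℝ)+2)) * (1/((d:ℝ)+1)) - 0)) := by
    have h1 : Tendsto
        (fun u => (1/((d:ℝ)+2)) * ((∫ x in Q u, ν u x) / (u ^ d * E u)) - I u / (u ^ d * E u))
        atTop (nhds ((1/((d:ℝ)+2)) * (1/((d:ℝ)+1)) - 0)) :=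
      (tendsto_const_nhds.mul hν_lim).sub hI_lim
    refine Tendsto.congr (fun u => ?_) h1
    rw [sub_div, mul_div_assoc]
  have hL2 : (1/((d:ℝ)+2)) * (1/((d:ℝ)+1)) - 0 ≠ 0 := by
    rw [sub_zero]
    positivity
  have hfinal := hN_lim.div hD_lim hL2
  have hval : (1/((d:ℝ)+2)) / ((1/((d:ℝ)+2)) * (1/((d:ℝ)+1)) - 0) = (d:ℝ)+1 := by
    have h2 : ((d:ℝ)+2) ≠ 0 := by positivity
    have h3 : ((d:ℝ)+1) ≠ 0 := by positivity
    rw [sub_zero]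
    field_simp
  rw [hval] at hfinal
  refine Tendsto.congr' ?_ hfinal
  filter_upwards [eventually_gt_atTop 0] with u hu
  have hphi : (u ^ d * E u) ≠ 0 := (mul_pos (pow_pos hu d) (hEpos u)).ne'
  exact div_div_div_cancel_right₀ hphi _ _
end

section
/- Let d ≥ 1, let c ∈ ℝ^d with c > 0 componentwise, let v₀ ∈ ℝ^d with v₀ > 0 componentwise, and set f(x) := e^{cᵀx} − 1, Q_u := v₀ + u·[0,1]^d, F(u) := e^{cᵀv₀ + u·cᵀ𝟙} − 1, I(u) := ∫_0^1 z^d · (∫_{Q_u} f(z·x) dx) dz, and Δ(u) := (1/(d+2))·∫_{Q_u} f(x) dx − I(u). Then u^d · Δ(u) / ( (u^d·F(u))/(d+2) − I(u) ) tends to 1/∏_{j=1}^d c_j as u → ∞; equivalently, u^d · (d+1) · Δ(u) / ( (u^d·F(u))/(d+2) − I(u) ) tends to (d+1)/∏_{j=1}^d c_j as u → ∞. -/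
open MeasureTheory Filter

private lemma box_prod_integral {d : ℕ} (g : Fin d → ℝ → ℝ) (lo hi : Fin d → ℝ) :
    ∫ x in Set.Icc lo hi, ∏ i, g i (x i) =
      ∏ i, ∫ t in Set.Icc (lo i) (hi i), g i t := by
  rw [← MeasureTheory.integral_indicator measurableSet_Icc]
  have h : (Set.Icc lo hi).indicator (fun x : Fin d → ℝ => ∏ i, g i (x i)) =
      fun x => ∏ i, (Set.Icc (lo i) (hi i)).indicator (g i) (x i) := by
    funext x
    by_cases hx : x ∈ Set.Icc lo hi
    · rw [Set.indicator_of_mem hx]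
      refine (Finset.prod_congr rfl fun i _ => ?_).symm
      rw [Set.indicator_of_mem (Set.mem_Icc.mpr ⟨hx.1 i, hx.2 i⟩)]
    · rw [Set.indicator_of_notMem hx]
      have hex : ∃ i, x i ∉ Set.Icc (lo i) (hi i) := by
        by_contra h'
        push_neg at h'
        exact hx (Set.mem_Icc.mpr ⟨fun i => (Set.mem_Icc.mp (h' i)).1, fun i => (Set.mem_Icc.mp (h' i)).2⟩)
      obtain ⟨i, hi'⟩ := hex
      exact (Finset.prod_eq_zero (Finset.mem_univ i) (Set.indicator_of_notMem hi' _)).symm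
  rw [h, MeasureTheory.integral_fintype_prod_volume_eq_prod]
  simp_rw [MeasureTheory.integral_indicator measurableSet_Icc]

private lemma integral_Icc_exp_mul {k a b : ℝ} (hk : k ≠ 0) (hab : a ≤ b) :
    ∫ t in Set.Icc a b, Real.exp (k * t) = (Real.exp (k * b) - Real.exp (k * a)) / k := by
  rw [MeasureTheory.integral_Icc_eq_integral_Ioc, ← intervalIntegral.integral_of_le hab,
    intervalIntegral.integral_comp_mul_left (fun t => Real.exp t) hk, integral_exp,
    smul_eq_mul]
  field_simp

private lemma box_exp_integral {d : ℕ} (k lo hi : Fin d → ℝ) (hk : ∀ i, k i ≠ 0)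
    (hle : lo ≤ hi) :
    ∫ x in Set.Icc lo hi, Real.exp (∑ i, k i * x i) =
      ∏ i, (Real.exp (k i * hi i) - Real.exp (k i * lo i)) / k i := by
  have h : ∀ x : Fin d → ℝ, Real.exp (∑ i, k i * x i) = ∏ i, Real.exp (k i * x i) :=
    fun x => Real.exp_sum _ _
  simp_rw [h]
  rw [box_prod_integral (fun i t => Real.exp (k i * t))]
  exact Finset.prod_congr rfl fun i _ => integral_Icc_exp_mul (hk i) (hle i)

private lemma box_integral_one {d : ℕ} (lo hi : Fin d → ℝ) (hle : lo ≤ hi) :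
    ∫ _x in Set.Icc lo hi, (1:ℝ) = ∏ i, (hi i - lo i) := by
  have h := box_prod_integral (fun (_ : Fin d) (_ : ℝ) => (1:ℝ)) lo hi
  simp only [Finset.prod_const_one] at h
  rw [h]
  refine Finset.prod_congr rfl fun i _ => ?_
  rw [setIntegral_const, smul_eq_mul, mul_one, Real.volume_real_Icc_of_le (hle i)]

private lemma exp_sum_continuous {d : ℕ} (k : Fin d → ℝ) :
    Continuous (fun x : Fin d → ℝ => Real.exp (∑ i, k i * x i)) :=
  Real.continuous_exp.comp (continuous_finset_sum _ fun i _ =>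
    continuous_const.mul (continuous_apply i))

private lemma box_f_integral {d : ℕ} (k lo hi : Fin d → ℝ) (hk : ∀ i, k i ≠ 0)
    (hle : lo ≤ hi) :
    ∫ x in Set.Icc lo hi, (Real.exp (∑ i, k i * x i) - 1) =
      ∏ i, (Real.exp (k i * hi i) - Real.exp (k i * lo i)) / k i - ∏ i, (hi i - lo i) := by
  rw [MeasureTheory.integral_sub
      ((exp_sum_continuous k).continuousOn.integrableOn_compact isCompact_Icc)
      (integrableOn_const isCompact_Icc.measure_lt_top.ne),
    box_exp_integral k lo hi hk hle, box_integral_one lo hi hle]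

private lemma box_image {d : ℕ} (v₀ : Fin d → ℝ) {u : ℝ} (hu : 0 < u) :
    (fun y : Fin d → ℝ => v₀ + u • y) '' Set.Icc (0 : Fin d → ℝ) 1 =
      Set.Icc v₀ (v₀ + u • (1 : Fin d → ℝ)) := by
  ext x
  simp only [Set.mem_image, Set.mem_Icc, Pi.le_def, Pi.add_apply, Pi.smul_apply,
    smul_eq_mul, Pi.one_apply, Pi.zero_apply]
  constructor
  · rintro ⟨y, ⟨hy0, hy1⟩, rfl⟩
    constructor
    · intro i
      simp only [Pi.add_apply, Pi.smul_apply, smul_eq_mul]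
      nlinarith [hy0 i]
    · intro i
      simp only [Pi.add_apply, Pi.smul_apply, smul_eq_mul, Pi.one_apply]
      nlinarith [hy1 i]
  · rintro ⟨h1, h2⟩
    refine ⟨u⁻¹ • (x - v₀), ⟨fun i => ?_, fun i => ?_⟩, ?_⟩
    · show (0:ℝ) ≤ u⁻¹ * (x i - v₀ i)
      have h1i := h1 i
      exact mul_nonneg (inv_nonneg.mpr hu.le) (by linarith)
    · show u⁻¹ * (x i - v₀ i) ≤ 1
      have h2i := h2 i
      rw [inv_mul_le_iff₀ hu]
      linarith
    · rw [smul_smul, mul_inv_cancel₀ (ne_of_gt hu), one_smul]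
      abel
/-- Asymptotics of the cut-off ratio for `f(x) = e^{cᵀx} − 1` on the box
`Q_u = v₀ + u·[0,1]^d`, against the constant upper bound `F`. -/
theorem stmt_16 (d : ℕ) (hd : 1 ≤ d) (c v₀ : Fin d → ℝ)
    (hc : ∀ i, 0 < c i) (hv : ∀ i, 0 < v₀ i)
    (f : (Fin d → ℝ) → ℝ) (hf : f = fun x => Real.exp (∑ i, c i * x i) - 1)
    (Q : ℝ → Set (Fin d → ℝ))
    (hQ : ∀ u : ℝ, Q u = (fun y : Fin d → ℝ => v₀ + u • y) '' Set.Icc (0 : Fin d → ℝ) 1)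
    (F : ℝ → ℝ)
    (hF : ∀ u : ℝ, F u = Real.exp (∑ i, c i * v₀ i + u * ∑ i, c i) - 1)
    (I : ℝ → ℝ)
    (hI : ∀ u : ℝ, I u = ∫ z in (0:ℝ)..1, z ^ d * ∫ x in Q u, f (z • x))
    (Δ : ℝ → ℝ)
    (hΔ : ∀ u : ℝ, Δ u = (1 / ((d : ℝ) + 2)) * (∫ x in Q u, f x) - I u) :
    Tendsto (fun u : ℝ => u ^ d * Δ u / ((u ^ d * F u) / ((d : ℝ) + 2) - I u))
        atTop (nhds (1 / ∏ j, c j)) ∧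
      Tendsto (fun u : ℝ =>
          u ^ d * (((d : ℝ) + 1) * Δ u) / ((u ^ d * F u) / ((d : ℝ) + 2) - I u))
        atTop (nhds (((d : ℝ) + 1) / ∏ j, c j)) := by
  haveI : NeZero d := ⟨Nat.one_le_iff_ne_zero.mp hd⟩
  haveI : Nonempty (Fin d) := ⟨⟨0, hd⟩⟩
  set Pc : ℝ := ∏ j, c j with hPcdef
  set S : ℝ := ∑ i, c i * v₀ i with hSdef
  set T : ℝ := ∑ i, c i with hTdef
  have hPc : 0 < Pc := Finset.prod_pos fun i _ => hc i
  have hT : 0 < T := Finset.sum_pos (fun i _ => hc i) Finset.univ_nonempty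
  have hS : 0 < S := Finset.sum_pos (fun i _ => mul_pos (hc i) (hv i)) Finset.univ_nonempty
  have hd1 : ((d : ℝ) + 1) ≠ 0 := by positivity
  have hd2 : ((d : ℝ) + 2) ≠ 0 := by positivity
  -- the product function
  set g : ℝ → ℝ → ℝ := fun u z =>
    ∏ j, (Real.exp (z * c j * (v₀ j + u)) - Real.exp (z * c j * v₀ j)) with hgdef
  set J : ℝ → ℝ := fun u => ∫ z in (0:ℝ)..1, g u z with hJdef
  have hgcont : ∀ u, Continuous (g u) := by
    intro u
    exact continuous_finset_prod _ fun j _ => by fun_prop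
  -- box description of Q u
  have hle : ∀ u : ℝ, 0 ≤ u → v₀ ≤ v₀ + u • (1 : Fin d → ℝ) := by
    intro u hu i
    simp only [Pi.add_apply, Pi.smul_apply, Pi.one_apply, smul_eq_mul, mul_one, le_add_iff_nonneg_right]
    exact hu
  have hQu : ∀ u : ℝ, 0 < u → Q u = Set.Icc v₀ (v₀ + u • (1 : Fin d → ℝ)) := by
    intro u hu; rw [hQ]; exact box_image v₀ hu
  have hone : ∀ u : ℝ, (∏ j : Fin d, ((v₀ + u • (1 : Fin d → ℝ)) j - v₀ j)) = u ^ d := by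
    intro u
    have : ∀ j : Fin d, (v₀ + u • (1 : Fin d → ℝ)) j - v₀ j = u := by
      intro j; simp
    simp_rw [this]
    simp [Finset.prod_const, Finset.card_univ]
  -- integral of f over Q u
  have hAu : ∀ u : ℝ, 0 < u → (∫ x in Q u, f x) = Pc⁻¹ * g u 1 - u ^ d := by
    intro u hu
    rw [hQu u hu, hf, box_f_integral c v₀ _ (fun i => (hc i).ne') (hle u hu.le),
      Finset.prod_div_distrib, hone u]
    rw [hgdef]
    simp only [one_mul]
    have : ∀ j : Fin d, c j * (v₀ + u • (1 : Fin d → ℝ)) j = c j * (v₀ j + u) := by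
      intro j; simp
    simp_rw [this]
    rw [← hPcdef, div_eq_inv_mul]
  -- formula for I u
  have hIu : ∀ u : ℝ, 0 < u → I u = Pc⁻¹ * J u - u ^ d * (1 / ((d : ℝ) + 1)) := by
    intro u hu
    rw [hI u]
    have hcongr : Set.EqOn (fun z : ℝ => z ^ d * ∫ x in Q u, f (z • x))
        (fun z : ℝ => Pc⁻¹ * g u z - u ^ d * z ^ d) (Set.uIcc 0 1) := by
      intro z hz
      rw [Set.uIcc_of_le zero_le_one] at hz
      rcases eq_or_lt_of_le hz.1 with h0 | h0
      · -- z = 0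
        have hz0 : z = 0 := h0.symm
        subst hz0
        simp only
        rw [zero_pow (Nat.one_le_iff_ne_zero.mp hd), zero_mul, mul_zero, sub_zero]
        have : g u 0 = 0 := by
          rw [hgdef]
          simp only [zero_mul]
          rw [Finset.prod_eq_zero (Finset.mem_univ (Classical.arbitrary (Fin d)))]
          simp
        rw [this, mul_zero]
      · -- 0 < z
        simp only
        rw [hQu u hu, hf]
        have hfz : ∀ x : Fin d → ℝ,
            Real.exp (∑ i, c i * (z • x) i) - 1 = Real.exp (∑ i, (z * c i) * x i) - 1 := by
          intro x
          have hsum : ∑ i, c i * (z • x) i = ∑ i, (z * c i) * x i :=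
            Finset.sum_congr rfl fun i _ => by
              simp only [Pi.smul_apply, smul_eq_mul]; ring
          rw [hsum]
        simp_rw [hfz]
        rw [box_f_integral (fun i => z * c i) v₀ _ (fun i => (mul_pos h0 (hc i)).ne')
          (hle u hu.le), Finset.prod_div_distrib, hone u]
        have hprodz : (∏ j : Fin d, (z * c j)) = z ^ d * Pc := by
          rw [Finset.prod_mul_distrib, Finset.prod_const, Finset.card_univ, Fintype.card_fin,
            hPcdef]
        have hnum : (∏ j, (Real.exp (z * c j * ((v₀ + u • (1 : Fin d → ℝ)) j)) -
            Real.exp (z * c j * v₀ j))) = g u z := by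
          rw [hgdef]
          apply Finset.prod_congr rfl
          intro j _
          simp
        rw [hprodz, hnum]
        have hzd : z ^ d ≠ 0 := pow_ne_zero _ h0.ne'
        field_simp
    rw [intervalIntegral.integral_congr hcongr]
    rw [intervalIntegral.integral_sub
      (by have h : Continuous fun z => Pc⁻¹ * g u z := continuous_const.mul (hgcont u)
          exact h.intervalIntegrable 0 1)
      (by have h : Continuous fun z : ℝ => u ^ d * z ^ d := continuous_const.mul (continuous_pow d)
          exact h.intervalIntegrable 0 1),
      intervalIntegral.integral_const_mul, intervalIntegral.integral_const_mul,
      integral_pow]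
    have hJfold : (∫ z in (0:ℝ)..1, g u z) = J u := rfl
    rw [hJfold]
    norm_num
  -- bounds on J
  have hJ0 : ∀ u : ℝ, 0 < u → 0 ≤ J u := by
    intro u hu
    apply intervalIntegral.integral_nonneg zero_le_one
    intro z hz
    apply Finset.prod_nonneg
    intro j _
    have : Real.exp (z * c j * v₀ j) ≤ Real.exp (z * c j * (v₀ j + u)) := by
      apply Real.exp_le_exp.mpr
      nlinarith [mul_nonneg (mul_nonneg hz.1 (hc j).le) hu.le]
    linarith
  have hJle : ∀ u : ℝ, 0 < u → J u ≤ Real.exp (S + u * T) / (S + u * T) := by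
    intro u hu
    have hM : 0 < S + u * T := by nlinarith [mul_pos hu hT]
    have step1 : J u ≤ ∫ z in (0:ℝ)..1, Real.exp ((S + u * T) * z) := by
      apply intervalIntegral.integral_mono_on zero_le_one
        ((hgcont u).intervalIntegrable _ _)
        ((Real.continuous_exp.comp (continuous_const.mul continuous_id)).intervalIntegrable _ _)
      intro z hz
      have h1 : g u z ≤ ∏ j, Real.exp (z * c j * (v₀ j + u)) := by
        apply Finset.prod_le_prod
        · intro j _
          have : Real.exp (z * c j * v₀ j) ≤ Real.exp (z * c j * (v₀ j + u)) := by
            apply Real.exp_le_exp.mpr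
            nlinarith [mul_nonneg (mul_nonneg hz.1 (hc j).le) hu.le]
          linarith
        · intro j _
          have := Real.exp_pos (z * c j * v₀ j)
          linarith
      have h2 : (∏ j, Real.exp (z * c j * (v₀ j + u))) = Real.exp ((S + u * T) * z) := by
        rw [← Real.exp_sum]
        congr 1
        have e1 : S + u * T = ∑ j, (c j * v₀ j + u * c j) := by
          rw [hSdef, hTdef, Finset.mul_sum, ← Finset.sum_add_distrib]
        rw [e1, Finset.sum_mul]
        exact Finset.sum_congr rfl fun j _ => by ring
      calc g u z ≤ ∏ j, Real.exp (z * c j * (v₀ j + u)) := h1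
        _ = Real.exp ((S + u * T) * z) := h2
    have step2 : (∫ z in (0:ℝ)..1, Real.exp ((S + u * T) * z)) =
        (Real.exp (S + u * T) - 1) / (S + u * T) := by
      rw [intervalIntegral.integral_comp_mul_left (fun t => Real.exp t) hM.ne']
      rw [mul_zero, mul_one, integral_exp, smul_eq_mul, Real.exp_zero]
      ring
    have step3 : (Real.exp (S + u * T) - 1) / (S + u * T) ≤ Real.exp (S + u * T) / (S + u * T) := by
      gcongr
      linarith
    calc J u ≤ _ := step1
      _ = _ := step2
      _ ≤ _ := step3
  -- asymptotic pieces
  have hMtop : Tendsto (fun u : ℝ => S + u * T) atTop atTop :=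
    tendsto_atTop_add_const_left _ S (Tendsto.atTop_mul_const hT tendsto_id)
  have hMinv : Tendsto (fun u : ℝ => (S + u * T)⁻¹) atTop (nhds 0) :=
    tendsto_inv_atTop_zero.comp hMtop
  have hexpM0 : Tendsto (fun u : ℝ => Real.exp (-(S + u * T))) atTop (nhds 0) :=
    Real.tendsto_exp_neg_atTop_nhds_zero.comp hMtop
  have hK1 : Tendsto (fun u : ℝ => J u / Real.exp (S + u * T)) atTop (nhds 0) := by
    apply squeeze_zero' ?_ ?_ hMinv
    · filter_upwards [eventually_gt_atTop (0:ℝ)] with u hu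
      exact div_nonneg (hJ0 u hu) (Real.exp_pos _).le
    · filter_upwards [eventually_gt_atTop (0:ℝ)] with u hu
      have hM : 0 < S + u * T := by nlinarith [mul_pos hu hT]
      rw [div_le_iff₀ (Real.exp_pos _)]
      calc J u ≤ Real.exp (S + u * T) / (S + u * T) := hJle u hu
        _ = (S + u * T)⁻¹ * Real.exp (S + u * T) := by ring
  have hK2 : Tendsto (fun u : ℝ => J u / (u ^ d * Real.exp (S + u * T))) atTop (nhds 0) := by
    apply squeeze_zero' ?_ ?_ hMinv
    · filter_upwards [eventually_gt_atTop (0:ℝ)] with u hu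
      exact div_nonneg (hJ0 u hu) (mul_nonneg (pow_nonneg hu.le d) (Real.exp_pos _).le)
    · filter_upwards [eventually_ge_atTop (1:ℝ)] with u hu
      have hu0 : (0:ℝ) < u := lt_of_lt_of_le one_pos hu
      have hM : 0 < S + u * T := by nlinarith [mul_pos hu0 hT]
      have hud : (1:ℝ) ≤ u ^ d := one_le_pow₀ hu
      rw [div_le_iff₀ (mul_pos (pow_pos hu0 d) (Real.exp_pos _))]
      calc J u ≤ Real.exp (S + u * T) / (S + u * T) := hJle u hu0
        _ = (S + u * T)⁻¹ * (1 * Real.exp (S + u * T)) := by ring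
        _ ≤ (S + u * T)⁻¹ * (u ^ d * Real.exp (S + u * T)) := by
            apply mul_le_mul_of_nonneg_left ?_ (inv_nonneg.mpr hM.le)
            exact mul_le_mul_of_nonneg_right hud (Real.exp_pos _).le
  have hpoly : Tendsto (fun u : ℝ => u ^ d * Real.exp (-(S + u * T))) atTop (nhds 0) := by
    have hbase := tendsto_rpow_mul_exp_neg_mul_atTop_nhds_zero (d : ℝ) T hT
    have h2 := hbase.const_mul (Real.exp (-S))
    rw [mul_zero] at h2
    apply h2.congr'
    filter_upwards [eventually_gt_atTop (0:ℝ)] with u hu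
    rw [Real.rpow_natCast, show -(S + u * T) = -S + -T * u by ring, Real.exp_add]
    ring
  have hprod1 : Tendsto (fun u : ℝ => ∏ j, (1 - Real.exp (-(c j * u)))) atTop (nhds 1) := by
    have h : Tendsto (fun u : ℝ => ∏ j, (1 - Real.exp (-(c j * u)))) atTop
        (nhds (∏ _j : Fin d, (1:ℝ))) := by
      apply tendsto_finset_prod
      intro j _
      have hexp : Tendsto (fun u : ℝ => Real.exp (-(c j * u))) atTop (nhds 0) :=
        Real.tendsto_exp_neg_atTop_nhds_zero.comp (Tendsto.const_mul_atTop (hc j) tendsto_id)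
      simpa using tendsto_const_nhds.sub hexp
    simpa using h
  -- the nice functions
  set φN : ℝ → ℝ := fun u => Pc⁻¹ * (((d:ℝ)+2)⁻¹ * ∏ j, (1 - Real.exp (-(c j * u)))
      - J u / Real.exp (S + u * T))
      + (((d:ℝ)+1)⁻¹ - ((d:ℝ)+2)⁻¹) * (u ^ d * Real.exp (-(S + u * T))) with hφNdef
  set φD : ℝ → ℝ := fun u => ((d:ℝ)+2)⁻¹ * (1 - Real.exp (-(S + u * T)))
      - Pc⁻¹ * (J u / (u ^ d * Real.exp (S + u * T)))
      + ((d:ℝ)+1)⁻¹ * Real.exp (-(S + u * T)) with hφDdef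
  have limφN : Tendsto φN atTop
      (nhds (Pc⁻¹ * (((d:ℝ)+2)⁻¹ * 1 - 0) + (((d:ℝ)+1)⁻¹ - ((d:ℝ)+2)⁻¹) * 0)) :=
    (Tendsto.const_mul _ ((Tendsto.const_mul _ hprod1).sub hK1)).add
      (Tendsto.const_mul _ hpoly)
  have limφD : Tendsto φD atTop
      (nhds (((d:ℝ)+2)⁻¹ * (1 - 0) - Pc⁻¹ * 0 + ((d:ℝ)+1)⁻¹ * 0)) :=
    ((Tendsto.const_mul _ (tendsto_const_nhds.sub hexpM0)).sub
      (Tendsto.const_mul _ hK2)).add (Tendsto.const_mul _ hexpM0)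
  have hDne : (((d:ℝ)+2)⁻¹ * (1 - 0) - Pc⁻¹ * 0 + ((d:ℝ)+1)⁻¹ * 0) ≠ 0 := by
    simp only [sub_zero, mul_one, mul_zero, add_zero]
    exact inv_ne_zero hd2
  have limratio : Tendsto (fun u => φN u / φD u) atTop (nhds (1 / Pc)) := by
    have h := limφN.div limφD hDne
    have hval : (Pc⁻¹ * (((d:ℝ)+2)⁻¹ * 1 - 0) + (((d:ℝ)+1)⁻¹ - ((d:ℝ)+2)⁻¹) * 0) /
        (((d:ℝ)+2)⁻¹ * (1 - 0) - Pc⁻¹ * 0 + ((d:ℝ)+1)⁻¹ * 0) = 1 / Pc := by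
      simp only [sub_zero, mul_one, mul_zero, add_zero]
      rw [mul_div_assoc, div_self (inv_ne_zero hd2), mul_one, one_div]
    rwa [hval] at h
  -- identification of g u 1 with the product form
  have hg1 : ∀ u : ℝ, g u 1 = Real.exp (S + u * T) * ∏ j, (1 - Real.exp (-(c j * u))) := by
    intro u
    have hsum : S + u * T = ∑ j, (c j * v₀ j + c j * u) := by
      rw [hSdef, hTdef, Finset.mul_sum, ← Finset.sum_add_distrib]
      exact Finset.sum_congr rfl fun j _ => by ring
    rw [hsum, Real.exp_sum, ← Finset.prod_mul_distrib, hgdef]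
    apply Finset.prod_congr rfl
    intro j _
    rw [mul_sub, mul_one, ← Real.exp_add]
    congr 2
    · ring
    · ring
  -- eventual equality of the ratio with φN/φD
  have hEq : (fun u : ℝ => u ^ d * Δ u / ((u ^ d * F u) / ((d : ℝ) + 2) - I u))
      =ᶠ[atTop] fun u => φN u / φD u := by
    filter_upwards [eventually_gt_atTop (0:ℝ)] with u hu
    have hX : Real.exp (S + u * T) ≠ 0 := (Real.exp_pos _).ne'
    have hw : u ^ d ≠ 0 := pow_ne_zero _ hu.ne'
    have hE : u ^ d * Real.exp (S + u * T) ≠ 0 := mul_ne_zero hw hX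
    have hNum : u ^ d * Δ u = φN u * (u ^ d * Real.exp (S + u * T)) := by
      rw [hΔ u, hAu u hu, hIu u hu, hφNdef]
      simp only
      rw [hg1 u, Real.exp_neg]
      field_simp
      ring
    have hDen : (u ^ d * F u) / ((d : ℝ) + 2) - I u = φD u * (u ^ d * Real.exp (S + u * T)) := by
      rw [hF u, hIu u hu, hφDdef]
      simp only
      rw [Real.exp_neg]
      field_simp
      ring
    rw [hNum, hDen, mul_div_mul_right _ _ hE]
  have main1 : Tendsto (fun u : ℝ => u ^ d * Δ u / ((u ^ d * F u) / ((d : ℝ) + 2) - I u))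
      atTop (nhds (1 / Pc)) := Tendsto.congr' hEq.symm limratio
  refine ⟨main1, ?_⟩
  have h2 := main1.const_mul (((d:ℝ)+1))
  have hv2 : ((d:ℝ)+1) * (1 / Pc) = ((d:ℝ)+1) / Pc := mul_one_div _ _
  rw [hv2] at h2
  apply h2.congr
  intro u
  rw [← mul_div_assoc]
  congr 1
  ring
end

section
/- Let d ≥ 1, let f : ℝ^d → ℝ be a nonnegative continuous convex function with f(0) = 0, let v₀ ∈ ℝ^d with v₀ > 0 componentwise, and for each u > 0 set Q_u := v₀ + u·[0,1]^d and let μ_u : Q_u → ℝ be a continuous concave function with μ_u(x) ≥ f(x) for all x ∈ Q_u. Set I(u) := ∫_0^1 z^d · (∫_{Q_u} f(z·x) dx) dz, Δ(u) := (1/(d+2))·∫_{Q_u} f(x) dx − I(u), and V(u) := (1/(d+2))·∫_{Q_u} μ_u(x) dx − I(u), and assume ∫_{[0,1]^d} μ_u(v₀ + u·x) dx > 0 for all sufficiently large u. If ( ∫_{[0,1]^d} f(v₀ + u·x) dx ) / ( ∫_{[0,1]^d} μ_u(v₀ + u·x) dx ) tends to 0 as u → ∞, then Δ(u)/V(u)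 tends to 0 as u → ∞. -/
open MeasureTheory Filter

lemma cov18 {d : ℕ} (v₀ : Fin d → ℝ) {u : ℝ} (hu : 0 < u) (g : (Fin d → ℝ) → ℝ) :
    ∫ x in (fun y : Fin d → ℝ => v₀ + u • y) '' Set.Icc 0 1, g x
      = u ^ d * ∫ x in Set.Icc (0 : Fin d → ℝ) 1, g (v₀ + u • x) := by
  have hs : MeasurableSet (Set.Icc (0 : Fin d → ℝ) 1) := measurableSet_Icc
  have hderiv : ∀ x ∈ Set.Icc (0 : Fin d → ℝ) 1,
      HasFDerivWithinAt (fun y : Fin d → ℝ => v₀ + u • y)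
        (u • ContinuousLinearMap.id ℝ (Fin d → ℝ)) (Set.Icc 0 1) x := by
    intro x _
    exact (((hasFDerivAt_id x).const_smul u).const_add v₀).hasFDerivWithinAt
  have hinj : Set.InjOn (fun y : Fin d → ℝ => v₀ + u • y) (Set.Icc 0 1) := by
    intro a _ b _ h
    have : u • a = u • b := by simpa using h
    exact smul_right_injective _ hu.ne' this
  rw [integral_image_eq_integral_abs_det_fderiv_smul volume hs hderiv hinj g]
  have hdet : (u • ContinuousLinearMap.id ℝ (Fin d → ℝ)).det = u ^ d := by
    simp [ContinuousLinearMap.det, LinearMap.det_smul]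
  simp only [hdet, abs_of_pos (pow_pos hu d), smul_eq_mul]
  rw [integral_const_mul]

/-- A sufficient condition for a nonnegative convex function `f` with `f(0) = 0`
to have asymptotic cut-off ratio `0` on the scaled box `Q_u = v₀ + u·[0,1]^d`. -/
theorem stmt_18 (d : ℕ) (hd : 1 ≤ d)
    (f : (Fin d → ℝ) → ℝ) (hf0 : f 0 = 0) (hfnn : ∀ x, 0 ≤ f x)
    (hfc : Continuous f) (hfv : ConvexOn ℝ Set.univ f)
    (v₀ : Fin d → ℝ) (hv : ∀ i, 0 < v₀ i)
    (Q : ℝ → Set (Fin d → ℝ))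
    (hQ : ∀ u : ℝ, Q u = (fun y : Fin d → ℝ => v₀ + u • y) '' Set.Icc (0 : Fin d → ℝ) 1)
    (μ : ℝ → (Fin d → ℝ) → ℝ)
    (hμ : ∀ u : ℝ, 0 < u → ContinuousOn (μ u) (Q u) ∧ ConcaveOn ℝ (Q u) (μ u) ∧
      ∀ x ∈ Q u, f x ≤ μ u x)
    (I Δ V : ℝ → ℝ)
    (hI : ∀ u : ℝ, I u = ∫ z in (0:ℝ)..1, z ^ d * ∫ x in Q u, f (z • x))
    (hΔ : ∀ u : ℝ, Δ u = (1 / ((d : ℝ) + 2)) * (∫ x in Q u, f x) - I u)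
    (hV : ∀ u : ℝ, V u = (1 / ((d : ℝ) + 2)) * (∫ x in Q u, μ u x) - I u)
    (hpos : ∀ᶠ u in atTop, 0 < ∫ x in Set.Icc (0 : Fin d → ℝ) 1, μ u (v₀ + u • x))
    (hratio : Tendsto (fun u : ℝ =>
        (∫ x in Set.Icc (0 : Fin d → ℝ) 1, f (v₀ + u • x)) /
          (∫ x in Set.Icc (0 : Fin d → ℝ) 1, μ u (v₀ + u • x))) atTop (nhds 0)) :
    Tendsto (fun u : ℝ => Δ u / V u) atTop (nhds 0) := by
  set c : ℝ := 1 / ((d : ℝ) + 2) with hcdef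
  have hc : 0 < c := by positivity
  set F : ℝ → ℝ := fun u => ∫ x in Set.Icc (0 : Fin d → ℝ) 1, f (v₀ + u • x) with hFdef
  set M : ℝ → ℝ := fun u => ∫ x in Set.Icc (0 : Fin d → ℝ) 1, μ u (v₀ + u • x) with hMdef
  set r : ℝ → ℝ := fun u => F u / M u with hrdef
  -- the comparison function
  have hcomp : Tendsto (fun u => r u / (1 - r u)) atTop (nhds 0) := by
    have h1 : Tendsto (fun u => 1 - r u) atTop (nhds (1 - 0)) :=
      tendsto_const_nhds.sub hratio
    have := hratio.div h1 (by norm_num)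
    rw [sub_zero, zero_div] at this
    exact this
  -- squeeze
  apply squeeze_zero' (g := fun u => r u / (1 - r u))
  · -- 0 ≤ Δ u / V u eventually
    filter_upwards [hpos, eventually_gt_atTop (0 : ℝ),
      hratio.eventually (eventually_lt_nhds (by norm_num : (0:ℝ) < 1/2))] with u hM hu hr2
    -- basic facts about Q u
    have hQc : IsCompact (Q u) := by
      rw [hQ]
      exact (isCompact_Icc).image (by fun_prop)
    have hQm : MeasurableSet (Q u) := hQc.measurableSet
    have hfint : IntegrableOn f (Q u) := hfc.continuousOn.integrableOn_compact hQc
    have hFQnn : 0 ≤ ∫ x in Q u, f x :=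
      setIntegral_nonneg hQm fun x _ => hfnn x
    have hInn : 0 ≤ I u := by
      rw [hI]
      apply intervalIntegral.integral_nonneg (by norm_num)
      intro z hz
      exact mul_nonneg (pow_nonneg hz.1 d) (setIntegral_nonneg hQm fun x _ => hfnn _)
    have hIle : I u ≤ c * ∫ x in Q u, f x := by
      rw [hI]
      by_cases hint : IntervalIntegrable
          (fun z : ℝ => z ^ d * ∫ x in Q u, f (z • x)) volume 0 1
      · have hle : ∀ z ∈ Set.Icc (0:ℝ) 1,
            z ^ d * (∫ x in Q u, f (z • x)) ≤ z ^ (d + 1) * ∫ x in Q u, f x := by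
          intro z hz
          have hzf : ∀ x, f (z • x) ≤ z * f x := by
            intro x
            have := hfv.2 (Set.mem_univ x) (Set.mem_univ (0 : Fin d → ℝ)) hz.1
              (by linarith [hz.2] : (0:ℝ) ≤ 1 - z) (by ring)
            simpa [hf0, smul_eq_mul] using this
          have h1 : (∫ x in Q u, f (z • x)) ≤ ∫ x in Q u, z * f x := by
            apply setIntegral_mono_on
            · exact (hfc.comp (continuous_const_smul z)).continuousOn.integrableOn_compact hQc
            · exact hfint.const_mul z
            · exact hQm
            · exact fun x _ => hzf x
          have h2 : (∫ x in Q u, z * f x) = z * ∫ x in Q u, f x := integral_const_mul z _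
          calc z ^ d * (∫ x in Q u, f (z • x)) ≤ z ^ d * (z * ∫ x in Q u, f x) :=
                mul_le_mul_of_nonneg_left (h1.trans_eq h2) (pow_nonneg hz.1 d)
            _ = z ^ (d + 1) * ∫ x in Q u, f x := by ring
        have hint2 : IntervalIntegrable
            (fun z : ℝ => z ^ (d + 1) * ∫ x in Q u, f x) volume 0 1 :=
          ((continuous_pow (d+1)).mul continuous_const).intervalIntegrable 0 1
        have := intervalIntegral.integral_mono_on (by norm_num) hint hint2
          (fun z hz => hle z hz)
        calc (∫ z in (0:ℝ)..1, z ^ d * ∫ x in Q u, f (z • x))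
            ≤ ∫ z in (0:ℝ)..1, z ^ (d + 1) * ∫ x in Q u, f x := this
          _ = (∫ z in (0:ℝ)..1, z ^ (d + 1)) * ∫ x in Q u, f x := by
              rw [intervalIntegral.integral_mul_const]
          _ = c * ∫ x in Q u, f x := by
              rw [integral_pow]
              push_cast
              rw [hcdef]
              ring_nf
      · rw [intervalIntegral.integral_undef hint]
        positivity
    have hΔnn : 0 ≤ Δ u := by
      rw [hΔ u]
      linarith
    -- V u > 0
    have hμu := hμ u hu
    have hμint : IntegrableOn (μ u) (Q u) := hμu.1.integrableOn_compact hQc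
    have hFM : (∫ x in Q u, f x) ≤ ∫ x in Q u, μ u x :=
      setIntegral_mono_on hfint hμint hQm fun x hx => hμu.2.2 x hx
    have hVpos : 0 < V u := by
      rw [hV u]
      have hFQ : (∫ x in Q u, f x) = u ^ d * F u := by
        rw [hQ]; exact cov18 v₀ hu f
      have hMQ : (∫ x in Q u, μ u x) = u ^ d * M u := by
        rw [hQ]; exact cov18 v₀ hu (μ u)
      have hFnn : 0 ≤ F u := setIntegral_nonneg measurableSet_Icc fun x _ => hfnn _
      have hFlt : F u < M u := by
        have : F u / M u < 1/2 := hr2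
        nlinarith [div_lt_iff₀ hM |>.1 this]
      have hud : (0:ℝ) < u ^ d := pow_pos hu d
      have : c * (∫ x in Q u, f x) < c * ∫ x in Q u, μ u x := by
        rw [hFQ, hMQ]
        have := mul_lt_mul_of_pos_left (mul_lt_mul_of_pos_left hFlt hud) hc
        linarith
      linarith
    exact div_nonneg hΔnn hVpos.le
  · -- Δ u / V u ≤ r u / (1 - r u) eventually
    filter_upwards [hpos, eventually_gt_atTop (0 : ℝ),
      hratio.eventually (eventually_lt_nhds (by norm_num : (0:ℝ) < 1/2))] with u hM hu hr2
    have hQc : IsCompact (Q u) := by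
      rw [hQ]
      exact (isCompact_Icc).image (by fun_prop)
    have hQm : MeasurableSet (Q u) := hQc.measurableSet
    have hfint : IntegrableOn f (Q u) := hfc.continuousOn.integrableOn_compact hQc
    have hFQ : (∫ x in Q u, f x) = u ^ d * F u := by
      rw [hQ]; exact cov18 v₀ hu f
    have hMQ : (∫ x in Q u, μ u x) = u ^ d * M u := by
      rw [hQ]; exact cov18 v₀ hu (μ u)
    have hFnn : 0 ≤ F u := setIntegral_nonneg measurableSet_Icc fun x _ => hfnn _
    have hud : (0:ℝ) < u ^ d := pow_pos hu d
    have hInn : 0 ≤ I u := by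
      rw [hI]
      apply intervalIntegral.integral_nonneg (by norm_num)
      intro z hz
      exact mul_nonneg (pow_nonneg hz.1 d) (setIntegral_nonneg hQm fun x _ => hfnn _)
    have hIle : I u ≤ c * ∫ x in Q u, f x := by
      rw [hI]
      by_cases hint : IntervalIntegrable
          (fun z : ℝ => z ^ d * ∫ x in Q u, f (z • x)) volume 0 1
      · have hle : ∀ z ∈ Set.Icc (0:ℝ) 1,
            z ^ d * (∫ x in Q u, f (z • x)) ≤ z ^ (d + 1) * ∫ x in Q u, f x := by
          intro z hz
          have hzf : ∀ x, f (z • x) ≤ z * f x := by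
            intro x
            have := hfv.2 (Set.mem_univ x) (Set.mem_univ (0 : Fin d → ℝ)) hz.1
              (by linarith [hz.2] : (0:ℝ) ≤ 1 - z) (by ring)
            simpa [hf0, smul_eq_mul] using this
          have h1 : (∫ x in Q u, f (z • x)) ≤ ∫ x in Q u, z * f x := by
            apply setIntegral_mono_on
            · exact (hfc.comp (continuous_const_smul z)).continuousOn.integrableOn_compact hQc
            · exact hfint.const_mul z
            · exact hQm
            · exact fun x _ => hzf x
          have h2 : (∫ x in Q u, z * f x) = z * ∫ x in Q u, f x := integral_const_mul z _
          calc z ^ d * (∫ x in Q u, f (z • x)) ≤ z ^ d * (z * ∫ x in Q u, f x) :=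
                mul_le_mul_of_nonneg_left (h1.trans_eq h2) (pow_nonneg hz.1 d)
            _ = z ^ (d + 1) * ∫ x in Q u, f x := by ring
        have hint2 : IntervalIntegrable
            (fun z : ℝ => z ^ (d + 1) * ∫ x in Q u, f x) volume 0 1 :=
          ((continuous_pow (d+1)).mul continuous_const).intervalIntegrable 0 1
        have := intervalIntegral.integral_mono_on (by norm_num) hint hint2
          (fun z hz => hle z hz)
        calc (∫ z in (0:ℝ)..1, z ^ d * ∫ x in Q u, f (z • x))
            ≤ ∫ z in (0:ℝ)..1, z ^ (d + 1) * ∫ x in Q u, f x := this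
          _ = (∫ z in (0:ℝ)..1, z ^ (d + 1)) * ∫ x in Q u, f x := by
              rw [intervalIntegral.integral_mul_const]
          _ = c * ∫ x in Q u, f x := by
              rw [integral_pow]
              push_cast
              rw [hcdef]
              ring_nf
      · rw [intervalIntegral.integral_undef hint]
        have hFQnn : 0 ≤ ∫ x in Q u, f x :=
          setIntegral_nonneg hQm fun x _ => hfnn x
        positivity
    -- key quantities
    have hr1 : r u < 1/2 := hr2
    have hrnn : 0 ≤ r u := div_nonneg hFnn hM.le
    have hFr : F u = r u * M u := by
      rw [hrdef]
      field_simp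
      exact (mul_div_cancel_right₀ _ (show M u ≠ 0 from hM.ne')).symm
    -- Δ u ≤ c * u^d * F u
    have hΔle : Δ u ≤ c * (u ^ d * F u) := by
      rw [hΔ u, hFQ]; linarith
    -- V u ≥ c * u^d * (M u - F u)
    have hVge : c * (u ^ d * (M u - F u)) ≤ V u := by
      rw [hV u, hMQ, hFQ] at *
      nlinarith
    have hdenpos : 0 < c * (u ^ d * (M u - F u)) := by
      have hlt : F u < M u := by nlinarith
      exact mul_pos hc (mul_pos hud (by linarith))
    have hstep : Δ u / V u ≤ (c * (u ^ d * F u)) / (c * (u ^ d * (M u - F u))) := by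
      apply div_le_div₀ (by positivity) hΔle hdenpos hVge
    refine hstep.trans ?_
    have heq : (c * (u ^ d * F u)) / (c * (u ^ d * (M u - F u))) = r u / (1 - r u) := by
      have hne : c * u ^ d * M u ≠ 0 := by positivity
      have h1 : c * (u ^ d * F u) = (c * u ^ d * M u) * r u := by rw [hFr]; ring
      have h2 : c * (u ^ d * (M u - F u)) = (c * u ^ d * M u) * (1 - r u) := by
        rw [hFr]; ring
      rw [h1, h2, mul_div_mul_left _ _ hne]
    rw [heq]
  · exact hcomp
end
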